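/- arXiv:math/0312007 — 4 statements merged into one kernel-verified Lean document; each statement's English description precedes it below -/
import Mathlib

section
/- [Theorem 4.4, existence] Every Ω ∈ Λ with integer coefficients satisfying σ(Ω) = Ω admits a decomposition (P_S) in which, for every even-cardinality subset S of {1,…,n}, the polynomial 2·P_S has integer coefficients; moreover, if n is even, then P_{{1,…,n}} itself has integer coefficients. -/
noncomputable section

/-- The Laurent polynomial ring `Λ = ℚ[x₁^{±1},…,x_n^{±1}]`. -/
abbrev Lam (n : ℕ) : Type := AddMonoidAlgebra ℚ (Fin n →₀ ℤ)

/-- The variable `x_i ∈ Λ`. -/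
def Xv {n : ℕ} (i : Fin n) : Lam n :=
  AddMonoidAlgebra.single (Finsupp.single i 1) 1

/-- The bracket `{f} := f + σ(f)`. -/
def bracket {n : ℕ} (σ : Lam n →+* Lam n) (f : Lam n) : Lam n := f + σ f

/-- `σ` is the ring endomorphism of `Λ` determined by `σ(x_i) = −x_i⁻¹`,
i.e. `σ(x_i)·x_i = −1` for all `i`. -/
def IsSigma {n : ℕ} (σ : Lam n →+* Lam n) : Prop :=
  ∀ i : Fin n, σ (Xv i) * Xv i = -1

/-- The exponent vector of the alternating monomial
`M_S = x_{i₁} x_{i₂}⁻¹ ⋯ x_{i_{2k-1}} x_{i_{2k}}⁻¹`, where `S = {i₁ < ⋯ < i_{2k}}`. -/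
def expS {n : ℕ} (S : Finset (Fin n)) : Fin n →₀ ℤ :=
  (((S.sort (· ≤ ·)).zipIdx).map fun p => Finsupp.single p.1 ((-1 : ℤ) ^ p.2)).sum

/-- The alternating monomial `M_S ∈ Λ`. -/
def MS {n : ℕ} (S : Finset (Fin n)) : Lam n :=
  AddMonoidAlgebra.single (expS S) 1

/-- Evaluation of a polynomial `P ∈ ℚ[z₁,…,z_n]` at `z_i = {x_i}`. -/
def evalBr {n : ℕ} (σ : Lam n →+* Lam n) (P : MvPolynomial (Fin n) ℚ) : Lam n :=
  MvPolynomial.aeval (fun i => bracket σ (Xv i)) P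

/-- A decomposition (4) of `Ω`: `Ω = Σ_S {M_S}·P_S({x₁},…,{x_n})`,
the sum being over the even-cardinality subsets `S` of the set of variables. -/
def IsDecomposition {n : ℕ} (σ : Lam n →+* Lam n) (Ω : Lam n)
    (P : Finset (Fin n) → MvPolynomial (Fin n) ℚ) : Prop :=
  Ω = ∑ S ∈ Finset.univ.filter (fun S : Finset (Fin n) => Even S.card),
        bracket σ (MS S) * evalBr σ (P S)

namespace Th44

def Ms {n : ℕ} (a : Fin n →₀ ℤ) (c : ℚ) : Lam n := AddMonoidAlgebra.single a c

lemma Ms_mul {n : ℕ} (a b : Fin n →₀ ℤ) (c d : ℚ) : Ms a c * Ms b d = Ms (a+b) (c*d) :=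
  AddMonoidAlgebra.single_mul_single ..

lemma Ms_one {n : ℕ} : (Ms 0 1 : Lam n) = 1 := rfl

def wt {n : ℕ} (a : Fin n →₀ ℤ) : ℤ := a.sum fun _ k => k

lemma wt_zero {n : ℕ} : wt (0 : Fin n →₀ ℤ) = 0 := Finsupp.sum_zero_index

lemma wt_add {n : ℕ} (a b : Fin n →₀ ℤ) : wt (a+b) = wt a + wt b :=
  Finsupp.sum_add_index' (fun _ => rfl) (fun _ _ _ => rfl)

lemma wt_single {n : ℕ} (i : Fin n) (k : ℤ) : wt (Finsupp.single i k) = k :=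
  Finsupp.sum_single_index rfl

lemma wt_neg {n : ℕ} (a : Fin n →₀ ℤ) : wt (-a) = - wt a := by
  have := wt_add a (-a)
  simp at this
  rw [wt_zero] at this
  linarith

def sgn (w : ℤ) : ℚ := ((w.negOnePow : ℤ) : ℚ)

lemma sgn_add (v w : ℤ) : sgn (v+w) = sgn v * sgn w := by
  simp [sgn, Int.negOnePow_add]

lemma sgn_zero : sgn 0 = 1 := by simp [sgn]

lemma sgn_one : sgn 1 = -1 := by simp [sgn]

lemma sgn_neg (w : ℤ) : sgn (-w) = sgn w := by simp [sgn, Int.negOnePow_neg]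

lemma sgn_cases (w : ℤ) : sgn w = 1 ∨ sgn w = -1 := by
  rcases Int.units_eq_one_or w.negOnePow with h | h <;> simp [sgn, h]

lemma sgn_mul_self (w : ℤ) : sgn w * sgn w = 1 := by
  rcases sgn_cases w with h | h <;> rw [h] <;> norm_num

lemma sgn_succ (w : ℤ) : sgn (w+1) = - sgn w := by
  rw [sgn_add, sgn_one]; ring

end Th44

namespace Th44

variable {n : ℕ} {σ : Lam n →+* Lam n}

def E {n : ℕ} (i : Fin n) : Fin n →₀ ℤ := Finsupp.single i 1

lemma Ms_neg {n : ℕ} (a : Fin n →₀ ℤ) (c : ℚ) : - Ms a c = Ms a (-c) :=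
  AddMonoidAlgebra.coeff_injective (Finsupp.single_neg a c).symm

lemma sigma_Xv (hσ : IsSigma σ) (i : Fin n) : σ (Xv i) = Ms (-(E i)) (-1) := by
  have h := hσ i
  have hx : (Xv i : Lam n) = Ms (E i) 1 := rfl
  have hmul : σ (Xv i) * (Ms (E i) 1 * Ms (-(E i)) 1) = -1 * Ms (-(E i)) 1 := by
    rw [← mul_assoc, ← hx, h]
  rw [Ms_mul] at hmul
  simp only [add_neg_cancel, mul_one] at hmul
  rw [Ms_one, mul_one] at hmul
  rw [hmul, neg_one_mul, Ms_neg]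

lemma sigma_Xv_inv (hσ : IsSigma σ) (i : Fin n) : σ (Ms (-(E i)) 1) = Ms (E i) (-1) := by
  have key : σ (Ms (-(E i)) 1) * σ (Xv i) = 1 := by
    rw [← map_mul]
    have : (Ms (-(E i)) 1 : Lam n) * Xv i = 1 := by
      show Ms (-(E i)) 1 * Ms (E i) 1 = 1
      rw [Ms_mul]; simp only [neg_add_cancel, mul_one]; exact Ms_one
    rw [this, map_one]
  have hcand : σ (Xv i) * Ms (E i) (-1) = 1 := by
    rw [sigma_Xv hσ, Ms_mul]
    simp only [neg_add_cancel]
    norm_num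
    exact Ms_one
  calc σ (Ms (-(E i)) 1) = σ (Ms (-(E i)) 1) * (σ (Xv i) * Ms (E i) (-1)) := by
        rw [hcand, mul_one]
    _ = (σ (Ms (-(E i)) 1) * σ (Xv i)) * Ms (E i) (-1) := by ring
    _ = Ms (E i) (-1) := by rw [key, one_mul]

lemma sigma_single_i (hσ : IsSigma σ) (i : Fin n) : ∀ k : ℤ,
    σ (Ms (Finsupp.single i k) 1) = Ms (-(Finsupp.single i k)) (sgn k) := by
  intro k
  induction k using Int.induction_on with
  | zero => simp only [Finsupp.single_zero, neg_zero, sgn_zero]; rw [Ms_one, map_one]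
  | succ k ih =>
      have hsplit : (Finsupp.single i ((k:ℤ)+1)) = Finsupp.single i (k:ℤ) + E i := by
        simp only [E, ← Finsupp.single_add]
      rw [hsplit, ← one_mul (1:ℚ), ← Ms_mul, map_mul, ih]
      have : σ (Ms (E i) 1) = Ms (-(E i)) (-1) := sigma_Xv hσ i
      rw [this, Ms_mul, neg_add, sgn_succ, mul_neg_one]
  | pred k ih =>
      have hsplit : (Finsupp.single i (-(k:ℤ)-1)) = Finsupp.single i (-(k:ℤ)) + (-(E i)) := by
        simp only [E, ← Finsupp.single_neg, ← Finsupp.single_add]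
        congr 1
      rw [hsplit, ← one_mul (1:ℚ), ← Ms_mul, map_mul, ih, sigma_Xv_inv hσ, Ms_mul, neg_add,
        neg_neg, mul_neg_one]
      have : sgn (-(k:ℤ)-1) = sgn (-(k:ℤ)) * (-1) := by
        have h1 : (-(k:ℤ)-1) + 1 = -(k:ℤ) := by ring
        have := sgn_succ (-(k:ℤ)-1)
        rw [h1] at this
        rw [← neg_neg (sgn (-(k:ℤ)-1)), ← this]; ring
      rw [this, mul_neg_one]

lemma sigma_Ms (hσ : IsSigma σ) (a : Fin n →₀ ℤ) : σ (Ms a 1) = Ms (-a) (sgn (wt a)) := by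
  induction a using Finsupp.induction with
  | zero => simp only [neg_zero, wt_zero, sgn_zero]; rw [Ms_one, map_one]
  | single_add i b f hif hb ih =>
      rw [← one_mul (1:ℚ), ← Ms_mul, map_mul, ih, sigma_single_i hσ, Ms_mul, neg_add,
        wt_add, wt_single, sgn_add]

lemma sigma_Ms' (hσ : IsSigma σ) (a : Fin n →₀ ℤ) (w : ℤ) :
    σ (Ms a (sgn w)) = Ms (-a) (sgn w * sgn (wt a)) := by
  rcases sgn_cases w with h | h <;> rw [h]
  · rw [one_mul, sigma_Ms hσ]
  · rw [← Ms_neg, map_neg, sigma_Ms hσ, Ms_neg]; ring_nf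

lemma sigma_sigma_Ms (hσ : IsSigma σ) (a : Fin n →₀ ℤ) : σ (σ (Ms a 1)) = Ms a 1 := by
  rw [sigma_Ms hσ]
  have : sgn (wt a) = sgn (wt a) * sgn 0 := by rw [sgn_zero, mul_one]
  rw [sigma_Ms' hσ, neg_neg, wt_neg, sgn_neg, sgn_mul_self]

/-- bracket of a monomial -/
lemma br_Ms (hσ : IsSigma σ) (a : Fin n →₀ ℤ) :
    bracket σ (Ms a 1) = Ms a 1 + Ms (-a) (sgn (wt a)) := by
  rw [bracket, sigma_Ms hσ]

end Th44

namespace Th44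

variable {n : ℕ} {σ : Lam n →+* Lam n}

/-- the bracket {x_i} as ring element -/
def Z (σ : Lam n →+* Lam n) (i : Fin n) : Lam n := bracket σ (Xv i)

lemma wt_E (i : Fin n) : wt (E i) = 1 := wt_single i 1

lemma Z_eq (hσ : IsSigma σ) (i : Fin n) : Z σ i = Ms (E i) 1 - Ms (-E i) 1 := by
  show bracket σ (Ms (E i) 1) = _
  rw [br_Ms hσ, wt_E, sgn_one, ← Ms_neg, ← sub_eq_add_neg]

lemma br1 (hσ : IsSigma σ) {v : Fin n →₀ ℤ} (h : sgn (wt v) = 1) :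
    bracket σ (Ms v 1) = Ms v 1 + Ms (-v) 1 := by
  rw [br_Ms hσ, h]

lemma brm1 (hσ : IsSigma σ) {v : Fin n →₀ ℤ} (h : sgn (wt v) = -1) :
    bracket σ (Ms v 1) = Ms v 1 - Ms (-v) 1 := by
  rw [br_Ms hσ, h, ← Ms_neg, ← sub_eq_add_neg]

lemma sgn_pred' (w : ℤ) : sgn (w + -1) = - sgn w := by
  have := sgn_succ (w + -1)
  simp only [neg_add_cancel_right] at this
  rw [← neg_neg (sgn (w + -1)), ← this]

lemma wt_addE (v : Fin n →₀ ℤ) (i : Fin n) : wt (v + E i) = wt v + 1 := by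
  rw [wt_add, wt_E]

lemma wt_subE (v : Fin n →₀ ℤ) (i : Fin n) : wt (v + -E i) = wt v + -1 := by
  rw [wt_add, wt_neg, wt_E]

/-- THE core identity: {x_i}·{M_v} = {M_{v+e_i}} − {M_{v−e_i}} -/
lemma BrC (hσ : IsSigma σ) (v : Fin n →₀ ℤ) (i : Fin n) :
    bracket σ (Ms v 1) * Z σ i
      = bracket σ (Ms (v + E i) 1) - bracket σ (Ms (v + -E i) 1) := by
  have h1 : sgn (wt (v + E i)) = - sgn (wt v) := by rw [wt_addE, sgn_succ]
  have h2 : sgn (wt (v + -E i)) = - sgn (wt v) := by rw [wt_subE, sgn_pred']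
  have e1 : -(v + E i) = -v + -E i := by rw [neg_add]
  have e2 : -(v + -E i) = -v + E i := by rw [neg_add, neg_neg]
  rcases sgn_cases (wt v) with h | h
  · rw [br1 hσ h, Z_eq hσ]
    rw [br_Ms hσ (a := v + E i), br_Ms hσ (a := v + -E i), h1, h2, h]
    simp only [← Ms_neg, e1, e2]
    rw [mul_sub, add_mul, add_mul, Ms_mul, Ms_mul, Ms_mul, Ms_mul]
    norm_num
    abel
  · rw [brm1 hσ h, Z_eq hσ]
    rw [br_Ms hσ (a := v + E i), br_Ms hσ (a := v + -E i), h1, h2, h]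
    simp only [← Ms_neg, e1, e2, neg_neg]
    rw [mul_sub, sub_mul, sub_mul, Ms_mul, Ms_mul, Ms_mul, Ms_mul]
    norm_num
    abel

lemma br_neg_even (hσ : IsSigma σ) {v : Fin n →₀ ℤ} (h : sgn (wt v) = 1) :
    bracket σ (Ms (-v) 1) = bracket σ (Ms v 1) := by
  have h' : sgn (wt (-v)) = 1 := by rw [wt_neg, sgn_neg, h]
  rw [br1 hσ h', br1 hσ h, neg_neg]
  abel

lemma br_neg_odd (hσ : IsSigma σ) {v : Fin n →₀ ℤ} (h : sgn (wt v) = -1) :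
    bracket σ (Ms (-v) 1) = - bracket σ (Ms v 1) := by
  have h' : sgn (wt (-v)) = -1 := by rw [wt_neg, sgn_neg, h]
  rw [brm1 hσ h', brm1 hσ h, neg_neg]
  abel

end Th44

namespace Th44

variable {n : ℕ} {σ : Lam n →+* Lam n}

/-- alternating exponent vector of a list -/
def alt {n : ℕ} : List (Fin n) → (Fin n →₀ ℤ)
  | [] => 0
  | i :: l => E i - alt l

lemma alt_nil {n : ℕ} : alt ([] : List (Fin n)) = 0 := rfl

lemma alt_cons {n : ℕ} (i : Fin n) (l : List (Fin n)) : alt (i :: l) = E i - alt l := rfl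

lemma enumFrom_alt {n : ℕ} : ∀ (l : List (Fin n)) (k : ℕ),
    ((l.zipIdx k).map fun p => Finsupp.single p.1 ((-1 : ℤ) ^ p.2)).sum
      = ((-1 : ℤ) ^ k) • alt l := by
  intro l
  induction l with
  | nil => intro k; simp [alt_nil]
  | cons i l ih =>
      intro k
      rw [List.zipIdx_cons, List.map_cons, List.sum_cons, ih (k+1), alt_cons]
      rw [pow_succ, smul_sub]
      have : Finsupp.single i ((-1:ℤ)^k) = ((-1:ℤ)^k) • (E i) := by
        simp [E, Finsupp.smul_single]
      rw [this]
      have : ((-1:ℤ)^k * -1) • alt l = -(((-1:ℤ)^k) • alt l) := by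
        rw [mul_neg_one, neg_smul]
      rw [this]
      abel

lemma expS_eq_alt {n : ℕ} (S : Finset (Fin n)) : expS S = alt (S.sort (· ≤ ·)) := by
  rw [expS, enumFrom_alt, pow_zero, one_smul]

lemma alt_append {n : ℕ} : ∀ (m l : List (Fin n)),
    alt (m ++ l) = alt m + ((-1 : ℤ) ^ m.length) • alt l := by
  intro m
  induction m with
  | nil => intro l; simp [alt_nil]
  | cons i m ih =>
      intro l
      rw [List.cons_append, alt_cons, alt_cons, ih l, List.length_cons, pow_succ]
      rw [mul_neg_one, neg_smul]
      abel

lemma sgn_wt_alt {n : ℕ} : ∀ l : List (Fin n),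
    sgn (wt (alt l)) = if Even l.length then 1 else -1 := by
  intro l
  induction l with
  | nil => simp [alt_nil, wt_zero, sgn_zero]
  | cons i l ih =>
      rw [alt_cons, List.length_cons]
      have hw : wt (E i - alt l) = 1 + -(wt (alt l)) := by
        rw [sub_eq_add_neg, wt_add, wt_E, wt_neg]
      rw [hw, sgn_add, sgn_one, sgn_neg, ih]
      by_cases h : Even l.length <;> simp [h, Nat.even_add_one]

/-- recursive right-hand side of the telescoping identity -/
def telrhs {n : ℕ} (σ : Lam n →+* Lam n) : ℤ → (Fin n →₀ ℤ) → List (Fin n) → Lam n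
  | _, _, [] => 0
  | s, w, i :: l =>
      (s : ℚ) • (Z σ i * bracket σ (Ms (w + -(s • alt l)) 1))
        + telrhs σ (-s) (w + -(s • E i)) l

lemma telrhs_nil {n : ℕ} (σ : Lam n →+* Lam n) (s : ℤ) (w : Fin n →₀ ℤ) :
    telrhs σ s w [] = 0 := rfl

lemma telrhs_cons {n : ℕ} (σ : Lam n →+* Lam n) (s : ℤ) (w : Fin n →₀ ℤ)
    (i : Fin n) (l : List (Fin n)) :
    telrhs σ s w (i :: l)
      = (s : ℚ) • (Z σ i * bracket σ (Ms (w + -(s • alt l)) 1))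
        + telrhs σ (-s) (w + -(s • E i)) l := rfl

/-- telescoping identity -/
lemma TEL (hσ : IsSigma σ) : ∀ (l : List (Fin n)) (w : Fin n →₀ ℤ) (s : ℤ),
    (s = 1 ∨ s = -1) →
    bracket σ (Ms (w + s • alt l) 1) - bracket σ (Ms (w + -(s • alt l)) 1)
      = telrhs σ s w l := by
  intro l
  induction l with
  | nil => intro w s _; simp [alt_nil, telrhs_nil]
  | cons i l ih =>
      intro w s hs
      rw [telrhs_cons, ← ih (w + -(s • E i)) (-s) (by rcases hs with h|h <;> simp [h])]
      rcases hs with h | h <;> subst h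
      · simp only [one_smul, Int.cast_one, alt_cons, neg_smul, neg_neg]
        have hBrC : Z σ i * bracket σ (Ms (w + -(alt l)) 1)
            = bracket σ (Ms (w + -(alt l) + E i) 1)
              - bracket σ (Ms (w + -(alt l) + -(E i)) 1) := by
          rw [mul_comm]; exact BrC hσ (w + -(alt l)) i
        have v1 : w + (E i - alt l) = w + -(alt l) + E i := by abel
        have v2 : w + -(E i - alt l) = w + -(E i) + alt l := by abel
        have v3 : w + -(alt l) + -(E i) = w + -(E i) + -(alt l) := by abel
        rw [v1, v2, hBrC, v3]
        abel
      · simp only [neg_smul, one_smul, neg_neg, Int.cast_neg, Int.cast_one, alt_cons]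
        have hBrC : Z σ i * bracket σ (Ms (w + alt l) 1)
            = bracket σ (Ms (w + alt l + E i) 1)
              - bracket σ (Ms (w + alt l + -(E i)) 1) := by
          rw [mul_comm]; exact BrC hσ (w + alt l) i
        have v1 : w + -(E i - alt l) = w + -(E i) + alt l := by abel
        have v2 : w + (E i - alt l) = w + E i + -(alt l) := by abel
        have v3 : w + alt l + E i = w + E i + alt l := by abel
        have v4 : w + alt l + -(E i) = w + -(E i) + alt l := by abel
        rw [v1, v2, hBrC, v3, v4]
        abel

end Th44

namespace Th44

variable {n : ℕ} {σ : Lam n →+* Lam n}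

def IntP {n : ℕ} (P : MvPolynomial (Fin n) ℚ) : Prop := ∀ d, P.coeff d ∈ (⊥ : Subring ℚ)

lemma IntP_zero {n : ℕ} : IntP (0 : MvPolynomial (Fin n) ℚ) := by
  intro d; simp [Subring.zero_mem]

lemma IntP_one {n : ℕ} : IntP (1 : MvPolynomial (Fin n) ℚ) := by
  intro d
  rw [MvPolynomial.coeff_one]
  split <;> simp [Subring.one_mem, Subring.zero_mem]

lemma IntP_add {n : ℕ} {P Q : MvPolynomial (Fin n) ℚ} (hP : IntP P) (hQ : IntP Q) :
    IntP (P + Q) := by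
  intro d; rw [MvPolynomial.coeff_add]; exact Subring.add_mem _ (hP d) (hQ d)

lemma IntP_mul {n : ℕ} {P Q : MvPolynomial (Fin n) ℚ} (hP : IntP P) (hQ : IntP Q) :
    IntP (P * Q) := by
  intro d
  rw [MvPolynomial.coeff_mul]
  exact Subring.sum_mem _ (fun c _ => Subring.mul_mem _ (hP c.1) (hQ c.2))

lemma IntP_X {n : ℕ} (i : Fin n) : IntP (MvPolynomial.X i : MvPolynomial (Fin n) ℚ) := by
  intro d
  rw [MvPolynomial.coeff_X']
  split <;> simp [Subring.one_mem, Subring.zero_mem]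

lemma IntP_neg {n : ℕ} {P : MvPolynomial (Fin n) ℚ} (hP : IntP P) : IntP (-P) := by
  intro d; rw [MvPolynomial.coeff_neg]; exact Subring.neg_mem _ (hP d)

lemma IntP_intSmul {n : ℕ} (m : ℤ) {P : MvPolynomial (Fin n) ℚ} (hP : IntP P) :
    IntP ((m : ℚ) • P) := by
  intro d
  rw [MvPolynomial.coeff_smul, smul_eq_mul]
  refine Subring.mul_mem _ ?_ (hP d)
  rw [Subring.mem_bot]; exact ⟨m, rfl⟩

lemma evalBr_X (i : Fin n) : evalBr σ (MvPolynomial.X i) = Z σ i := by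
  rw [evalBr, MvPolynomial.aeval_X]; rfl

lemma evalBr_one : evalBr σ (1 : MvPolynomial (Fin n) ℚ) = 1 := map_one _

lemma evalBr_zero : evalBr σ (0 : MvPolynomial (Fin n) ℚ) = 0 := map_zero _

lemma evalBr_add (P Q : MvPolynomial (Fin n) ℚ) :
    evalBr σ (P + Q) = evalBr σ P + evalBr σ Q := map_add _ _ _

lemma evalBr_mul (P Q : MvPolynomial (Fin n) ℚ) :
    evalBr σ (P * Q) = evalBr σ P * evalBr σ Q := map_mul _ _ _

lemma evalBr_smul (q : ℚ) (P : MvPolynomial (Fin n) ℚ) :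
    evalBr σ (q • P) = q • evalBr σ P := map_smul (MvPolynomial.aeval _) _ _

/-- the index set of the decomposition -/
abbrev evens (n : ℕ) : Finset (Finset (Fin n)) :=
  Finset.univ.filter (fun S : Finset (Fin n) => Even S.card)

def GoodRepZ (σ : Lam n →+* Lam n) (ω : Lam n) (T : Finset (Fin n)) : Prop :=
  ∃ P : Finset (Fin n) → MvPolynomial (Fin n) ℚ,
    ω = ∑ S ∈ evens n, bracket σ (MS S) * evalBr σ (P S)
    ∧ (∀ S, ¬(Even S.card ∧ S ⊆ T) → P S = 0)
    ∧ (∀ S, IntP (P S))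

def GoodRep (σ : Lam n →+* Lam n) (ω : Lam n) (T : Finset (Fin n)) : Prop :=
  ∃ P : Finset (Fin n) → MvPolynomial (Fin n) ℚ,
    ω = ∑ S ∈ evens n, bracket σ (MS S) * evalBr σ (P S)
    ∧ (∀ S, ¬(Even S.card ∧ S ⊆ T) → P S = 0)
    ∧ (∀ S, IntP ((2:ℚ) • P S))
    ∧ IntP (P T)

lemma grz_zero (T : Finset (Fin n)) : GoodRepZ σ 0 T := by
  refine ⟨0, by simp [evalBr_zero], fun S _ => rfl, fun S => IntP_zero⟩

lemma grz_add {ω ω' : Lam n} {T : Finset (Fin n)} (h : GoodRepZ σ ω T)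
    (h' : GoodRepZ σ ω' T) : GoodRepZ σ (ω + ω') T := by
  obtain ⟨P, hP, hl, hi⟩ := h
  obtain ⟨Q, hQ, hl', hi'⟩ := h'
  refine ⟨fun S => P S + Q S, ?_, ?_, fun S => IntP_add (hi S) (hi' S)⟩
  · rw [hP, hQ, ← Finset.sum_add_distrib]
    congr 1; ext S
    rw [evalBr_add, mul_add]
  · intro S hS; dsimp only; rw [hl S hS, hl' S hS, add_zero]

lemma grz_intSmul (m : ℤ) {ω : Lam n} {T : Finset (Fin n)} (h : GoodRepZ σ ω T) :
    GoodRepZ σ ((m : ℚ) • ω) T := by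
  obtain ⟨P, hP, hl, hi⟩ := h
  refine ⟨fun S => (m:ℚ) • P S, ?_, ?_, fun S => IntP_intSmul m (hi S)⟩
  · rw [hP, Finset.smul_sum]
    congr 1; ext S
    rw [evalBr_smul, mul_smul_comm]
  · intro S hS; dsimp only; rw [hl S hS, smul_zero]

lemma grz_neg {ω : Lam n} {T : Finset (Fin n)} (h : GoodRepZ σ ω T) :
    GoodRepZ σ (-ω) T := by
  have := grz_intSmul (-1) h
  simpa using this

lemma grz_mulZ (i : Fin n) {ω : Lam n} {T : Finset (Fin n)} (h : GoodRepZ σ ω T) :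
    GoodRepZ σ (Z σ i * ω) T := by
  obtain ⟨P, hP, hl, hi⟩ := h
  refine ⟨fun S => MvPolynomial.X i * P S, ?_, ?_,
    fun S => IntP_mul (IntP_X i) (hi S)⟩
  · rw [hP, Finset.mul_sum]
    congr 1; ext S
    rw [evalBr_mul, evalBr_X]
    ring
  · intro S hS; dsimp only; rw [hl S hS, mul_zero]

lemma grz_mono {ω : Lam n} {T T' : Finset (Fin n)} (h : GoodRepZ σ ω T) (hT : T ⊆ T') :
    GoodRepZ σ ω T' := by
  obtain ⟨P, hP, hl, hi⟩ := h
  exact ⟨P, hP, fun S hS => hl S (fun ⟨he, hs⟩ => hS ⟨he, hs.trans hT⟩), hi⟩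

lemma grz_atom {R T : Finset (Fin n)} (hR : Even R.card) (hRT : R ⊆ T) :
    GoodRepZ σ (bracket σ (MS R)) T := by
  refine ⟨fun S => if S = R then 1 else 0, ?_, ?_, ?_⟩
  · rw [Finset.sum_eq_single R]
    · simp [evalBr_one]
    · intro S _ hS; simp [hS, evalBr_zero]
    · intro hmem
      exact absurd (Finset.mem_filter.mpr ⟨Finset.mem_univ R, hR⟩) hmem
  · intro S hS
    have : S ≠ R := by rintro rfl; exact hS ⟨hR, hRT⟩
    simp [this]
  · intro S
    dsimp only
    split <;> [exact IntP_one; exact IntP_zero]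

lemma gr_of_grz {ω : Lam n} {T : Finset (Fin n)} (h : GoodRepZ σ ω T) : GoodRep σ ω T := by
  obtain ⟨P, hP, hl, hi⟩ := h
  refine ⟨P, hP, hl, fun S => ?_, hi T⟩
  intro d
  rw [MvPolynomial.coeff_smul, smul_eq_mul]
  refine Subring.mul_mem _ ?_ (hi S d)
  rw [Subring.mem_bot]; exact ⟨2, by norm_num⟩

lemma gr_half {ω : Lam n} {T : Finset (Fin n)} (h : GoodRepZ σ ω T)
    (hT : ¬ Even T.card) : GoodRep σ ((1/2 : ℚ) • ω) T := by
  obtain ⟨P, hP, hl, hi⟩ := h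
  refine ⟨fun S => (1/2 : ℚ) • P S, ?_, ?_, ?_, ?_⟩
  · rw [hP, Finset.smul_sum]
    congr 1; ext S
    rw [evalBr_smul, mul_smul_comm]
  · intro S hS; dsimp only; rw [hl S hS, smul_zero]
  · intro S
    dsimp only
    have : (2:ℚ) • ((1/2 : ℚ) • P S) = P S := by
      rw [smul_smul]; norm_num
    rw [this]; exact hi S
  · dsimp only
    have : P T = 0 := hl T (fun ⟨he, _⟩ => hT he)
    rw [this, smul_zero]; exact IntP_zero

lemma gr_add {ω ω' : Lam n} {T : Finset (Fin n)} (h : GoodRep σ ω T)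
    (h' : GoodRep σ ω' T) : GoodRep σ (ω + ω') T := by
  obtain ⟨P, hP, hl, hi, ht⟩ := h
  obtain ⟨Q, hQ, hl', hi', ht'⟩ := h'
  refine ⟨fun S => P S + Q S, ?_, ?_, ?_, IntP_add ht ht'⟩
  · rw [hP, hQ, ← Finset.sum_add_distrib]
    congr 1; ext S
    rw [evalBr_add, mul_add]
  · intro S hS; dsimp only; rw [hl S hS, hl' S hS, add_zero]
  · intro S
    dsimp only; rw [smul_add]; exact IntP_add (hi S) (hi' S)

lemma gr_intSmul (m : ℤ) {ω : Lam n} {T : Finset (Fin n)} (h : GoodRep σ ω T) :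
    GoodRep σ ((m : ℚ) • ω) T := by
  obtain ⟨P, hP, hl, hi, ht⟩ := h
  refine ⟨fun S => (m:ℚ) • P S, ?_, ?_, ?_, IntP_intSmul m ht⟩
  · rw [hP, Finset.smul_sum]
    congr 1; ext S
    rw [evalBr_smul, mul_smul_comm]
  · intro S hS; dsimp only; rw [hl S hS, smul_zero]
  · intro S
    dsimp only; rw [smul_comm]; exact IntP_intSmul m (hi S)

lemma gr_mono {ω : Lam n} {T T' : Finset (Fin n)} (h : GoodRep σ ω T) (hT : T ⊆ T') :
    GoodRep σ ω T' := by
  obtain ⟨P, hP, hl, hi, ht⟩ := h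
  by_cases heq : T' = T
  · subst heq; exact ⟨P, hP, hl, hi, ht⟩
  · refine ⟨P, hP, fun S hS => hl S (fun ⟨he, hs⟩ => hS ⟨he, hs.trans hT⟩), hi, ?_⟩
    have : P T' = 0 := by
      refine hl T' (fun ⟨he, hs⟩ => heq ?_)
      exact Finset.Subset.antisymm hs hT |>.symm ▸ rfl
    rw [this]; exact IntP_zero

end Th44

namespace Th44

variable {n : ℕ} {σ : Lam n →+* Lam n}

lemma expS_of_sorted {l : List (Fin n)} (hs : l.Pairwise (· ≤ ·)) (hn : l.Nodup) :
    expS l.toFinset = alt l := by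
  rw [expS_eq_alt, (List.toFinset_sort (· ≤ ·) hn).mpr hs]

lemma sorted_le_of_lt {l : List (Fin n)} (h : l.Pairwise (· < ·)) : l.Pairwise (· ≤ ·) :=
  h.imp le_of_lt

lemma nodup_of_sorted_lt {l : List (Fin n)} (h : l.Pairwise (· < ·)) : l.Nodup :=
  h.imp ne_of_lt

lemma toFinset_middle_erase {m' l' : List (Fin n)} {i : Fin n}
    (hnd : (m' ++ i :: l').Nodup) :
    (m' ++ l').toFinset = (m' ++ i :: l').toFinset.erase i := by
  have him : i ∉ m' := by
    intro hm
    have := List.disjoint_of_nodup_append hnd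
    exact this hm (List.mem_cons_self)
  have hil : i ∉ l' := by
    have := (List.nodup_append.mp hnd).2.1
    exact (List.nodup_cons.mp this).1
  ext x
  simp only [List.toFinset_append, List.toFinset_cons, Finset.mem_union, Finset.mem_erase,
    List.mem_toFinset, Finset.mem_insert]
  constructor
  · rintro (hx | hx)
    · exact ⟨fun h => him (h ▸ hx), Or.inl hx⟩
    · exact ⟨fun h => hil (h ▸ hx), Or.inr (Or.inr hx)⟩
  · rintro ⟨hne, (hx | hx | hx)⟩
    · exact Or.inl hx
    · exact absurd hx hne
    · exact Or.inr hx

/-- GoodRepZ for the telescoping sum -/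
lemma goodtel (hσ : IsSigma σ) : ∀ (l m : List (Fin n)) (j : Fin n),
    (j :: (m ++ l)).Pairwise (· < ·) → Even (m.length + l.length) →
    GoodRepZ σ (telrhs σ ((-1 : ℤ) ^ m.length) (E j + -(alt m)) l)
      ((j :: (m ++ l)).toFinset) := by
  intro l
  induction l with
  | nil => intro m j _ _; rw [telrhs_nil]; exact grz_zero _
  | cons i l' ih =>
      intro m j hsort hpar
      rw [telrhs_cons]
      set T : Finset (Fin n) := (j :: (m ++ i :: l')).toFinset with hT
      -- the sublist j :: m ++ l'
      have hsub : List.Sublist (j :: (m ++ l')) (j :: (m ++ i :: l')) :=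
        ((List.sublist_cons_self i l').append_left m).cons₂ j
      have hsort' : (j :: (m ++ l')).Pairwise (· < ·) := hsort.sublist hsub
      have hnd : (j :: (m ++ i :: l')).Nodup := nodup_of_sorted_lt hsort
      -- the head term
      have hexp : E j + -((alt m) + ((-1:ℤ) ^ m.length) • alt l') = alt (j :: (m ++ l')) := by
        rw [alt_cons, alt_append, sub_eq_add_neg]
      have hR : expS ((j :: (m ++ l')).toFinset) = alt (j :: (m ++ l')) :=
        expS_of_sorted (sorted_le_of_lt hsort') (nodup_of_sorted_lt hsort')
      have hRsub : (j :: (m ++ l')).toFinset ⊆ T := by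
        rw [hT, show (j :: (m ++ i :: l')) = (j :: m) ++ i :: l' from rfl,
          show (j :: (m ++ l')) = (j :: m) ++ l' from rfl,
          toFinset_middle_erase (by simpa using hnd)]
        exact Finset.erase_subset _ _
      have hRcard : Even ((j :: (m ++ l')).toFinset).card := by
        rw [List.toFinset_card_of_nodup (nodup_of_sorted_lt hsort')]
        simp only [List.length_cons, List.length_append]
        simp only [List.length_cons] at hpar
        have h : m.length + l'.length + 1 = m.length + (l'.length + 1) := by omega
        rw [h]; exact hpar
      have hhead : GoodRepZ σ
          (((((-1:ℤ) ^ m.length : ℤ) : ℚ)) •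
            (Z σ i * bracket σ (Ms (E j + -(alt m) + -(((-1:ℤ) ^ m.length) • alt l')) 1))) T := by
        have hv : E j + -(alt m) + -(((-1:ℤ) ^ m.length) • alt l')
            = expS ((j :: (m ++ l')).toFinset) := by
          rw [hR, ← hexp]; abel
        rw [hv]
        exact grz_intSmul _ (grz_mulZ i (grz_atom hRcard hRsub))
      -- the tail
      have htail : GoodRepZ σ
          (telrhs σ (-((-1:ℤ) ^ m.length)) (E j + -(alt m) + -(((-1:ℤ) ^ m.length) • E i)) l') T := by
        have h1 : -((-1:ℤ) ^ m.length) = (-1:ℤ) ^ (m ++ [i]).length := by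
          simp [pow_succ]
        have h2 : E j + -(alt m) + -(((-1:ℤ) ^ m.length) • E i) = E j + -(alt (m ++ [i])) := by
          rw [alt_append]
          simp only [alt_cons, alt_nil, sub_zero]
          abel
        have h3 : (j :: ((m ++ [i]) ++ l')) = (j :: (m ++ i :: l')) := by
          simp
        have hpar' : Even ((m ++ [i]).length + l'.length) := by
          rw [List.length_append, List.length_singleton]
          have h : m.length + 1 + l'.length = m.length + (l'.length + 1) := by omega
          rw [h]
          simpa using hpar
        have := ih (m ++ [i]) j (by rw [h3]; exact hsort) hpar'
        rw [h1, h2]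
        rw [h3] at this
        exact this
      exact grz_add hhead htail

end Th44

namespace Th44

variable {n : ℕ} {σ : Lam n →+* Lam n}

lemma key_oddcase (hσ : IsSigma σ) (T : Finset (Fin n)) (hne : T.Nonempty)
    (hodd : ¬ Even T.card) : GoodRep σ (bracket σ (Ms (expS T) 1)) T := by
  classical
  set j : Fin n := T.min' hne with hj
  have hjT : j ∈ T := T.min'_mem hne
  set S : Finset (Fin n) := T.erase j with hS
  set l : List (Fin n) := S.sort (· ≤ ·) with hl
  -- basic facts about j :: l
  have hjlt : ∀ b ∈ l, j < b := by
    intro b hb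
    rw [hl, Finset.mem_sort] at hb
    have hbT : b ∈ T := Finset.mem_of_mem_erase hb
    have hbj : b ≠ j := Finset.ne_of_mem_erase hb
    exact lt_of_le_of_ne (T.min'_le b hbT) (Ne.symm hbj)
  have hsorted_lt : (j :: l).Pairwise (· < ·) := by
    rw [List.pairwise_cons]
    exact ⟨hjlt, (Finset.sortedLT_sort S).pairwise⟩
  have hjl_nodup : (j :: l).Nodup := nodup_of_sorted_lt hsorted_lt
  have hjl_toF : (j :: l).toFinset = T := by
    rw [List.toFinset_cons, hl, Finset.sort_toFinset, hS, Finset.insert_erase hjT]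
  -- exponent vectors
  have hcS : expS S = alt l := by rw [expS_eq_alt, hl]
  have hcT : expS T = E j + -(alt l) := by
    rw [← hjl_toF, expS_of_sorted (sorted_le_of_lt hsorted_lt) hjl_nodup, alt_cons,
      sub_eq_add_neg]
  have hlen : l.length = S.card := Finset.length_sort _
  have hScard : Even S.card := by
    have hTS : T.card = S.card + 1 := by
      rw [hS, Finset.card_erase_of_mem hjT]
      have : 1 ≤ T.card := Finset.card_pos.mpr hne
      omega
    rw [hTS, Nat.even_add_one] at hodd
    simpa using hodd
  have hwc : sgn (wt (alt l)) = 1 := by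
    rw [sgn_wt_alt, if_pos]
    rw [hlen]; exact hScard
  -- the pairing identity
  have hpair : bracket σ (Ms (alt l) 1) * Z σ j
      = bracket σ (Ms (E j + -(alt l)) 1) + bracket σ (Ms (alt l + E j) 1) := by
    have hBrC := BrC hσ (-(alt l)) j
    have hneg1 : bracket σ (Ms (-(alt l)) 1) = bracket σ (Ms (alt l) 1) :=
      br_neg_even hσ hwc
    have hv1 : -(alt l) + E j = E j + -(alt l) := by abel
    have hodd2 : sgn (wt (alt l + E j)) = -1 := by
      rw [wt_addE, sgn_succ, hwc]
    have hneg2 : bracket σ (Ms (-(alt l) + -(E j)) 1) = - bracket σ (Ms (alt l + E j) 1) := by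
      have : -(alt l) + -(E j) = -(alt l + E j) := by abel
      rw [this]
      exact br_neg_odd hσ hodd2
    rw [hneg1, hv1, hneg2] at hBrC
    rw [hBrC]; abel
  -- the telescoping identity
  have htel := TEL hσ l (E j) 1 (Or.inl rfl)
  rw [one_smul] at htel
  have hv2 : E j + alt l = alt l + E j := by abel
  rw [hv2] at htel
  -- combine : 2 • Br(Ms u) = Br(Ms c)*Z j − telrhs
  have hcomb : (2:ℚ) • bracket σ (Ms (E j + -(alt l)) 1)
      = bracket σ (Ms (alt l) 1) * Z σ j - telrhs σ 1 (E j) l := by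
    have : bracket σ (Ms (alt l + E j) 1)
        = telrhs σ 1 (E j) l + bracket σ (Ms (E j + -(alt l)) 1) := by
      rw [← htel]; abel
    rw [hpair, this]
    rw [two_smul]; abel
  have hhalf : bracket σ (Ms (E j + -(alt l)) 1)
      = (1/2 : ℚ) • (bracket σ (Ms (alt l) 1) * Z σ j - telrhs σ 1 (E j) l) := by
    rw [← hcomb, smul_smul]; norm_num
  rw [hcT, hhalf]
  -- GoodRepZ of the combination
  have hgrz : GoodRepZ σ (bracket σ (Ms (alt l) 1) * Z σ j - telrhs σ 1 (E j) l) T := by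
    have hg1 : GoodRepZ σ (bracket σ (Ms (alt l) 1) * Z σ j) T := by
      rw [mul_comm]
      have : (Ms (alt l) 1 : Lam n) = MS S := by rw [MS, hcS]; rfl
      rw [this]
      exact grz_mulZ j (grz_atom hScard (Finset.erase_subset _ _))
    have hg2 : GoodRepZ σ (- telrhs σ 1 (E j) l) T := by
      have := goodtel hσ l [] j (by simpa using hsorted_lt) (by simpa using (hlen ▸ hScard))
      simp only [List.length_nil, pow_zero, alt_nil, neg_zero, add_zero, List.nil_append] at this
      rw [hjl_toF] at this
      exact grz_neg this
    have := grz_add hg1 hg2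
    simpa [sub_eq_add_neg] using this
  exact gr_half hgrz hodd

end Th44

namespace Th44

variable {n : ℕ} {σ : Lam n →+* Lam n}

def mu {n : ℕ} (a : Fin n →₀ ℤ) : ℕ := ∑ i : Fin n, (a i).natAbs

def disc {n : ℕ} (a : Fin n →₀ ℤ) : ℕ :=
  (Finset.univ.filter fun i => a i ≠ expS a.support i).card

def KM {n : ℕ} (a : Fin n →₀ ℤ) : ℕ := (mu a + 1) ^ 2 + disc a

lemma alt_apply_not_mem {i : Fin n} : ∀ l : List (Fin n), i ∉ l → alt l i = 0 := by
  intro l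
  induction l with
  | nil => intro _; simp [alt_nil]
  | cons x l ih =>
      intro hmem
      have hx : alt (x :: l) i = Finsupp.single x 1 i - alt l i := by
        rw [alt_cons]; rw [Finsupp.sub_apply]; rfl
      have hne : i ≠ x := fun h => hmem (h ▸ List.mem_cons_self)
      rw [hx, Finsupp.single_eq_of_ne' (Ne.symm hne), ih (fun h => hmem (List.mem_cons_of_mem x h))]
      ring

lemma alt_apply_mem {i : Fin n} : ∀ l : List (Fin n), l.Nodup → i ∈ l →
    alt l i = 1 ∨ alt l i = -1 := by
  intro l
  induction l with
  | nil => intro _ h; simp at h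
  | cons x l ih =>
      intro hnd hmem
      have hx : alt (x :: l) i = Finsupp.single x 1 i - alt l i := by
        rw [alt_cons]; rw [Finsupp.sub_apply]; rfl
      rcases List.mem_cons.mp hmem with rfl | hmem'
      · have hnotl : i ∉ l := (List.nodup_cons.mp hnd).1
        have : alt l i = 0 := alt_apply_not_mem l hnotl
        rw [hx, this, Finsupp.single_eq_same]
        left; ring
      · have hne : i ≠ x := by
          rintro rfl
          exact (List.nodup_cons.mp hnd).1 hmem'
        rw [hx, Finsupp.single_eq_of_ne' (Ne.symm hne)]
        rcases ih (List.nodup_cons.mp hnd).2 hmem' with h | h <;> rw [h]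
        · right; ring
        · left; ring

lemma expS_apply_not_mem {T : Finset (Fin n)} {i : Fin n} (h : i ∉ T) : expS T i = 0 := by
  rw [expS_eq_alt]
  exact alt_apply_not_mem _ (by rwa [Finset.mem_sort])

lemma expS_apply_mem {T : Finset (Fin n)} {i : Fin n} (h : i ∈ T) :
    expS T i = 1 ∨ expS T i = -1 := by
  rw [expS_eq_alt]
  exact alt_apply_mem _ (Finset.sort_nodup _ _) (by rwa [Finset.mem_sort])

lemma disc_le_mu (a : Fin n →₀ ℤ) : disc a ≤ mu a := by
  have hsub : (Finset.univ.filter fun i => a i ≠ expS a.support i) ⊆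
      Finset.univ.filter fun i => a i ≠ 0 := by
    intro i hi
    rw [Finset.mem_filter] at hi ⊢
    refine ⟨hi.1, fun h0 => ?_⟩
    have : i ∉ a.support := by rwa [Finsupp.mem_support_iff, not_not]
    exact hi.2 (by rw [h0, expS_apply_not_mem this])
  calc disc a ≤ (Finset.univ.filter fun i => a i ≠ 0).card := Finset.card_le_card hsub
    _ = ∑ i ∈ Finset.univ.filter (fun i => a i ≠ 0), 1 := by rw [Finset.card_eq_sum_ones]
    _ ≤ ∑ i ∈ Finset.univ.filter (fun i => a i ≠ 0), (a i).natAbs := by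
        refine Finset.sum_le_sum fun i hi => ?_
        rw [Finset.mem_filter] at hi
        omega
    _ ≤ mu a := Finset.sum_le_sum_of_subset_of_nonneg (Finset.filter_subset _ _)
        (fun _ _ _ => Nat.zero_le _)

lemma KM_lt_of_mu_lt {a b : Fin n →₀ ℤ} (h : mu b < mu a) : KM b < KM a := by
  have h1 : disc b ≤ mu b := disc_le_mu b
  have h2 : (mu b + 1)^2 + disc b ≤ (mu b + 1)^2 + mu b := by omega
  have h3 : (mu b + 1)^2 + mu b < (mu a + 1)^2 := by nlinarith
  calc KM b ≤ (mu b + 1)^2 + mu b := h2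
    _ < (mu a + 1)^2 := h3
    _ ≤ KM a := Nat.le_add_right _ _

lemma mu_split (a : Fin n →₀ ℤ) (i : Fin n) :
    mu a = (a i).natAbs + ∑ x ∈ Finset.univ.erase i, (a x).natAbs := by
  rw [mu, ← Finset.add_sum_erase _ _ (Finset.mem_univ i)]

lemma apply_add_neg_single {a : Fin n →₀ ℤ} {i x : Fin n} (d : ℤ) (hx : x ≠ i) :
    (a + -(Finsupp.single i d)) x = a x := by
  rw [Finsupp.add_apply, Finsupp.neg_apply, Finsupp.single_eq_of_ne' (Ne.symm hx)]
  ring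

lemma apply_add_neg_single_self (a : Fin n →₀ ℤ) (i : Fin n) (d : ℤ) :
    (a + -(Finsupp.single i d)) i = a i - d := by
  rw [Finsupp.add_apply, Finsupp.neg_apply, Finsupp.single_eq_same]
  ring

lemma mu_add_neg_single (a : Fin n →₀ ℤ) (i : Fin n) (d : ℤ) :
    mu (a + -(Finsupp.single i d)) = (a i - d).natAbs
      + ∑ x ∈ Finset.univ.erase i, (a x).natAbs := by
  rw [mu_split _ i, apply_add_neg_single_self]
  congr 1
  refine Finset.sum_congr rfl fun x hx => ?_
  rw [apply_add_neg_single d (Finset.ne_of_mem_erase hx)]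

lemma supp_add_neg_single_subset {a : Fin n →₀ ℤ} {i : Fin n} (d : ℤ) (hai : a i ≠ 0) :
    (a + -(Finsupp.single i d)).support ⊆ a.support := by
  intro x hx
  rw [Finsupp.mem_support_iff] at hx ⊢
  by_cases hxi : x = i
  · subst hxi; exact hai
  · rwa [apply_add_neg_single d hxi] at hx

end Th44

namespace Th44

variable {n : ℕ} {σ : Lam n →+* Lam n}

lemma gr_mulZr (i : Fin n) {ω : Lam n} {T : Finset (Fin n)} (h : GoodRep σ ω T) :
    GoodRep σ (ω * Z σ i) T := by
  obtain ⟨P, hP, hl, hi, ht⟩ := h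
  refine ⟨fun S => P S * MvPolynomial.X i, ?_, ?_, ?_, IntP_mul ht (IntP_X i)⟩
  · rw [hP, Finset.sum_mul]
    congr 1; ext S
    rw [evalBr_mul, evalBr_X]
    ring
  · intro S hS; dsimp only; rw [hl S hS, zero_mul]
  · intro S
    dsimp only
    rw [← smul_mul_assoc]
    exact IntP_mul (hi S) (IntP_X i)

lemma gr_neg {ω : Lam n} {T : Finset (Fin n)} (h : GoodRep σ ω T) : GoodRep σ (-ω) T := by
  have := gr_intSmul (-1) h
  simpa using this

lemma EE_single (i : Fin n) : (E i + E i : Fin n →₀ ℤ) = Finsupp.single i 2 := by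
  rw [E, ← Finsupp.single_add]; norm_num

lemma flipP (hσ : IsSigma σ) (a : Fin n →₀ ℤ) (i : Fin n) :
    bracket σ (Ms a 1) = bracket σ (Ms (a + -(Finsupp.single i 2)) 1)
      + bracket σ (Ms (a + -(Finsupp.single i 1)) 1) * Z σ i := by
  have hBrC := BrC hσ (a + -(E i)) i
  have e1 : a + -(E i) + E i = a := by abel
  have e2 : a + -(E i) + -(E i) = a + -(Finsupp.single i 2) := by
    rw [← EE_single]; abel
  have e3 : a + -(E i) = a + -(Finsupp.single i 1) := rfl
  rw [e1, e2, e3] at hBrC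
  rw [hBrC]; abel

lemma flipM (hσ : IsSigma σ) (a : Fin n →₀ ℤ) (i : Fin n) :
    bracket σ (Ms a 1) = bracket σ (Ms (a + -(Finsupp.single i (-2))) 1)
      + -(bracket σ (Ms (a + -(Finsupp.single i (-1))) 1) * Z σ i) := by
  have hBrC := BrC hσ (a + E i) i
  have e1 : a + E i + E i = a + -(Finsupp.single i (-2)) := by
    rw [Finsupp.single_neg, neg_neg, ← EE_single]
    abel
  have e2 : a + E i + -(E i) = a := by abel
  have e3 : a + E i = a + -(Finsupp.single i (-1)) := by
    rw [Finsupp.single_neg, neg_neg]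
    rfl
  rw [e1, e2, e3] at hBrC
  rw [hBrC]; abel

lemma key_aux (hσ : IsSigma σ) : ∀ N : ℕ, ∀ a : Fin n →₀ ℤ, KM a ≤ N →
    GoodRep σ (bracket σ (Ms a 1)) a.support := by
  intro N
  induction N using Nat.strong_induction_on with
  | _ N ih =>
  intro a hKa
  by_cases hbig : ∃ i, 2 ≤ (a i).natAbs
  · obtain ⟨i, hi⟩ := hbig
    have hai0 : a i ≠ 0 := by omega
    have hrec : ∀ d : ℤ, mu (a + -(Finsupp.single i d)) < mu a →
        GoodRep σ (bracket σ (Ms (a + -(Finsupp.single i d)) 1)) a.support := by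
      intro d hmu
      have hKlt : KM (a + -(Finsupp.single i d)) < KM a := KM_lt_of_mu_lt hmu
      exact gr_mono (ih (KM (a + -(Finsupp.single i d))) (lt_of_lt_of_le hKlt hKa) _ le_rfl)
        (supp_add_neg_single_subset d hai0)
    rcases (by omega : 2 ≤ a i ∨ a i ≤ -2) with hpos | hneg
    · rw [flipP hσ a i]
      have hmu2 : mu (a + -(Finsupp.single i 2)) < mu a := by
        rw [mu_add_neg_single, mu_split a i]
        have : (a i - 2).natAbs < (a i).natAbs := by omega
        omega
      have hmu1 : mu (a + -(Finsupp.single i 1)) < mu a := by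
        rw [mu_add_neg_single, mu_split a i]
        have : (a i - 1).natAbs < (a i).natAbs := by omega
        omega
      exact gr_add (hrec 2 hmu2) (gr_mulZr i (hrec 1 hmu1))
    · rw [flipM hσ a i]
      have hmu2 : mu (a + -(Finsupp.single i (-2))) < mu a := by
        rw [mu_add_neg_single, mu_split a i]
        have : (a i - (-2)).natAbs < (a i).natAbs := by omega
        omega
      have hmu1 : mu (a + -(Finsupp.single i (-1))) < mu a := by
        rw [mu_add_neg_single, mu_split a i]
        have : (a i - (-1)).natAbs < (a i).natAbs := by omega
        omega
      exact gr_add (hrec (-2) hmu2) (gr_neg (gr_mulZr i (hrec (-1) hmu1)))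
  · push_neg at hbig
    obtain ⟨T, hT⟩ : ∃ T, a.support = T := ⟨_, rfl⟩
    rw [hT]
    by_cases heq : a = expS T
    · by_cases heven : Even T.card
      · have hMS : bracket σ (Ms a 1) = bracket σ (MS T) := by rw [MS, heq]; rfl
        rw [hMS]
        exact gr_of_grz (grz_atom heven (Finset.Subset.refl _))
      · have hne : T.Nonempty := by
          rw [Finset.nonempty_iff_ne_empty]
          intro h
          rw [h] at heven
          simp at heven
        have hMS : bracket σ (Ms a 1) = bracket σ (Ms (expS T) 1) := by rw [heq]
        rw [hMS]
        exact key_oddcase hσ T hne heven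
    · have hex : ∃ i, a i ≠ expS T i := by
        by_contra h
        push_neg at h
        exact heq (Finsupp.ext h)
      obtain ⟨i, hnei⟩ := hex
      have hiT : i ∈ T := by
        by_contra h
        have h1 : a i = 0 := by
          rw [← Finsupp.notMem_support_iff, hT]
          exact h
        exact hnei (by rw [h1, expS_apply_not_mem h])
      have hai0 : a i ≠ 0 := by
        rw [← Finsupp.mem_support_iff, hT]
        exact hiT
      have haipm : a i = 1 ∨ a i = -1 := by
        have := hbig i
        omega
      have hexpi : expS T i = -(a i) := by
        rcases expS_apply_mem hiT with h | h <;> rcases haipm with h' | h' <;>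
          rw [h, h'] <;> first | rfl | (exfalso; rw [h, h'] at hnei; exact hnei rfl) | norm_num
      set d : ℤ := 2 * a i with hd
      set b : Fin n →₀ ℤ := a + -(Finsupp.single i d) with hb
      have hbi : b i = -(a i) := by
        rw [hb, apply_add_neg_single_self, hd]; ring
      have hbx : ∀ x, x ≠ i → b x = a x := fun x hx => apply_add_neg_single d hx
      have hsuppb : b.support = T := by
        rw [← hT]
        ext x
        rw [Finsupp.mem_support_iff, Finsupp.mem_support_iff]
        by_cases hxi : x = i
        · subst hxi
          rw [hbi]
          constructor <;> intro h <;> omega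
        · rw [hbx x hxi]
      have hmub : mu b = mu a := by
        rw [hb, mu_add_neg_single, mu_split a i]
        congr 1
        rcases haipm with h' | h' <;> rw [hd, h'] <;> norm_num
      have hdiscb : disc b < disc a := by
        have hfil : (Finset.univ.filter fun x => b x ≠ expS b.support x)
            = (Finset.univ.filter fun x => a x ≠ expS a.support x).erase i := by
          ext x
          rw [Finset.mem_erase, Finset.mem_filter, Finset.mem_filter, hsuppb, ← hT]
          by_cases hxi : x = i
          · subst hxi
            rw [hbi, hT, hexpi]
            simp
          · rw [hbx x hxi]
            constructor
            · rintro ⟨hu, hc⟩; exact ⟨hxi, hu, hc⟩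
            · rintro ⟨_, hu, hc⟩; exact ⟨hu, hc⟩
        have himem : i ∈ (Finset.univ.filter fun x => a x ≠ expS a.support x) := by
          refine Finset.mem_filter.mpr ⟨Finset.mem_univ i, ?_⟩
          rw [hT]
          exact hnei
        rw [disc, disc, hfil]
        exact Finset.card_erase_lt_of_mem himem
      have hKMb : KM b < KM a := by
        rw [KM, KM, hmub]
        omega
      have hIHb : GoodRep σ (bracket σ (Ms b 1)) T := by
        have := ih (KM b) (lt_of_lt_of_le hKMb hKa) b le_rfl
        rwa [hsuppb] at this
      have hmuc : mu (a + -(Finsupp.single i (a i))) < mu a := by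
        rw [mu_add_neg_single, mu_split a i]
        have : (a i - a i).natAbs < (a i).natAbs := by omega
        omega
      have hIHc : GoodRep σ (bracket σ (Ms (a + -(Finsupp.single i (a i))) 1)) T := by
        have hKlt : KM (a + -(Finsupp.single i (a i))) < KM a := KM_lt_of_mu_lt hmuc
        have := gr_mono (ih _ (lt_of_lt_of_le hKlt hKa) _ le_rfl)
          (supp_add_neg_single_subset (a i) hai0)
        rwa [hT] at this
      rcases haipm with h1 | h1
      · rw [flipP hσ a i]
        rw [show (2:ℤ) = d by rw [hd, h1]; ring, show (1:ℤ) = a i by rw [h1]]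
        exact gr_add (hb ▸ hIHb) (gr_mulZr i hIHc)
      · rw [flipM hσ a i]
        rw [show (-2:ℤ) = d by rw [hd, h1]; ring, show (-1:ℤ) = a i by rw [h1]]
        exact gr_add (hb ▸ hIHb) (gr_neg (gr_mulZr i hIHc))

/-- MAIN KEY LEMMA -/
lemma key (hσ : IsSigma σ) (a : Fin n →₀ ℤ) :
    GoodRep σ (bracket σ (Ms a 1)) a.support :=
  key_aux hσ (KM a) a le_rfl

end Th44

namespace Th44

variable {n : ℕ} {σ : Lam n →+* Lam n}

lemma sigma_qsmul (q : ℚ) (x : Lam n) : σ (q • x) = q • σ x :=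
  map_rat_smul σ q x

lemma sigma_Msc (hσ : IsSigma σ) (a : Fin n →₀ ℤ) (c : ℚ) :
    σ (Ms a c) = Ms (-a) (c * sgn (wt a)) := by
  have h1 : (Ms a c : Lam n) = c • Ms a 1 := by
    rw [Ms, Ms, AddMonoidAlgebra.smul_single, smul_eq_mul, mul_one]
  rw [h1, sigma_qsmul, sigma_Ms hσ, Ms, AddMonoidAlgebra.smul_single, smul_eq_mul]
  rfl

/-- coefficientwise description of σ -/
lemma sigma_apply (hσ : IsSigma σ) (Ω : Lam n) (b : Fin n →₀ ℤ) :
    (σ Ω).coeff b = sgn (wt b) * Ω.coeff (-b) := by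
  classical
  have hΩ : Ω = Ω.coeff.sum fun a c => Ms a c := (AddMonoidAlgebra.sum_coeff_single Ω).symm
  have hmap : σ Ω = Ω.coeff.sum fun a c => Ms (-a) (c * sgn (wt a)) := by
    conv_lhs => rw [hΩ]
    rw [map_finsuppSum]
    exact Finsupp.sum_congr fun a _ => sigma_Msc hσ a _
  rw [hmap, AddMonoidAlgebra.coeff_finsuppSum, Finsupp.sum_apply]
  by_cases hmem : -b ∈ Ω.coeff.support
  · rw [Finsupp.sum]
    rw [Finset.sum_eq_single (-b)]
    · rw [Ms, AddMonoidAlgebra.coeff_single, neg_neg, Finsupp.single_eq_same, wt_neg, sgn_neg]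
      ring
    · intro a _ hab
      rw [Ms, AddMonoidAlgebra.coeff_single, Finsupp.single_apply, if_neg]
      intro h
      exact hab (by rw [← h, neg_neg])
    · intro h; exact absurd hmem h
  · have h0 : Ω.coeff (-b) = 0 := Finsupp.notMem_support_iff.mp hmem
    rw [h0, mul_zero, Finsupp.sum]
    refine Finset.sum_eq_zero fun a ha => ?_
    rw [Ms, AddMonoidAlgebra.coeff_single, Finsupp.single_apply, if_neg]
    intro h
    rw [← h, neg_neg] at hmem
    exact hmem ha

lemma br_symm (hσ : IsSigma σ) (a : Fin n →₀ ℤ) :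
    σ (bracket σ (Ms a 1)) = bracket σ (Ms a 1) := by
  rw [bracket, map_add, sigma_sigma_Ms hσ]
  abel

lemma neg_ne_self {a : Fin n →₀ ℤ} (h : a ≠ 0) : -a ≠ a := by
  intro heq
  apply h
  ext i
  have h2 : (-a) i = a i := by rw [heq]
  rw [Finsupp.neg_apply] at h2
  rw [Finsupp.zero_apply]
  omega

/-- the final predicate -/
def Good (σ : Lam n →+* Lam n) (Ω : Lam n) : Prop :=
  ∃ P : Finset (Fin n) → MvPolynomial (Fin n) ℚ,
    IsDecomposition σ Ω P
    ∧ (∀ S, IntP ((2:ℚ) • P S))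
    ∧ (Even n → IntP (P Finset.univ))

lemma good_of_gr (hn : 1 ≤ n) {Ω : Lam n} {T : Finset (Fin n)} (h : GoodRep σ Ω T) :
    Good σ Ω := by
  obtain ⟨P, hP, hl, hi, ht⟩ := h
  refine ⟨P, hP, hi, fun heven => ?_⟩
  by_cases hT : T = Finset.univ
  · rw [← hT]; exact ht
  · have : P Finset.univ = 0 := by
      refine hl _ fun ⟨_, hs⟩ => hT ?_
      exact Finset.Subset.antisymm (Finset.subset_univ T) hs |>.symm ▸ rfl
    rw [this]; exact IntP_zero

lemma good_zero : Good σ (0 : Lam n) := by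
  refine ⟨0, ?_, fun S => by simpa using IntP_zero, fun _ => IntP_zero⟩
  rw [IsDecomposition]
  symm
  refine Finset.sum_eq_zero fun S _ => ?_
  simp [evalBr_zero]

lemma good_add {Ω Ω' : Lam n} (h : Good σ Ω) (h' : Good σ Ω') : Good σ (Ω + Ω') := by
  obtain ⟨P, hP, hi, hu⟩ := h
  obtain ⟨Q, hQ, hi', hu'⟩ := h'
  refine ⟨fun S => P S + Q S, ?_, ?_, ?_⟩
  · rw [IsDecomposition] at hP hQ ⊢
    rw [hP, hQ, ← Finset.sum_add_distrib]
    congr 1; ext S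
    rw [evalBr_add, mul_add]
  · intro S; dsimp only; rw [smul_add]; exact IntP_add (hi S) (hi' S)
  · intro he; dsimp only; exact IntP_add (hu he) (hu' he)

lemma good_intSmul (m : ℤ) {Ω : Lam n} (h : Good σ Ω) : Good σ ((m:ℚ) • Ω) := by
  obtain ⟨P, hP, hi, hu⟩ := h
  refine ⟨fun S => (m:ℚ) • P S, ?_, ?_, ?_⟩
  · rw [IsDecomposition] at hP ⊢
    rw [hP, Finset.smul_sum]
    congr 1; ext S
    rw [evalBr_smul, mul_smul_comm]
  · intro S; dsimp only; rw [smul_comm]; exact IntP_intSmul m (hi S)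
  · intro he; dsimp only; exact IntP_intSmul m (hu he)

lemma expS_empty : expS (∅ : Finset (Fin n)) = 0 := by
  rw [expS_eq_alt, Finset.sort_empty, alt_nil]

lemma good_const (hσ : IsSigma σ) (hn : 1 ≤ n) (m : ℤ) : Good σ ((m:ℚ) • (1 : Lam n)) := by
  have huniv : (Finset.univ : Finset (Fin n)) ≠ ∅ := by
    have : (0 : ℕ) < n := hn
    have hne : (Finset.univ : Finset (Fin n)).Nonempty :=
      ⟨⟨0, this⟩, Finset.mem_univ _⟩
    exact Finset.nonempty_iff_ne_empty.mp hne
  refine ⟨fun S => if S = ∅ then MvPolynomial.C ((m:ℚ)/2) else 0, ?_, ?_, ?_⟩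
  · rw [IsDecomposition, Finset.sum_eq_single ∅]
    · rw [if_pos rfl]
      have hbr : bracket σ (MS (∅ : Finset (Fin n))) = (2 : Lam n) := by
        show bracket σ (Ms (expS ∅) 1) = 2
        rw [br_Ms hσ, expS_empty, wt_zero, sgn_zero, neg_zero, Ms_one]
        norm_num
      have hev : evalBr σ (MvPolynomial.C ((m:ℚ)/2) : MvPolynomial (Fin n) ℚ)
          = ((m:ℚ)/2) • (1 : Lam n) := by
        rw [evalBr, MvPolynomial.aeval_C, Algebra.algebraMap_eq_smul_one]
      rw [hbr, hev, mul_smul_comm, mul_one]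
      have h2 : (2 : Lam n) = (2:ℚ) • (1 : Lam n) := by
        rw [two_smul]
        norm_num
      rw [h2, smul_smul]
      congr 1
      ring
    · intro S _ hS; rw [if_neg hS, evalBr_zero, mul_zero]
    · intro h
      exact absurd (Finset.mem_filter.mpr ⟨Finset.mem_univ _, by simp⟩) h
  · intro S
    dsimp only
    split
    · have : (2:ℚ) • (MvPolynomial.C ((m:ℚ)/2) : MvPolynomial (Fin n) ℚ)
          = MvPolynomial.C (m:ℚ) := by
        rw [MvPolynomial.smul_eq_C_mul, ← MvPolynomial.C_mul]
        congr 1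
        ring
      rw [this]
      intro d
      rw [MvPolynomial.coeff_C]
      split
      · rw [Subring.mem_bot]; exact ⟨m, rfl⟩
      · exact Subring.zero_mem _
    · simpa using IntP_zero
  · intro _
    dsimp only
    rw [if_neg huniv]
    exact IntP_zero

end Th44

namespace Th44

variable {n : ℕ} {σ : Lam n →+* Lam n}

lemma one_apply_lam (b : Fin n →₀ ℤ) :
    (1 : Lam n).coeff b = (Finsupp.single (0 : Fin n →₀ ℤ) (1:ℚ)) b := rfl

lemma good_main (hσ : IsSigma σ) (hn : 1 ≤ n) : ∀ N : ℕ, ∀ Ω : Lam n,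
    Ω.coeff.support.card ≤ N → (∀ b, ∃ m : ℤ, Ω.coeff b = (m:ℚ)) → σ Ω = Ω → Good σ Ω := by
  intro N
  induction N with
  | zero =>
      intro Ω hcard _ _
      have : Ω.coeff.support = ∅ := Finset.card_eq_zero.mp (Nat.le_zero.mp hcard)
      have : Ω = 0 := AddMonoidAlgebra.coeff_eq_zero.mp (Finsupp.support_eq_empty.mp this)
      rw [this]; exact good_zero
  | succ N IH =>
      intro Ω hcard hint hsym
      by_cases hzero : Ω.coeff.support = ∅
      · rw [AddMonoidAlgebra.coeff_eq_zero.mp (Finsupp.support_eq_empty.mp hzero)]; exact good_zero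
      by_cases h0 : (0 : Fin n →₀ ℤ) ∈ Ω.coeff.support
      · obtain ⟨m, hm⟩ := hint 0
        set Ω' : Lam n := Ω - (m:ℚ) • (1 : Lam n) with hΩ'
        have happly : ∀ b, Ω'.coeff b = Ω.coeff b - (m:ℚ) * ((Finsupp.single (0 : Fin n →₀ ℤ) (1:ℚ)) b) := by
          intro b
          rw [hΩ', AddMonoidAlgebra.coeff_sub, Finsupp.sub_apply, AddMonoidAlgebra.coeff_smul, Finsupp.smul_apply, one_apply_lam, smul_eq_mul]
        have hsub : Ω'.coeff.support ⊆ Ω.coeff.support.erase 0 := by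
          intro b hb
          rw [Finsupp.mem_support_iff] at hb
          by_cases hb0 : b = (0 : Fin n →₀ ℤ)
          · exfalso
            apply hb
            rw [hb0, happly, Finsupp.single_eq_same, mul_one, hm, sub_self]
          · refine Finset.mem_erase.mpr ⟨hb0, Finsupp.mem_support_iff.mpr ?_⟩
            rw [happly, Finsupp.single_eq_of_ne' (fun h => hb0 h.symm), mul_zero, sub_zero] at hb
            exact hb
        have hcard' : Ω'.coeff.support.card ≤ N := by
          calc Ω'.coeff.support.card ≤ (Ω.coeff.support.erase 0).card := Finset.card_le_card hsub
            _ = Ω.coeff.support.card - 1 := Finset.card_erase_of_mem h0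
            _ ≤ N := by omega
        have hint' : ∀ b, ∃ k : ℤ, Ω'.coeff b = (k:ℚ) := by
          intro b
          obtain ⟨m', hm'⟩ := hint b
          rw [happly, hm']
          by_cases hb0 : (0 : Fin n →₀ ℤ) = b
          · rw [Finsupp.single_apply, if_pos hb0, mul_one]
            exact ⟨m' - m, by push_cast; ring⟩
          · rw [Finsupp.single_apply, if_neg hb0, mul_zero, sub_zero]
            exact ⟨m', rfl⟩
        have hsym' : σ Ω' = Ω' := by
          rw [hΩ', map_sub, hsym, sigma_qsmul, map_one]
        have hgood' := IH Ω' hcard' hint' hsym'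
        have : Ω = Ω' + (m:ℚ) • (1 : Lam n) := by rw [hΩ', sub_add_cancel]
        rw [this]
        exact good_add hgood' (good_const hσ hn m)
      · obtain ⟨a, ha⟩ := Finset.nonempty_iff_ne_empty.mpr hzero
        have ha0 : a ≠ 0 := fun h => h0 (h ▸ ha)
        obtain ⟨m, hm⟩ := hint a
        set B : Lam n := bracket σ (Ms a 1) with hB
        have hBapply : ∀ b, B.coeff b = (Finsupp.single a (1:ℚ)) b
            + (Finsupp.single (-a) (sgn (wt a))) b := by
          intro b
          rw [hB, br_Ms hσ]
          rfl
        set Ω' : Lam n := Ω - (m:ℚ) • B with hΩ'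
        have happly : ∀ b, Ω'.coeff b = Ω.coeff b - (m:ℚ) * ((Finsupp.single a (1:ℚ)) b
            + (Finsupp.single (-a) (sgn (wt a))) b) := by
          intro b
          rw [hΩ', AddMonoidAlgebra.coeff_sub, Finsupp.sub_apply, AddMonoidAlgebra.coeff_smul, Finsupp.smul_apply, hBapply, smul_eq_mul]
        have hOmneg : Ω.coeff (-a) = sgn (wt a) * (m:ℚ) := by
          have := sigma_apply hσ Ω (-a)
          rw [hsym, neg_neg, wt_neg, sgn_neg, hm] at this
          rw [this]
        have hsub : Ω'.coeff.support ⊆ Ω.coeff.support.erase a := by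
          intro b hb
          rw [Finsupp.mem_support_iff] at hb
          by_cases hba : b = a
          · exfalso
            apply hb
            rw [hba, happly, Finsupp.single_eq_same,
              Finsupp.single_eq_of_ne' (neg_ne_self ha0), add_zero, mul_one, hm, sub_self]
          · by_cases hbna : b = -a
            · exfalso
              apply hb
              have hana : a ≠ -a := fun h => (neg_ne_self ha0) h.symm
              rw [hbna, happly, Finsupp.single_eq_of_ne' hana, Finsupp.single_eq_same, zero_add,
                hOmneg]
              ring
            · refine Finset.mem_erase.mpr ⟨hba, Finsupp.mem_support_iff.mpr ?_⟩
              rw [happly, Finsupp.single_eq_of_ne' (fun h => hba h.symm),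
                Finsupp.single_eq_of_ne' (fun h => hbna h.symm), add_zero, mul_zero,
                sub_zero] at hb
              exact hb
        have hcard' : Ω'.coeff.support.card ≤ N := by
          calc Ω'.coeff.support.card ≤ (Ω.coeff.support.erase a).card := Finset.card_le_card hsub
            _ = Ω.coeff.support.card - 1 := Finset.card_erase_of_mem ha
            _ ≤ N := by omega
        have hint' : ∀ b, ∃ k : ℤ, Ω'.coeff b = (k:ℚ) := by
          intro b
          obtain ⟨m', hm'⟩ := hint b
          rw [happly, hm']
          have hdel : ∃ k : ℤ, ((Finsupp.single a (1:ℚ)) b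
              + (Finsupp.single (-a) (sgn (wt a))) b) = (k:ℚ) := by
            rw [Finsupp.single_apply, Finsupp.single_apply]
            rcases sgn_cases (wt a) with hs | hs <;> rw [hs] <;> split_ifs
            · exact ⟨2, by norm_num⟩
            · exact ⟨1, by norm_num⟩
            · exact ⟨1, by norm_num⟩
            · exact ⟨0, by norm_num⟩
            · exact ⟨0, by norm_num⟩
            · exact ⟨1, by norm_num⟩
            · exact ⟨-1, by norm_num⟩
            · exact ⟨0, by norm_num⟩
          obtain ⟨k, hk⟩ := hdel
          rw [hk]
          exact ⟨m' - m * k, by push_cast; ring⟩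
        have hsym' : σ Ω' = Ω' := by
          rw [hΩ', map_sub, hsym, sigma_qsmul, hB, br_symm hσ]
        have hgood' := IH Ω' hcard' hint' hsym'
        have hgoodB : Good σ ((m:ℚ) • B) :=
          good_intSmul m (good_of_gr hn (key hσ a))
        have : Ω = Ω' + (m:ℚ) • B := by rw [hΩ', sub_add_cancel]
        rw [this]
        exact good_add hgood' hgoodB

end Th44


/-- Theorem 4.4 (existence): every symmetric integral Laurent polynomial `Ω` admits a
decomposition `(P_S)` with all `2·P_S` integral; and if `n` is even, `P_{{1,…,n}}` is integral. -/
theorem exists_decomposition (n : ℕ) (hn : 1 ≤ n) (σ : Lam n →+* Lam n) (hσ : IsSigma σ)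
    (Ω : Lam n) (hint : ∀ a : Fin n →₀ ℤ, ∃ m : ℤ, (Ω.coeff : (Fin n →₀ ℤ) →₀ ℚ) a = (m : ℚ))
    (hsym : σ Ω = Ω) :
    ∃ P : Finset (Fin n) → MvPolynomial (Fin n) ℚ,
      IsDecomposition σ Ω P ∧
      (∀ S : Finset (Fin n), Even S.card →
        ∀ d : Fin n →₀ ℕ, ∃ m : ℤ, 2 * (P S).coeff d = (m : ℚ)) ∧
      (Even n → ∀ d : Fin n →₀ ℕ, ∃ m : ℤ, (P (Finset.univ)).coeff d = (m : ℚ)) := by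
  obtain ⟨P, hdec, hi, hu⟩ :=
    Th44.good_main hσ hn Ω.coeff.support.card Ω le_rfl hint hsym
  refine ⟨P, hdec, ?_, ?_⟩
  · intro S _ d
    have := hi S d
    rw [MvPolynomial.coeff_smul, smul_eq_mul, Subring.mem_bot] at this
    obtain ⟨m, hm⟩ := this
    exact ⟨m, hm.symm⟩
  · intro he d
    have := hu he d
    rw [Subring.mem_bot] at this
    obtain ⟨m, hm⟩ := this
    exact ⟨m, hm.symm⟩

end
end

section
/- [Theorem 4.4, uniqueness] If (P_S) and (P′_S) are two decompositions of the same Ω ∈ Λ, then P_S = P′_S for every even-cardinality subset S of {1,…,n}. Equivalently, if a family (Q_S) of polynomials in ℚ[z₁,…,z_n], indexed by the even-cardinality subsets S, satisfies Σ_S {M_S}·Q_S({x₁},…,{x_n}) = 0 in Λ, then Q_S = 0 for every S. -/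
noncomputable section

namespace DecompAux

variable {n : ℕ}

/-! ### Real-number helpers -/

def w (y : ℚ) : ℝ := Real.sqrt ((y:ℝ)^2 + 4)

def sg (b : Bool) : ℝ := if b then 1 else -1

def rr (y : ℚ) (b : Bool) : ℝ := ((y:ℝ) + sg b * w y) / 2

lemma w_sq (y : ℚ) : w y ^ 2 = (y:ℝ)^2 + 4 := by
  have h : (0:ℝ) ≤ (y:ℝ)^2 + 4 := by positivity
  simp [w, Real.sq_sqrt h]

lemma w_pos (y : ℚ) : 0 < w y := by
  have : (0:ℝ) < (y:ℝ)^2 + 4 := by positivity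
  exact Real.sqrt_pos.mpr this

lemma sg_sq (b : Bool) : sg b * sg b = 1 := by cases b <;> simp [sg]

lemma sg_not (b : Bool) : sg (!b) = - sg b := by cases b <;> simp [sg]

def rrinv (y : ℚ) (b : Bool) : ℝ := (sg b * w y - y) / 2

lemma rr_mul_rrinv (y : ℚ) (b : Bool) : rr y b * rrinv y b = 1 := by
  have h := w_sq y
  have h2 := sg_sq b
  unfold rr rrinv
  ring_nf
  nlinarith [h, h2]

lemma rr_ne_zero (y : ℚ) (b : Bool) : rr y b ≠ 0 :=
  left_ne_zero_of_mul_eq_one (rr_mul_rrinv y b)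

lemma rr_inv (y : ℚ) (b : Bool) : (rr y b)⁻¹ = rrinv y b :=
  eq_inv_of_mul_eq_one_right (rr_mul_rrinv y b) |>.symm

lemma rr_not (y : ℚ) (b : Bool) : rr y (!b) = - (rr y b)⁻¹ := by
  rw [rr_inv]; unfold rr rrinv; rw [sg_not]; ring

lemma rr_sub_inv (y : ℚ) (b : Bool) : rr y b - (rr y b)⁻¹ = (y:ℝ) := by
  rw [rr_inv]; unfold rr rrinv; ring

lemma rr_zpow (y : ℚ) (b : Bool) {e : ℤ} (he : e = 1 ∨ e = -1) :
    rr y b ^ e = ((e:ℝ) * y + sg b * w y) / 2 := by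
  rcases he with rfl | rfl
  · simp [rr]
  · rw [zpow_neg, zpow_one, rr_inv]; unfold rrinv; push_cast; ring_nf


/-- The group of monomials as units of `Lam n`. -/
def XU (n : ℕ) : Multiplicative (Fin n →₀ ℤ) →* (Lam n)ˣ where
  toFun a := ⟨AddMonoidAlgebra.single a.toAdd 1, AddMonoidAlgebra.single (-a.toAdd) 1,
    by rw [AddMonoidAlgebra.single_mul_single]; simp [AddMonoidAlgebra.one_def],
    by rw [AddMonoidAlgebra.single_mul_single]; simp [AddMonoidAlgebra.one_def]⟩
  map_one' := Units.ext (by simp [AddMonoidAlgebra.one_def])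
  map_mul' a b := Units.ext (show AddMonoidAlgebra.single _ (1:ℚ)
      = AddMonoidAlgebra.single _ 1 * AddMonoidAlgebra.single _ 1 from by
    rw [AddMonoidAlgebra.single_mul_single, one_mul]; rfl)

lemma XU_val (a : Fin n →₀ ℤ) :
    ((XU n (Multiplicative.ofAdd a)) : Lam n) = AddMonoidAlgebra.single a 1 := by
  simp [XU]

/-- A monoid hom out of the monomial group is determined by its values on generators. -/
lemma monoidHom_ofAdd_eq_prod {M : Type*} [CommGroup M]
    (F : Multiplicative (Fin n →₀ ℤ) →* M) (a : Fin n →₀ ℤ) :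
    F (Multiplicative.ofAdd a) = ∏ i, (F (Multiplicative.ofAdd (Finsupp.single i 1))) ^ (a i) := by
  have ha : a = ∑ i, Finsupp.single i (a i) := by
    ext j; rw [Finsupp.finset_sum_apply]
    simp [Finsupp.single_apply]
  conv_lhs => rw [ha]
  have : ∀ (s : Finset (Fin n)) (g : Fin n → (Fin n →₀ ℤ)),
      F (Multiplicative.ofAdd (∑ i ∈ s, g i)) = ∏ i ∈ s, F (Multiplicative.ofAdd (g i)) := by
    intro s g
    induction s using Finset.cons_induction with
    | empty => simp
    | cons i s hi ih =>
      rw [Finset.sum_cons, Finset.prod_cons, ← ih, ofAdd_add, map_mul]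
  rw [this]
  congr 1
  funext i
  have : Finsupp.single i (a i) = (a i) • Finsupp.single i (1:ℤ) := by
    rw [Finsupp.smul_single]; simp
  rw [this, ofAdd_zsmul, map_zpow]

/-- Any ring hom `Lam n →+* ℝ` is determined by its values on the `Xv i`. -/
lemma ringHom_ext_Xv {φ₁ φ₂ : Lam n →+* ℝ} (h : ∀ i, φ₁ (Xv i) = φ₂ (Xv i)) : φ₁ = φ₂ := by
  apply AddMonoidAlgebra.ringHom_ext
  · intro b
    have e1 : ∀ (φ : Lam n →+* ℝ), φ (AddMonoidAlgebra.single 0 b) =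
        (φ.comp (AddMonoidAlgebra.singleZeroRingHom : ℚ →+* Lam n)) b := fun _ => rfl
    rw [e1 φ₁, e1 φ₂, Subsingleton.elim (φ₁.comp _) (φ₂.comp _)]
  · intro a
    have key : ∀ (φ : Lam n →+* ℝ), φ (AddMonoidAlgebra.single a 1) =
        ∏ i, (φ (Xv i)) ^ (a i) := by
      intro φ
      have : φ (AddMonoidAlgebra.single a 1)
          = ((((Units.map φ).comp (XU n)) (Multiplicative.ofAdd a) : ℝˣ) : ℝ) := by
        rw [MonoidHom.comp_apply, Units.coe_map, XU_val]; rfl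
      rw [this, monoidHom_ofAdd_eq_prod]
      rw [← Units.coeHom_apply, map_prod]
      congr 1; funext i
      rw [Units.coeHom_apply, Units.val_zpow_eq_zpow_val, MonoidHom.comp_apply,
        Units.coe_map, XU_val]
      rfl
    rw [key φ₁, key φ₂]
    congr 1; funext i; rw [h i]


/-- The evaluation monoid hom on monomials. -/
def Fmon (y : Fin n → ℚ) (ε : Fin n → Bool) : Multiplicative (Fin n →₀ ℤ) →* ℝ where
  toFun a := ∏ i, rr (y i) (ε i) ^ (a.toAdd i)
  map_one' := by simp
  map_mul' a b := by
    show (∏ i, rr (y i) (ε i) ^ ((Multiplicative.toAdd a + Multiplicative.toAdd b) i))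
      = (∏ i, rr (y i) (ε i) ^ (Multiplicative.toAdd a i))
        * ∏ i, rr (y i) (ε i) ^ (Multiplicative.toAdd b i)
    rw [← Finset.prod_mul_distrib]
    refine Finset.prod_congr rfl fun i _ => ?_
    rw [Finsupp.add_apply, zpow_add₀ (rr_ne_zero _ _)]

/-- The evaluation algebra hom `ψ_{y,ε} : Lam n →ₐ[ℚ] ℝ`, `x_i ↦ rr (y i) (ε i)`. -/
def psi (y : Fin n → ℚ) (ε : Fin n → Bool) : Lam n →ₐ[ℚ] ℝ :=
  AddMonoidAlgebra.lift ℚ ℝ (Fin n →₀ ℤ) (Fmon y ε)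

lemma psi_single (y : Fin n → ℚ) (ε : Fin n → Bool) (a : Fin n →₀ ℤ) (q : ℚ) :
    psi y ε (AddMonoidAlgebra.single a q) = q • ∏ i, rr (y i) (ε i) ^ (a i) := by
  rw [psi, AddMonoidAlgebra.lift_single]; rfl

lemma prod_single_exp (r : Fin n → ℝ) (hr : ∀ i, r i ≠ 0) (i : Fin n) (c : ℤ) :
    ∏ j, r j ^ ((Finsupp.single i c) j) = r i ^ c := by
  rw [Finset.prod_eq_single i]
  · rw [Finsupp.single_apply, if_pos rfl]
  · intro j _ hj
    rw [Finsupp.single_apply, if_neg (fun h => hj h.symm)]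
    exact zpow_zero _
  · intro h; exact absurd (Finset.mem_univ i) h

lemma psi_Xv (y : Fin n → ℚ) (ε : Fin n → Bool) (i : Fin n) :
    psi y ε (Xv i) = rr (y i) (ε i) := by
  rw [Xv, psi_single, one_smul]
  have := prod_single_exp (fun j => rr (y j) (ε j)) (fun j => rr_ne_zero _ _) i 1
  rw [this, zpow_one]

lemma psi_single_neg (y : Fin n → ℚ) (ε : Fin n → Bool) (i : Fin n) :
    psi y ε (AddMonoidAlgebra.single (-(Finsupp.single i 1)) 1) = (rr (y i) (ε i))⁻¹ := by
  rw [psi_single, one_smul]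
  have h1 : -(Finsupp.single i (1:ℤ)) = Finsupp.single i (-1 : ℤ) := by
    rw [Finsupp.single_neg]
  rw [h1, prod_single_exp (fun j => rr (y j) (ε j)) (fun j => rr_ne_zero _ _) i (-1), zpow_neg,
    zpow_one]

lemma sigma_Xv {σ : Lam n →+* Lam n} (hσ : IsSigma σ) (i : Fin n) :
    σ (Xv i) = - AddMonoidAlgebra.single (-(Finsupp.single i 1)) 1 := by
  have h := hσ i
  have hinv : (Xv i) * AddMonoidAlgebra.single (-(Finsupp.single i 1)) (1:ℚ) = 1 := by
    rw [Xv, AddMonoidAlgebra.single_mul_single]; simp [AddMonoidAlgebra.one_def]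
  calc σ (Xv i) = σ (Xv i) * ((Xv i) * AddMonoidAlgebra.single (-(Finsupp.single i 1)) 1) := by
        rw [hinv, mul_one]
    _ = (σ (Xv i) * Xv i) * AddMonoidAlgebra.single (-(Finsupp.single i 1)) 1 := by ring
    _ = - AddMonoidAlgebra.single (-(Finsupp.single i 1)) 1 := by rw [h]; ring

lemma psi_sigma {σ : Lam n →+* Lam n} (hσ : IsSigma σ) (y : Fin n → ℚ) (ε : Fin n → Bool)
    (f : Lam n) : psi y ε (σ f) = psi y (fun i => !(ε i)) f := by
  have : ((psi y ε : Lam n →ₐ[ℚ] ℝ) : Lam n →+* ℝ).comp σ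
      = ((psi y (fun i => !(ε i)) : Lam n →ₐ[ℚ] ℝ) : Lam n →+* ℝ) := by
    apply ringHom_ext_Xv
    intro i
    show psi y ε (σ (Xv i)) = psi y (fun i => !(ε i)) (Xv i)
    rw [sigma_Xv hσ, map_neg, psi_single_neg, psi_Xv, rr_not]
  exact RingHom.congr_fun this f


lemma list_sum_apply (l : List (Fin n × ℕ)) (i : Fin n) :
    ((l.map fun p => Finsupp.single p.1 ((-1 : ℤ) ^ p.2)).sum) i
      = (l.map fun p => if p.1 = i then ((-1:ℤ))^p.2 else 0).sum := by
  induction l with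
  | nil => simp
  | cons p t ih =>
    simp only [List.map_cons, List.sum_cons, Finsupp.add_apply, ih, Finsupp.single_apply]

lemma enumFrom_cons (a : α) (t : List α) (k : ℕ) :
    (a :: t).zipIdx k = (a, k) :: t.zipIdx (k+1) := rfl

lemma helperA (l : List (Fin n)) (k : ℕ) (i : Fin n) (h : i ∉ l) :
    ((l.zipIdx k).map fun p => if p.1 = i then ((-1:ℤ))^p.2 else 0).sum = 0 := by
  induction l generalizing k with
  | nil => simp
  | cons a t ih =>
    rw [enumFrom_cons, List.map_cons, List.sum_cons,
      if_neg (fun hh : a = i => h (hh ▸ List.mem_cons_self (a := a) (l := t))),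
      ih (k+1) (fun hm => h (List.mem_cons_of_mem _ hm)), zero_add]

lemma helperB (l : List (Fin n)) (k : ℕ) (i : Fin n) (hnd : l.Nodup) (h : i ∈ l) :
    ∃ m : ℕ, ((l.zipIdx k).map fun p => if p.1 = i then ((-1:ℤ))^p.2 else 0).sum = (-1)^m := by
  induction l generalizing k with
  | nil => simp at h
  | cons a t ih =>
    obtain ⟨hat, hnt⟩ := List.nodup_cons.mp hnd
    rw [enumFrom_cons, List.map_cons, List.sum_cons]
    by_cases hia : a = i
    · refine ⟨k, ?_⟩
      rw [if_pos hia, helperA t (k+1) i (hia ▸ hat), add_zero]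
    · have hit : i ∈ t := by
        rcases List.mem_cons.mp h with hh | hh
        · exact absurd hh.symm hia
        · exact hh
      obtain ⟨m, hm⟩ := ih (k+1) hnt hit
      exact ⟨m, by rw [if_neg hia, hm, zero_add]⟩

lemma expS_apply (S : Finset (Fin n)) (i : Fin n) :
    expS S i = (((S.sort (· ≤ ·)).zipIdx 0).map
      fun p => if p.1 = i then ((-1:ℤ))^p.2 else 0).sum := by
  rw [expS]
  exact list_sum_apply _ i

lemma expS_not_mem {S : Finset (Fin n)} {i : Fin n} (h : i ∉ S) : expS S i = 0 := by
  rw [expS_apply]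
  exact helperA _ 0 i (fun hm => h ((Finset.mem_sort _).mp hm))

lemma expS_mem {S : Finset (Fin n)} {i : Fin n} (h : i ∈ S) :
    expS S i = 1 ∨ expS S i = -1 := by
  rw [expS_apply]
  obtain ⟨m, hm⟩ := helperB (S.sort (· ≤ ·)) 0 i (S.sort_nodup _) ((Finset.mem_sort _).mpr h)
  rw [hm]
  rcases Nat.even_or_odd m with he | ho
  · exact Or.inl he.neg_one_pow
  · exact Or.inr ho.neg_one_pow


/-- Exchange of sum over Boolean vectors and product. -/
lemma sum_pi_bool_prod (g : Fin n → Bool → ℝ) :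
    ∑ ε : Fin n → Bool, ∏ i, g i (ε i) = ∏ i, (g i true + g i false) := by
  have : ∀ i : Fin n, g i true + g i false = ∑ b : Bool, g i b := by
    intro i; rw [Fintype.sum_bool]
  simp only [this]
  rw [Finset.prod_univ_sum]
  rw [Fintype.piFinset_univ]

/-- The key character-sum computation. -/
lemma char_sum (T S : Finset (Fin n)) (c d : Fin n → ℝ) :
    ∑ ε : Fin n → Bool, (∏ i ∈ T, sg (ε i)) * ∏ i ∈ S, ((c i + sg (ε i) * d i)/2)
      = if T ⊆ S then
          (∏ i ∈ T, d i) * (∏ i ∈ S \ T, c i) * (∏ i ∈ Finset.univ \ S, (2:ℝ))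
        else 0 := by
  classical
  set g : Fin n → Bool → ℝ := fun i b =>
    (if i ∈ T then sg b else 1) * (if i ∈ S then (c i + sg b * d i)/2 else 1) with hg
  have h1 : ∀ ε : Fin n → Bool,
      (∏ i ∈ T, sg (ε i)) * ∏ i ∈ S, ((c i + sg (ε i) * d i)/2) = ∏ i, g i (ε i) := by
    intro ε
    rw [hg]
    rw [Finset.prod_mul_distrib]
    congr 1
    · rw [Finset.prod_ite_mem, Finset.univ_inter]
    · rw [Finset.prod_ite_mem, Finset.univ_inter]
  simp only [h1]
  rw [sum_pi_bool_prod]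
  by_cases hTS : T ⊆ S
  · rw [if_pos hTS]
    set F : Fin n → ℝ := fun i => if i ∈ T then d i else (if i ∈ S then c i else 2) with hF
    have sgt : sg true = 1 := rfl
    have sgf : sg false = -1 := rfl
    have huniv : ∀ i : Fin n, g i true + g i false = F i := by
      intro i
      rw [hg, hF]
      by_cases hiT : i ∈ T
      · have hiS : i ∈ S := hTS hiT
        simp only [hiT, hiS, if_true, sgt, sgf]
        ring
      · by_cases hiS : i ∈ S
        · simp only [hiT, hiS, if_true, if_false, sgt, sgf]
          ring
        · simp only [hiT, hiS, if_false, sgt, sgf]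
          norm_num
    rw [Finset.prod_congr rfl (fun i _ => huniv i)]
    have e0 : (∏ i ∈ S, F i) * (∏ i ∈ Sᶜ, F i) = ∏ i, F i := Finset.prod_mul_prod_compl S F
    have e1 : ∏ i ∈ S, F i = (∏ i ∈ T, d i) * ∏ i ∈ S \ T, c i := by
      rw [← Finset.prod_sdiff hTS, mul_comm]
      congr 1
      · exact Finset.prod_congr rfl fun i hi => by simp only [hF, hi, if_true]
      · refine Finset.prod_congr rfl fun i hi => ?_
        obtain ⟨hiS, hiT⟩ := Finset.mem_sdiff.mp hi
        rw [hF]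
        simp only [hiT, hiS, if_true, if_false]
    have e2 : ∏ i ∈ Sᶜ, F i = ∏ i ∈ Finset.univ \ S, (2:ℝ) := by
      rw [Finset.compl_eq_univ_sdiff]
      refine Finset.prod_congr rfl fun i hi => ?_
      have his := (Finset.mem_sdiff.mp hi).2
      have hit : i ∉ T := fun hiT => his (hTS hiT)
      simp only [hF, his, hit, if_false]
    rw [← e0, e1, e2]
  · rw [if_neg hTS]
    obtain ⟨i0, hi0T, hi0S⟩ := Finset.not_subset.mp hTS
    apply Finset.prod_eq_zero (Finset.mem_univ i0)
    rw [hg]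
    simp only [hi0T, hi0S, if_true, if_false, if_pos, if_neg, sg]
    norm_num

/-- Reindexing a sum over Boolean vectors by pointwise negation. -/
lemma sum_pi_bool_not (f : (Fin n → Bool) → ℝ) :
    ∑ ε : Fin n → Bool, f (fun i => !(ε i)) = ∑ ε : Fin n → Bool, f ε := by
  apply Finset.sum_nbij' (fun ε => fun i => !(ε i)) (fun ε => fun i => !(ε i)) <;>
    simp


/-! ### Main development -/

/-- The evaluated bracket monomial. -/
def AS (y : Fin n → ℚ) (ε : Fin n → Bool) (S : Finset (Fin n)) : ℝ :=
  ∏ i ∈ S, ((((expS S i : ℤ)):ℝ) * (y i : ℝ) + sg (ε i) * w (y i)) / 2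

lemma psi_MS (y : Fin n → ℚ) (ε : Fin n → Bool) (S : Finset (Fin n)) :
    psi y ε (MS S) = AS y ε S := by
  rw [MS, psi_single, one_smul]
  have h1 : ∏ i, rr (y i) (ε i) ^ (expS S i)
      = ∏ i ∈ S, rr (y i) (ε i) ^ (expS S i) :=
    (Finset.prod_subset (Finset.subset_univ S)
      (fun x _ hx => by rw [expS_not_mem hx, zpow_zero])).symm
  rw [h1, AS]
  exact Finset.prod_congr rfl fun i hi => rr_zpow (y i) (ε i) (expS_mem hi)

lemma psi_bracket_MS {σ : Lam n →+* Lam n} (hσ : IsSigma σ) (y : Fin n → ℚ)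
    (ε : Fin n → Bool) (S : Finset (Fin n)) :
    psi y ε (bracket σ (MS S)) = AS y ε S + AS y (fun i => !(ε i)) S := by
  rw [bracket, map_add, psi_sigma hσ, psi_MS, psi_MS]

lemma psi_evalBr {σ : Lam n →+* Lam n} (hσ : IsSigma σ) (y : Fin n → ℚ)
    (ε : Fin n → Bool) (Q : MvPolynomial (Fin n) ℚ) :
    psi y ε (evalBr σ Q) = ((MvPolynomial.eval y Q : ℚ) : ℝ) := by
  rw [evalBr, MvPolynomial.comp_aeval_apply]
  have hb : ∀ i, psi y ε (bracket σ (Xv i)) = ((y i : ℚ) : ℝ) := by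
    intro i
    rw [bracket, map_add, psi_Xv, psi_sigma hσ, psi_Xv, rr_not, ← sub_eq_add_neg, rr_sub_inv]
  simp only [hb]
  have hfun : (fun i => ((y i : ℚ) : ℝ)) = fun i => (Algebra.ofId ℚ ℝ) (y i) := by
    funext i
    rw [Algebra.ofId_apply, eq_ratCast (algebraMap ℚ ℝ) (y i)]
  rw [hfun]
  have h2 := (MvPolynomial.comp_aeval_apply (f := y) (Algebra.ofId ℚ ℝ) Q).symm
  rw [h2, Algebra.ofId_apply, eq_ratCast (algebraMap ℚ ℝ)]
  norm_cast

/-- The real-number identity obtained by applying `ψ_{y,ε}`. -/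
lemma real_id {σ : Lam n →+* Lam n} (hσ : IsSigma σ)
    (Q : Finset (Fin n) → MvPolynomial (Fin n) ℚ)
    (h0 : ∑ S ∈ Finset.univ.filter (fun S : Finset (Fin n) => Even S.card),
        bracket σ (MS S) * evalBr σ (Q S) = 0)
    (y : Fin n → ℚ) (ε : Fin n → Bool) :
    ∑ S ∈ Finset.univ.filter (fun S : Finset (Fin n) => Even S.card),
      ((MvPolynomial.eval y (Q S) : ℚ) : ℝ) * (AS y ε S + AS y (fun i => !(ε i)) S) = 0 := by
  have h := congrArg (psi y ε) h0
  rw [map_zero, map_sum] at h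
  rw [← h]
  refine Finset.sum_congr rfl fun S hS => ?_
  rw [map_mul, psi_bracket_MS hσ, psi_evalBr hσ, mul_comm]


open Finset MvPolynomial in
/-- The polynomial extracted by the `T`-th character average. -/
def polyT (Q : Finset (Fin n) → MvPolynomial (Fin n) ℚ) (T : Finset (Fin n)) :
    MvPolynomial (Fin n) ℚ :=
  ∑ S ∈ (Finset.univ.filter fun S : Finset (Fin n) => Even S.card).filter (fun S => T ⊆ S),
    MvPolynomial.C ((2:ℚ)^(n - S.card + 1) * ∏ i ∈ S \ T, ((expS S i : ℤ) : ℚ))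
      * (∏ i ∈ S \ T, MvPolynomial.X i) * Q S

open Finset MvPolynomial in
lemma polyT_eq_zero {σ : Lam n →+* Lam n} (hσ : IsSigma σ)
    (Q : Finset (Fin n) → MvPolynomial (Fin n) ℚ)
    (h0 : ∑ S ∈ Finset.univ.filter (fun S : Finset (Fin n) => Even S.card),
        bracket σ (MS S) * evalBr σ (Q S) = 0)
    (T : Finset (Fin n)) (hT : Even T.card) :
    polyT Q T = 0 := by
  have key : ∀ y : Fin n → ℚ, MvPolynomial.eval y (polyT Q T) = 0 := by
    intro y
    set ev : Finset (Finset (Fin n)) :=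
      Finset.univ.filter (fun S : Finset (Fin n) => Even S.card) with hev
    set q : Finset (Fin n) → ℚ := fun S => MvPolynomial.eval y (Q S) with hq
    set d : Fin n → ℝ := fun i => w (y i) with hd
    set cc : Finset (Fin n) → Fin n → ℝ :=
      fun S i => ((expS S i : ℤ) : ℝ) * ((y i : ℚ) : ℝ) with hcc
    have hA : ∀ (ε : Fin n → Bool) (S : Finset (Fin n)),
        AS y ε S = ∏ i ∈ S, ((cc S i + sg (ε i) * d i)/2) := fun _ _ => rfl
    -- the character-averaged real identity
    have hsum0 : ∑ ε : Fin n → Bool, (∏ i ∈ T, sg (ε i)) *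
        (∑ S ∈ ev, ((q S : ℚ) : ℝ) * (AS y ε S + AS y (fun i => !(ε i)) S)) = 0 := by
      refine Finset.sum_eq_zero fun ε _ => ?_
      rw [real_id hσ Q h0 y ε, mul_zero]
    simp only [Finset.mul_sum] at hsum0
    rw [Finset.sum_comm] at hsum0
    -- compute the inner sums
    have hneg : ∀ ε : Fin n → Bool, ∏ i ∈ T, sg (!(ε i)) = ∏ i ∈ T, sg (ε i) := by
      intro ε
      have : ∀ i ∈ T, sg (!(ε i)) = (-1) * sg (ε i) := fun i _ => by rw [sg_not]; ring
      rw [Finset.prod_congr rfl this, Finset.prod_mul_distrib, Finset.prod_const,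
        hT.neg_one_pow, one_mul]
    have hchar : ∀ S : Finset (Fin n),
        ∑ ε : Fin n → Bool, (∏ i ∈ T, sg (ε i)) * (((q S : ℚ) : ℝ) *
            (AS y ε S + AS y (fun i => !(ε i)) S))
          = ((q S : ℚ) : ℝ) * 2 *
            (if T ⊆ S then (∏ i ∈ T, d i) * (∏ i ∈ S \ T, cc S i)
                * (∏ i ∈ Finset.univ \ S, (2:ℝ)) else 0) := by
      intro S
      have e1 : ∑ ε : Fin n → Bool, (∏ i ∈ T, sg (ε i)) * AS y ε S
          = (if T ⊆ S then (∏ i ∈ T, d i) * (∏ i ∈ S \ T, cc S i)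
                * (∏ i ∈ Finset.univ \ S, (2:ℝ)) else 0) := by
        simp only [hA]
        exact char_sum T S (cc S) d
      have e2 : ∑ ε : Fin n → Bool, (∏ i ∈ T, sg (ε i)) * AS y (fun i => !(ε i)) S
          = ∑ ε : Fin n → Bool, (∏ i ∈ T, sg (ε i)) * AS y ε S := by
        have h3 := sum_pi_bool_not
          (fun ε : Fin n → Bool => (∏ i ∈ T, sg (!(ε i))) * AS y ε S)
        simp only [Bool.not_not] at h3
        rw [h3]
        exact Finset.sum_congr rfl fun ε _ => by rw [hneg]
      calc ∑ ε : Fin n → Bool, (∏ i ∈ T, sg (ε i)) * (((q S : ℚ) : ℝ) *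
              (AS y ε S + AS y (fun i => !(ε i)) S))
          = ((q S : ℚ) : ℝ) * ((∑ ε : Fin n → Bool, (∏ i ∈ T, sg (ε i)) * AS y ε S)
              + ∑ ε : Fin n → Bool, (∏ i ∈ T, sg (ε i)) * AS y (fun i => !(ε i)) S) := by
            rw [← Finset.sum_add_distrib, Finset.mul_sum]
            exact Finset.sum_congr rfl fun ε _ => by ring
        _ = _ := by rw [e1, e2, e1]; ring
    simp only [hchar] at hsum0
    -- reorganize into a multiple of `∏_T d`
    have hterm : ∀ S ∈ ev, ((q S : ℚ) : ℝ) * 2 *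
        (if T ⊆ S then (∏ i ∈ T, d i) * (∏ i ∈ S \ T, cc S i)
            * (∏ i ∈ Finset.univ \ S, (2:ℝ)) else 0)
        = (∏ i ∈ T, d i) * (if T ⊆ S then
            ((q S : ℚ) : ℝ) * (∏ i ∈ S \ T, cc S i) * 2^(n - S.card + 1) else 0) := by
      intro S _
      by_cases hTS : T ⊆ S
      · rw [if_pos hTS, if_pos hTS, Finset.prod_const]
        have hcard : (Finset.univ \ S).card = n - S.card := by
          rw [Finset.card_sdiff_of_subset (Finset.subset_univ S), Finset.card_univ, Fintype.card_fin]
        rw [hcard, pow_succ]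
        ring
      · rw [if_neg hTS, if_neg hTS, mul_zero, mul_zero]
    rw [Finset.sum_congr rfl hterm, ← Finset.mul_sum] at hsum0
    have hdpos : (0:ℝ) < ∏ i ∈ T, d i := Finset.prod_pos fun i _ => w_pos (y i)
    have hsum1 : ∑ S ∈ ev, (if T ⊆ S then
        ((q S : ℚ) : ℝ) * (∏ i ∈ S \ T, cc S i) * 2^(n - S.card + 1) else 0) = 0 := by
      rcases mul_eq_zero.mp hsum0 with h | h
      · exact absurd h (ne_of_gt hdpos)
      · exact h
    rw [← Finset.sum_filter] at hsum1
    -- identify with the evaluation of `polyT`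
    have hcast : ((MvPolynomial.eval y (polyT Q T) : ℚ) : ℝ)
        = ∑ S ∈ ev.filter (fun S => T ⊆ S),
          ((q S : ℚ) : ℝ) * (∏ i ∈ S \ T, cc S i) * 2^(n - S.card + 1) := by
      rw [polyT]
      rw [map_sum]
      push_cast
      refine Finset.sum_congr rfl fun S hS => ?_
      rw [map_mul, map_mul, MvPolynomial.eval_C, MvPolynomial.eval_prod]
      simp only [MvPolynomial.eval_X]
      push_cast
      rw [Finset.prod_mul_distrib]
      ring
    have hfin : ((MvPolynomial.eval y (polyT Q T) : ℚ) : ℝ) = 0 := by rw [hcast]; exact hsum1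
    exact_mod_cast hfin
  exact MvPolynomial.funext (fun x => by rw [key x, map_zero])


open Finset MvPolynomial in
lemma main_vanish {σ : Lam n →+* Lam n} (hσ : IsSigma σ)
    (Q : Finset (Fin n) → MvPolynomial (Fin n) ℚ)
    (h0 : ∑ S ∈ Finset.univ.filter (fun S : Finset (Fin n) => Even S.card),
        bracket σ (MS S) * evalBr σ (Q S) = 0) :
    ∀ T : Finset (Fin n), Even T.card → Q T = 0 := by
  suffices H : ∀ m : ℕ, ∀ T : Finset (Fin n), Even T.card → n - T.card < m → Q T = 0 by
    exact fun T hT => H (n + 1) T hT (by omega)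
  intro m
  induction m with
  | zero => exact fun T _ h => absurd h (by omega)
  | succ m ih =>
    intro T hT _h
    have hpoly := polyT_eq_zero hσ Q h0 T hT
    rw [polyT] at hpoly
    have hmem : T ∈ (Finset.univ.filter fun S : Finset (Fin n) => Even S.card).filter
        (fun S => T ⊆ S) := by
      simp [hT]
    have hothers : ∀ S ∈ (Finset.univ.filter fun S : Finset (Fin n) => Even S.card).filter
        (fun S => T ⊆ S), S ≠ T →
        MvPolynomial.C ((2:ℚ)^(n - S.card + 1) * ∏ i ∈ S \ T, ((expS S i : ℤ) : ℚ))
          * (∏ i ∈ S \ T, MvPolynomial.X i) * Q S = 0 := by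
      intro S hS hne
      simp only [Finset.mem_filter, Finset.mem_univ, true_and] at hS
      obtain ⟨hSev, hTS⟩ := hS
      have hss : T ⊂ S := hTS.ssubset_of_ne (Ne.symm hne)
      have hcards : T.card < S.card := Finset.card_lt_card hss
      have hSn : S.card ≤ n := by simpa using Finset.card_le_univ S
      have : Q S = 0 := ih S hSev (by omega)
      rw [this, mul_zero]
    rw [Finset.sum_eq_single_of_mem T hmem hothers] at hpoly
    rw [Finset.sdiff_self] at hpoly
    simp only [Finset.prod_empty, mul_one] at hpoly
    rcases mul_eq_zero.mp hpoly with h | h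
    · exfalso
      rw [MvPolynomial.C_eq_zero] at h
      norm_num at h
    · exact h


end DecompAux

/-- Theorem 4.4 (uniqueness): two decompositions of the same `Ω` agree on every
even-cardinality subset `S`. -/
theorem decomposition_unique (n : ℕ) (hn : 1 ≤ n) (σ : Lam n →+* Lam n) (hσ : IsSigma σ)
    (Ω : Lam n) (P P' : Finset (Fin n) → MvPolynomial (Fin n) ℚ)
    (hP : IsDecomposition σ Ω P) (hP' : IsDecomposition σ Ω P') :
    ∀ S : Finset (Fin n), Even S.card → P S = P' S := by
  intro S hS
  have h0 : ∑ T ∈ Finset.univ.filter (fun T : Finset (Fin n) => Even T.card),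
      bracket σ (MS T) * evalBr σ (P T - P' T) = 0 := by
    have hsub : ∀ T : Finset (Fin n),
        bracket σ (MS T) * evalBr σ (P T - P' T)
          = bracket σ (MS T) * evalBr σ (P T) - bracket σ (MS T) * evalBr σ (P' T) := by
      intro T
      rw [evalBr, evalBr, evalBr, map_sub, mul_sub]
    simp only [hsub]
    rw [Finset.sum_sub_distrib, ← hP, ← hP', sub_self]
  have h := DecompAux.main_vanish hσ (fun T => P T - P' T) h0 S hS
  exact sub_eq_zero.mp h

end
end

section
/- [Lemma 4.5(i), algebraic form] Let (P_S) be a decomposition of Ω ∈ Λ and let m ∈ ℤ be such that every monomial x₁^{a₁}⋯x_n^{a_n} occurring in Ω with nonzero coefficient has total degree a₁+⋯+a_n ≡ m (mod 2). Then for every even-cardinality subset S, every monomial z₁^{d₁}⋯z_n^{d_n} occurring in P_S with nonzero coefficient has total degree d₁+⋯+d_n ≡ m (mod 2). -/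
noncomputable section

namespace L45

open AddMonoidAlgebra

variable {n : ℕ}

/-- Parity bridge lemmas -/
lemma zmod2_even {a : ℤ} (h : Even a) : (a : ZMod 2) = 0 := by
  rw [ZMod.intCast_zmod_eq_zero_iff_dvd]
  exact_mod_cast even_iff_two_dvd.mp h

lemma zmod2_odd {a : ℤ} (h : Odd a) : (a : ZMod 2) = 1 := by
  obtain ⟨k, rfl⟩ := h
  push_cast
  rw [show ((2:ZMod 2)) = 0 by decide]
  ring

lemma neg_one_zpow_congr {a b : ℤ} (h : (a : ZMod 2) = (b : ZMod 2)) :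
    (-1:ℚ)^a = (-1:ℚ)^b := by
  have h2 : a ≡ b [ZMOD 2] := (ZMod.intCast_eq_intCast_iff a b 2).mp h
  obtain ⟨k, hk⟩ := h2.dvd
  have : b = a + 2 * k := by linarith
  subst this
  rw [zpow_add₀ (by norm_num : (-1:ℚ) ≠ 0), zpow_mul]
  norm_num

lemma neg_one_zpow_inj {a b : ℤ} (h : (-1:ℚ)^a = (-1:ℚ)^b) :
    (a : ZMod 2) = (b : ZMod 2) := by
  rcases Int.even_or_odd a with ha | ha <;> rcases Int.even_or_odd b with hb | hb
  · rw [zmod2_even ha, zmod2_even hb]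
  · exfalso
    rw [ha.neg_one_zpow, hb.neg_one_zpow] at h
    norm_num at h
  · exfalso
    rw [ha.neg_one_zpow, hb.neg_one_zpow] at h
    norm_num at h
  · rw [zmod2_odd ha, zmod2_odd hb]


/-- Sum of coordinates of `a` over `E`. -/
def T (E : Finset (Fin n)) (a : Fin n →₀ ℤ) : ℤ := ∑ i ∈ E, a i

lemma T_add (E : Finset (Fin n)) (a b : Fin n →₀ ℤ) : T E (a + b) = T E a + T E b := by
  simp [T, Finset.sum_add_distrib]

lemma T_zero (E : Finset (Fin n)) : T E 0 = 0 := by simp [T]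

lemma T_neg (E : Finset (Fin n)) (a : Fin n →₀ ℤ) : T E (-a) = - T E a := by
  simp [T]

lemma T_single (E : Finset (Fin n)) (i : Fin n) (c : ℤ) :
    T E (Finsupp.single i c) = if i ∈ E then c else 0 := by
  simp [T, Finsupp.single_apply]

/-- Sign-flip of the coordinates in `E`. -/
def flipF (E : Finset (Fin n)) : (Fin n →₀ ℤ) →+ (Fin n →₀ ℤ) where
  toFun a := Finsupp.onFinset a.support (fun i => if i ∈ E then -a i else a i)
    (by intro i h
        simp only [Finsupp.mem_support_iff]
        intro h0
        apply h
        simp [h0])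
  map_zero' := by ext i; simp
  map_add' a b := by
    ext i
    simp only [Finsupp.onFinset_apply, Finsupp.add_apply]
    split <;> ring

lemma flipF_apply (E : Finset (Fin n)) (a : Fin n →₀ ℤ) (i : Fin n) :
    flipF E a i = if i ∈ E then -a i else a i := rfl

lemma flipF_empty (a : Fin n →₀ ℤ) : flipF (∅ : Finset (Fin n)) a = a := by
  ext i; simp [flipF_apply]

lemma flipF_single (E : Finset (Fin n)) (i : Fin n) (c : ℤ) :
    flipF E (Finsupp.single i c) = Finsupp.single i (if i ∈ E then -c else c) := by
  ext j
  rw [flipF_apply]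
  rcases eq_or_ne i j with rfl | hij
  · simp [Finsupp.single_apply]
  · simp [Finsupp.single_apply, (show ¬ i = j from hij)]

/-- The twisted algebra endomorphisms of `Λ`:
sign `(-1)^{Σ_{i∈E} a_i}` and flip of coordinates in `F`. -/
def mu (E F : Finset (Fin n)) : Multiplicative (Fin n →₀ ℤ) →* Lam n where
  toFun a := AddMonoidAlgebra.single (flipF F a.toAdd) ((-1:ℚ) ^ (T E a.toAdd))
  map_one' := by
    show AddMonoidAlgebra.single (flipF F 0) ((-1:ℚ) ^ (T E (0 : Fin n →₀ ℤ))) = 1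
    rw [T_zero, map_zero, zpow_zero]
    rfl
  map_mul' a b := by
    simp only [toAdd_mul, map_add, T_add, zpow_add₀ (by norm_num : (-1:ℚ) ≠ 0),
      AddMonoidAlgebra.single_mul_single]

def psi (E F : Finset (Fin n)) : Lam n →ₐ[ℚ] Lam n :=
  AddMonoidAlgebra.lift ℚ (Lam n) (Fin n →₀ ℤ) (mu E F)

lemma psi_single (E F : Finset (Fin n)) (a : Fin n →₀ ℤ) (c : ℚ) :
    psi E F (AddMonoidAlgebra.single a c)
      = AddMonoidAlgebra.single (flipF F a) (c * (-1:ℚ) ^ (T E a)) := by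
  rw [psi, AddMonoidAlgebra.lift_single]
  show c • AddMonoidAlgebra.single (flipF F a) ((-1:ℚ) ^ (T E a)) = _
  rw [AddMonoidAlgebra.smul_single']


lemma list_sum_ite_of_not_mem {α : Type*} [DecidableEq α] (l : List α) (i : α) (h : i ∉ l) :
    (l.map fun j => if j = i then (1 : ZMod 2) else 0).sum = 0 := by
  induction l with
  | nil => simp
  | cons a l ih =>
    rw [List.mem_cons, not_or] at h
    rw [List.map_cons, List.sum_cons, if_neg (fun hh => h.1 hh.symm), ih h.2, add_zero]

lemma list_sum_ite_of_nodup {α : Type*} [DecidableEq α] (l : List α) (i : α)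
    (hd : l.Nodup) (h : i ∈ l) :
    (l.map fun j => if j = i then (1 : ZMod 2) else 0).sum = 1 := by
  induction l with
  | nil => simp at h
  | cons a l ih =>
    rw [List.nodup_cons] at hd
    rw [List.map_cons, List.sum_cons]
    rcases List.mem_cons.mp h with rfl | hmem
    · rw [if_pos rfl, list_sum_ite_of_not_mem l i hd.1, add_zero]
    · rw [if_neg (fun hh : a = i => hd.1 (hh ▸ hmem)), ih hd.2 hmem, zero_add]

lemma expS_apply_of_not_mem {S : Finset (Fin n)} {i : Fin n} (h : i ∉ S) :
    expS S i = 0 := by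
  rw [expS]
  rw [show ((((S.sort (· ≤ ·)).zipIdx).map fun p =>
        Finsupp.single p.1 ((-1 : ℤ) ^ p.2)).sum) i
      = (Finsupp.applyAddHom i) ((((S.sort (· ≤ ·)).zipIdx).map fun p =>
        Finsupp.single p.1 ((-1 : ℤ) ^ p.2)).sum) from rfl]
  rw [map_list_sum, List.map_map]
  apply List.sum_eq_zero
  intro x hx
  obtain ⟨p, hp, rfl⟩ := List.mem_map.mp hx
  have h2 : p.1 ∈ S.sort (· ≤ ·) := by
    have := List.mem_map_of_mem (f := Prod.fst) hp
    rwa [List.zipIdx_map_fst] at this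
  have hne : p.1 ≠ i := fun hh => h (by rw [← Finset.mem_sort (· ≤ ·)]; exact hh ▸ h2)
  show (Finsupp.single p.1 ((-1 : ℤ) ^ p.2)) i = 0
  rw [Finsupp.single_apply, if_neg hne]

lemma expS_zmod {S : Finset (Fin n)} {i : Fin n} (h : i ∈ S) :
    ((expS S i : ℤ) : ZMod 2) = 1 := by
  rw [expS]
  rw [show (((((S.sort (· ≤ ·)).zipIdx).map fun p =>
        Finsupp.single p.1 ((-1 : ℤ) ^ p.2)).sum) i : ZMod 2)
      = ((Int.castAddHom (ZMod 2)).comp (Finsupp.applyAddHom i))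
        ((((S.sort (· ≤ ·)).zipIdx).map fun p =>
        Finsupp.single p.1 ((-1 : ℤ) ^ p.2)).sum) from rfl]
  rw [map_list_sum, List.map_map]
  have hmapeq : (((S.sort (· ≤ ·)).zipIdx).map
      (((Int.castAddHom (ZMod 2)).comp (Finsupp.applyAddHom i)) ∘
        (fun p : Fin n × ℕ => Finsupp.single p.1 ((-1 : ℤ) ^ p.2))))
      = ((S.sort (· ≤ ·)).zipIdx).map ((fun j => if j = i then (1 : ZMod 2) else 0) ∘ Prod.fst) := by
    apply List.map_congr_left
    intro p _
    show (((Finsupp.single p.1 ((-1 : ℤ) ^ p.2)) i : ℤ) : ZMod 2)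
        = if p.1 = i then (1 : ZMod 2) else 0
    rw [Finsupp.single_apply]
    split
    · push_cast
      rw [show ((-1 : ZMod 2)) = 1 by decide, one_pow]
    · simp
  rw [hmapeq, ← List.map_map, List.zipIdx_map_fst]
  exact list_sum_ite_of_nodup _ i (S.sort_nodup (· ≤ ·)) ((Finset.mem_sort (· ≤ ·)).mpr h)

lemma expS_zmod_ite (S : Finset (Fin n)) (i : Fin n) :
    ((expS S i : ℤ) : ZMod 2) = if i ∈ S then 1 else 0 := by
  split
  · exact expS_zmod ‹_›
  · rw [expS_apply_of_not_mem ‹_›]; simp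

lemma T_expS_zmod (E S : Finset (Fin n)) :
    ((T E (expS S) : ℤ) : ZMod 2) = ((E ∩ S).card : ZMod 2) := by
  rw [T]
  push_cast
  rw [Finset.sum_congr rfl (fun i _ => expS_zmod_ite S i)]
  rw [Finset.sum_ite_mem, Finset.sum_const, nsmul_eq_mul, mul_one]


/-- The bracket element `{x_i} = x_i - x_i^{-1}`. -/
def U (i : Fin n) : Lam n :=
  AddMonoidAlgebra.single (Finsupp.single i 1) 1
    - AddMonoidAlgebra.single (Finsupp.single i (-1)) 1

lemma single_negc (a : Fin n →₀ ℤ) (b : ℚ) :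
    AddMonoidAlgebra.single a (-b) = - AddMonoidAlgebra.single a b :=
  AddMonoidAlgebra.single_neg a b

lemma psi_U (E : Finset (Fin n)) (i : Fin n) : psi E E (U i) = U i := by
  rw [U, map_sub, psi_single, psi_single, flipF_single, flipF_single, T_single, T_single]
  by_cases h : i ∈ E
  · simp only [if_pos h]
    rw [show ((-1:ℚ) ^ (1:ℤ)) = -1 by norm_num, show ((-1:ℚ) ^ (-1:ℤ)) = -1 by norm_num]
    rw [show (-(1:ℤ)) = (-1 : ℤ) from rfl, show (-(-1:ℤ)) = (1 : ℤ) by norm_num]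
    rw [show (1 * (-1 : ℚ)) = -1 by norm_num]
    rw [show (-1 : ℚ) = -(1:ℚ) by norm_num, single_negc, single_negc]
    ring
  · simp only [if_neg h]
    norm_num

lemma tau_U (i : Fin n) : psi Finset.univ ∅ (U i) = - U i := by
  rw [U, map_sub, psi_single, psi_single, flipF_empty, flipF_empty, T_single, T_single]
  simp only [if_pos (Finset.mem_univ i)]
  rw [show ((-1:ℚ) ^ (1:ℤ)) = -1 by norm_num, show ((-1:ℚ) ^ (-1:ℤ)) = -1 by norm_num]
  rw [show (1 * (-1 : ℚ)) = -1 by norm_num]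
  rw [show (-1 : ℚ) = -(1:ℚ) by norm_num, single_negc, single_negc]
  ring

lemma psi_aeval (E : Finset (Fin n)) (p : MvPolynomial (Fin n) ℚ) :
    psi E E (MvPolynomial.aeval U p) = MvPolynomial.aeval U p := by
  have h : (psi (n := n) E E).comp (MvPolynomial.aeval U)
      = MvPolynomial.aeval fun i => psi E E (U i) :=
    MvPolynomial.comp_aeval U (psi E E)
  calc psi E E (MvPolynomial.aeval U p) = ((psi E E).comp (MvPolynomial.aeval U)) p := rfl
    _ = MvPolynomial.aeval U p := by rw [h]; simp only [psi_U]

/-- `P(z) ↦ P(-z)`. -/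
def negP : MvPolynomial (Fin n) ℚ →ₐ[ℚ] MvPolynomial (Fin n) ℚ :=
  MvPolynomial.aeval (fun i => - MvPolynomial.X i)

lemma tau_aeval (p : MvPolynomial (Fin n) ℚ) :
    psi Finset.univ ∅ (MvPolynomial.aeval U p) = MvPolynomial.aeval U (negP p) := by
  have h : (psi (n := n) Finset.univ ∅).comp (MvPolynomial.aeval U)
      = MvPolynomial.aeval fun i => psi Finset.univ ∅ (U i) :=
    MvPolynomial.comp_aeval U (psi Finset.univ ∅)
  have h2 : (MvPolynomial.aeval (R := ℚ) (S₁ := Lam n) U).comp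
        (MvPolynomial.aeval (fun i => - MvPolynomial.X i))
      = MvPolynomial.aeval fun i =>
          MvPolynomial.aeval (R := ℚ) (S₁ := Lam n) U (- MvPolynomial.X i) :=
    MvPolynomial.comp_aeval _ _
  calc psi Finset.univ ∅ (MvPolynomial.aeval U p)
      = ((psi Finset.univ ∅).comp (MvPolynomial.aeval U)) p := rfl
    _ = MvPolynomial.aeval (fun i => - U i) p := by rw [h]; simp only [tau_U]
    _ = ((MvPolynomial.aeval U (R := ℚ)).comp
          (MvPolynomial.aeval (fun i => - MvPolynomial.X i))) p := by
        rw [h2]; simp only [map_neg, MvPolynomial.aeval_X]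
    _ = MvPolynomial.aeval U (negP p) := rfl

/-- Toggling membership of `i₀`. -/
def tog (i₀ : Fin n) (E : Finset (Fin n)) : Finset (Fin n) :=
  if i₀ ∈ E then E.erase i₀ else insert i₀ E

lemma mem_tog (i₀ : Fin n) (E : Finset (Fin n)) : i₀ ∈ tog i₀ E ↔ i₀ ∉ E := by
  by_cases h : i₀ ∈ E
  · simp [tog, if_pos h, h]
  · simp [tog, if_neg h, h]

lemma tog_tog (i₀ : Fin n) (E : Finset (Fin n)) : tog i₀ (tog i₀ E) = E := by
  by_cases h : i₀ ∈ E
  · have h1 : i₀ ∉ tog i₀ E := fun hh => (mem_tog i₀ E).mp hh h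
    rw [tog, if_neg h1, tog, if_pos h, Finset.insert_erase h]
  · have h1 : i₀ ∈ tog i₀ E := (mem_tog i₀ E).mpr h
    rw [tog, if_pos h1, tog, if_neg h, Finset.erase_insert h]

lemma tog_ne (i₀ : Fin n) (E : Finset (Fin n)) : tog i₀ E ≠ E := by
  intro hEq
  have h := mem_tog i₀ E
  rw [hEq] at h
  exact iff_not_self h

lemma mem_tog_of_ne {i₀ j : Fin n} (hne : j ≠ i₀) (E : Finset (Fin n)) :
    (j ∈ tog i₀ E ↔ j ∈ E) := by
  by_cases h : i₀ ∈ E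
  · rw [tog, if_pos h, Finset.mem_erase]
    exact ⟨fun hh => hh.2, fun hh => ⟨hne, hh⟩⟩
  · rw [tog, if_neg h, Finset.mem_insert]
    exact ⟨fun hh => hh.resolve_left hne, fun hh => Or.inr hh⟩

lemma flipF_tog {i₀ : Fin n} {a : Fin n →₀ ℤ} (h0 : a i₀ = 0) (E : Finset (Fin n)) :
    flipF (tog i₀ E) a = flipF E a := by
  ext j
  rw [flipF_apply, flipF_apply]
  rcases eq_or_ne j i₀ with rfl | hne
  · rw [h0]; simp
  · rw [if_congr (mem_tog_of_ne hne E) rfl rfl]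

lemma T_tog {i₀ : Fin n} {a : Fin n →₀ ℤ} (h0 : a i₀ = 0) (E : Finset (Fin n)) :
    T (tog i₀ E) a = T E a := by
  rw [T, T, tog]
  by_cases h : i₀ ∈ E
  · rw [if_pos h, Finset.sum_erase _ h0]
  · rw [if_neg h, Finset.sum_insert h, h0, zero_add]

lemma card_tog_sign {i₀ : Fin n} {S : Finset (Fin n)} (hiS : i₀ ∈ S) (E : Finset (Fin n)) :
    (-1:ℚ) ^ ((tog i₀ E ∩ S).card) = - (-1:ℚ) ^ ((E ∩ S).card) := by
  by_cases h : i₀ ∈ E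
  · rw [tog, if_pos h, Finset.erase_inter]
    have hmem : i₀ ∈ E ∩ S := Finset.mem_inter.mpr ⟨h, hiS⟩
    have h1 : 1 ≤ (E ∩ S).card := Finset.card_pos.mpr ⟨i₀, hmem⟩
    rw [Finset.card_erase_of_mem hmem]
    have hc : (E ∩ S).card = ((E ∩ S).card - 1) + 1 := (Nat.sub_add_cancel h1).symm
    calc (-1:ℚ)^((E ∩ S).card - 1) = -((-1:ℚ)^((E ∩ S).card - 1) * (-1)) := by ring
      _ = -(-1:ℚ)^(((E ∩ S).card - 1) + 1) := by rw [pow_succ]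
      _ = -(-1:ℚ)^((E ∩ S).card) := by rw [← hc]
  · rw [tog, if_neg h, Finset.insert_inter_of_mem hiS,
      Finset.card_insert_of_notMem (fun hh => h (Finset.mem_inter.mp hh).1), pow_succ]
    ring


lemma negP_monomial (d : Fin n →₀ ℕ) (c : ℚ) :
    negP (MvPolynomial.monomial d c)
      = MvPolynomial.monomial d ((-1:ℚ)^(d.sum fun _ v => v) * c) := by
  rw [negP, MvPolynomial.aeval_monomial]
  have h1 : (d.prod fun i k => (- MvPolynomial.X i : MvPolynomial (Fin n) ℚ)^k)
      = ((-1 : MvPolynomial (Fin n) ℚ)^(d.sum fun _ v => v))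
        * d.prod fun i k => (MvPolynomial.X i)^k := by
    rw [Finsupp.prod, Finsupp.prod, Finsupp.sum, ← Finset.prod_pow_eq_pow_sum,
      ← Finset.prod_mul_distrib]
    apply Finset.prod_congr rfl
    intro i _
    rw [neg_pow]
  rw [h1, MvPolynomial.monomial_eq]
  have h2 : (MvPolynomial.C ((-1:ℚ)^(d.sum fun _ v => v)) : MvPolynomial (Fin n) ℚ)
      = (-1 : MvPolynomial (Fin n) ℚ)^(d.sum fun _ v => v) := by
    rw [map_pow, map_neg, map_one]
  rw [map_mul, h2, show (algebraMap ℚ (MvPolynomial (Fin n) ℚ)) c = MvPolynomial.C c from rfl]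
  ring

lemma negP_coeff (p : MvPolynomial (Fin n) ℚ) (d : Fin n →₀ ℕ) :
    (negP p).coeff d = (-1:ℚ)^(d.sum fun _ v => v) * p.coeff d := by
  conv_lhs => rw [← MvPolynomial.support_sum_monomial_coeff p]
  rw [map_sum]
  rw [MvPolynomial.coeff_sum]
  have h1 : ∀ v ∈ p.support,
      (negP (MvPolynomial.monomial v (MvPolynomial.coeff v p))).coeff d
      = if v = d then (-1:ℚ)^(d.sum fun _ w => w) * MvPolynomial.coeff v p else 0 := by
    intro v _
    rw [negP_monomial, MvPolynomial.coeff_monomial]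
    split
    · subst ‹v = d›; rfl
    · rfl
  rw [Finset.sum_congr rfl h1, Finset.sum_ite_eq' p.support d
    (fun v => (-1:ℚ)^(d.sum fun _ w => w) * MvPolynomial.coeff v p)]
  split
  · rfl
  · rw [show MvPolynomial.coeff d p = 0 from
      MvPolynomial.notMem_support_iff.mp ‹_›, mul_zero]

/- ### facts about σ -/

lemma single_sum_as_prod (l : List (Fin n →₀ ℤ)) :
    AddMonoidAlgebra.single l.sum (1:ℚ) = (l.map fun a => AddMonoidAlgebra.single a (1:ℚ)).prod := by
  induction l with
  | nil =>
    rw [List.sum_nil, List.map_nil, List.prod_nil]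
    rfl
  | cons a l ih =>
    rw [List.sum_cons, List.map_cons, List.prod_cons, ← ih,
      AddMonoidAlgebra.single_mul_single, one_mul]

lemma sigma_single_list_sum (σ : Lam n →+* Lam n) (l : List (Fin n →₀ ℤ))
    (h : ∀ a ∈ l, σ (AddMonoidAlgebra.single a 1) = - AddMonoidAlgebra.single (-a) 1) :
    σ (AddMonoidAlgebra.single l.sum 1)
      = (-1 : Lam n)^l.length * AddMonoidAlgebra.single (-l.sum) 1 := by
  induction l with
  | nil =>
    rw [List.sum_nil, List.length_nil, pow_zero, one_mul, neg_zero]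
    rw [show AddMonoidAlgebra.single (0 : Fin n →₀ ℤ) (1:ℚ) = 1 from rfl, map_one]
  | cons a l ih =>
    have ha := h a List.mem_cons_self
    rw [List.sum_cons,
      show AddMonoidAlgebra.single (a + l.sum) (1:ℚ)
          = AddMonoidAlgebra.single a 1 * AddMonoidAlgebra.single l.sum 1 by
        rw [AddMonoidAlgebra.single_mul_single, one_mul],
      map_mul, ha, ih (fun b hb => h b (List.mem_cons_of_mem a hb)), List.length_cons]
    calc (- AddMonoidAlgebra.single (-a) (1:ℚ))
          * ((-1 : Lam n)^l.length * AddMonoidAlgebra.single (-l.sum) 1)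
        = (-1 : Lam n)^(l.length + 1)
          * (AddMonoidAlgebra.single (-a) (1:ℚ) * AddMonoidAlgebra.single (-l.sum) 1) := by
          rw [pow_succ]; ring
      _ = (-1 : Lam n)^(l.length + 1) * AddMonoidAlgebra.single (-(a + l.sum)) 1 := by
          rw [AddMonoidAlgebra.single_mul_single, one_mul, neg_add]

variable {σ : Lam n →+* Lam n}

lemma sigma_Xv (hσ : ∀ i : Fin n, σ (AddMonoidAlgebra.single ((Finsupp.single i 1 : Fin n →₀ ℤ)) (1:ℚ))
      * AddMonoidAlgebra.single ((Finsupp.single i 1 : Fin n →₀ ℤ)) (1:ℚ) = -1) (i : Fin n) :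
    σ (AddMonoidAlgebra.single ((Finsupp.single i 1 : Fin n →₀ ℤ)) 1)
      = - AddMonoidAlgebra.single (-((Finsupp.single i 1 : Fin n →₀ ℤ))) 1 := by
  have h2 : AddMonoidAlgebra.single ((Finsupp.single i 1 : Fin n →₀ ℤ)) (1:ℚ)
      * AddMonoidAlgebra.single (-((Finsupp.single i 1 : Fin n →₀ ℤ))) 1 = 1 := by
    rw [AddMonoidAlgebra.single_mul_single, one_mul, add_neg_cancel]
    rfl
  calc σ (AddMonoidAlgebra.single ((Finsupp.single i 1 : Fin n →₀ ℤ)) 1)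
      = σ (AddMonoidAlgebra.single ((Finsupp.single i 1 : Fin n →₀ ℤ)) 1) * 1 := (mul_one _).symm
    _ = σ (AddMonoidAlgebra.single ((Finsupp.single i 1 : Fin n →₀ ℤ)) 1)
        * (AddMonoidAlgebra.single ((Finsupp.single i 1 : Fin n →₀ ℤ)) (1:ℚ)
          * AddMonoidAlgebra.single (-((Finsupp.single i 1 : Fin n →₀ ℤ))) 1) := by rw [h2]
    _ = (σ (AddMonoidAlgebra.single ((Finsupp.single i 1 : Fin n →₀ ℤ)) 1)
        * AddMonoidAlgebra.single ((Finsupp.single i 1 : Fin n →₀ ℤ)) (1:ℚ))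
          * AddMonoidAlgebra.single (-((Finsupp.single i 1 : Fin n →₀ ℤ))) 1 := by ring
    _ = -1 * AddMonoidAlgebra.single (-((Finsupp.single i 1 : Fin n →₀ ℤ))) 1 := by rw [hσ i]
    _ = - AddMonoidAlgebra.single (-((Finsupp.single i 1 : Fin n →₀ ℤ))) 1 := by ring

lemma sigma_Xv_inv (hσ : ∀ i : Fin n, σ (AddMonoidAlgebra.single ((Finsupp.single i 1 : Fin n →₀ ℤ)) (1:ℚ))
      * AddMonoidAlgebra.single ((Finsupp.single i 1 : Fin n →₀ ℤ)) (1:ℚ) = -1) (i : Fin n) :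
    σ (AddMonoidAlgebra.single (-((Finsupp.single i 1 : Fin n →₀ ℤ))) 1)
      = - AddMonoidAlgebra.single ((Finsupp.single i 1 : Fin n →₀ ℤ)) 1 := by
  have hprod : AddMonoidAlgebra.single (-((Finsupp.single i 1 : Fin n →₀ ℤ))) (1:ℚ)
      * AddMonoidAlgebra.single ((Finsupp.single i 1 : Fin n →₀ ℤ)) 1 = 1 := by
    rw [AddMonoidAlgebra.single_mul_single, one_mul, neg_add_cancel]
    rfl
  have hσ1 : σ (AddMonoidAlgebra.single ((Finsupp.single i 1 : Fin n →₀ ℤ)) 1)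
      * (- AddMonoidAlgebra.single ((Finsupp.single i 1 : Fin n →₀ ℤ)) 1) = 1 := by
    rw [sigma_Xv hσ i]
    calc (- AddMonoidAlgebra.single (-((Finsupp.single i 1 : Fin n →₀ ℤ))) (1:ℚ))
        * (- AddMonoidAlgebra.single ((Finsupp.single i 1 : Fin n →₀ ℤ)) 1)
        = AddMonoidAlgebra.single (-((Finsupp.single i 1 : Fin n →₀ ℤ))) (1:ℚ)
          * AddMonoidAlgebra.single ((Finsupp.single i 1 : Fin n →₀ ℤ)) 1 := by ring
      _ = 1 := hprod
  calc σ (AddMonoidAlgebra.single (-((Finsupp.single i 1 : Fin n →₀ ℤ))) 1)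
      = σ (AddMonoidAlgebra.single (-((Finsupp.single i 1 : Fin n →₀ ℤ))) 1) * 1 := (mul_one _).symm
    _ = σ (AddMonoidAlgebra.single (-((Finsupp.single i 1 : Fin n →₀ ℤ))) 1)
        * (σ (AddMonoidAlgebra.single ((Finsupp.single i 1 : Fin n →₀ ℤ)) 1)
          * (- AddMonoidAlgebra.single ((Finsupp.single i 1 : Fin n →₀ ℤ)) 1)) := by rw [hσ1]
    _ = (σ (AddMonoidAlgebra.single (-((Finsupp.single i 1 : Fin n →₀ ℤ))) 1)
        * σ (AddMonoidAlgebra.single ((Finsupp.single i 1 : Fin n →₀ ℤ)) 1))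
          * (- AddMonoidAlgebra.single ((Finsupp.single i 1 : Fin n →₀ ℤ)) 1) := by ring
    _ = σ (AddMonoidAlgebra.single (-((Finsupp.single i 1 : Fin n →₀ ℤ))) (1:ℚ)
        * AddMonoidAlgebra.single ((Finsupp.single i 1 : Fin n →₀ ℤ)) 1)
          * (- AddMonoidAlgebra.single ((Finsupp.single i 1 : Fin n →₀ ℤ)) 1) := by rw [map_mul]
    _ = - AddMonoidAlgebra.single ((Finsupp.single i 1 : Fin n →₀ ℤ)) 1 := by rw [hprod, map_one, one_mul]

lemma sigma_single_pm (hσ : ∀ i : Fin n, σ (AddMonoidAlgebra.single ((Finsupp.single i 1 : Fin n →₀ ℤ)) (1:ℚ))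
      * AddMonoidAlgebra.single ((Finsupp.single i 1 : Fin n →₀ ℤ)) (1:ℚ) = -1)
    (i : Fin n) (e : ℤ) (he : e = 1 ∨ e = -1) :
    σ (AddMonoidAlgebra.single (Finsupp.single i e) 1)
      = - AddMonoidAlgebra.single (-(Finsupp.single i e)) 1 := by
  rcases he with rfl | rfl
  · exact sigma_Xv hσ i
  · rw [show (Finsupp.single i (-1 : ℤ)) = -((Finsupp.single i 1 : Fin n →₀ ℤ)) from Finsupp.single_neg i (1 : ℤ),
      neg_neg]
    exact sigma_Xv_inv hσ i


/- ### evaluation at real points, algebraic independence of the `U i` -/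

def muT (t : Fin n → ℝˣ) : Multiplicative (Fin n →₀ ℤ) →* ℝ where
  toFun a := ((∏ i : Fin n, (t i) ^ ((Multiplicative.toAdd a) i) : ℝˣ) : ℝ)
  map_one' := by
    show (((∏ i : Fin n, (t i) ^ ((0 : Fin n →₀ ℤ) i) : ℝˣ)) : ℝ) = 1
    simp
  map_mul' a b := by
    show (((∏ i : Fin n, (t i) ^ ((Multiplicative.toAdd a + Multiplicative.toAdd b) i) : ℝˣ)) : ℝ) = _
    push_cast [Finsupp.add_apply, zpow_add, Finset.prod_mul_distrib]
    rfl

def evalT (t : Fin n → ℝˣ) : Lam n →ₐ[ℚ] ℝ :=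
  AddMonoidAlgebra.lift ℚ ℝ (Fin n →₀ ℤ) (muT t)

lemma evalT_single (t : Fin n → ℝˣ) (a : Fin n →₀ ℤ) (c : ℚ) :
    evalT t (AddMonoidAlgebra.single a c) = (c : ℝ) * ((∏ i : Fin n, (t i) ^ (a i) : ℝˣ) : ℝ) := by
  rw [evalT, AddMonoidAlgebra.lift_single]
  show c • (((∏ i : Fin n, (t i) ^ (a i) : ℝˣ)) : ℝ) = _
  rw [Rat.smul_def]

lemma evalT_U (t : Fin n → ℝˣ) (i : Fin n) :
    evalT t (U i) = ((t i : ℝ) - (((t i)⁻¹ : ℝˣ) : ℝ)) := by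
  rw [U, map_sub, evalT_single, evalT_single]
  have h1 : (∏ j : Fin n, (t j) ^ ((Finsupp.single i (1:ℤ)) j) : ℝˣ) = t i := by
    rw [Finset.prod_eq_single i]
    · simp
    · intro j _ hj
      rw [Finsupp.single_apply, if_neg (fun hh => hj hh.symm), zpow_zero]
    · intro h; exact absurd (Finset.mem_univ i) h
  have h2 : (∏ j : Fin n, (t j) ^ ((Finsupp.single i (-1:ℤ)) j) : ℝˣ) = (t i)⁻¹ := by
    rw [Finset.prod_eq_single i]
    · simp
    · intro j _ hj
      rw [Finsupp.single_apply, if_neg (fun hh => hj hh.symm), zpow_zero]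
    · intro h; exact absurd (Finset.mem_univ i) h
  rw [h1, h2]
  push_cast
  ring

lemma aeval_U_eq_zero (p : MvPolynomial (Fin n) ℚ)
    (h : MvPolynomial.aeval U p = 0) : p = 0 := by
  have key : ∀ r : Fin n → ℝ,
      MvPolynomial.eval r (MvPolynomial.map (algebraMap ℚ ℝ) p) = 0 := by
    intro r
    have ht : ∀ i : Fin n, ∃ t : ℝˣ, (t : ℝ) - ((t⁻¹ : ℝˣ) : ℝ) = r i := by
      intro i
      set s := Real.sqrt ((r i)^2 + 4) with hs
      have hs2 : s^2 = (r i)^2 + 4 := Real.sq_sqrt (by positivity)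
      have hspos : 0 < s := Real.sqrt_pos.mpr (by positivity)
      have hpos : 0 < (r i + s)/2 := by nlinarith [neg_abs_le (r i), sq_abs (r i), abs_nonneg (r i)]
      refine ⟨Units.mk0 ((r i + s)/2) hpos.ne', ?_⟩
      have hinv : ((Units.mk0 ((r i + s)/2) hpos.ne')⁻¹ : ℝˣ) = ((r i + s)/2)⁻¹ := rfl
      rw [hinv]
      show (r i + s)/2 - ((r i + s)/2)⁻¹ = r i
      have hne : r i + s ≠ 0 := by nlinarith [neg_abs_le (r i), sq_abs (r i), abs_nonneg (r i)]
      field_simp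
      nlinarith
    choose t htEq using ht
    have h0 : evalT t (MvPolynomial.aeval U p) = 0 := by rw [h]; simp
    have hcomp : evalT t (MvPolynomial.aeval U p)
        = MvPolynomial.eval (fun i => (t i : ℝ) - (((t i)⁻¹ : ℝˣ) : ℝ))
            (MvPolynomial.map (algebraMap ℚ ℝ) p) := by
      rw [MvPolynomial.aeval_def]
      rw [show (evalT t) (MvPolynomial.eval₂ (algebraMap ℚ (Lam n)) U p)
          = ((evalT t : Lam n →+* ℝ)) (MvPolynomial.eval₂ (algebraMap ℚ (Lam n)) U p) from rfl]
      rw [MvPolynomial.eval₂_comp_left (evalT t : Lam n →+* ℝ) (algebraMap ℚ (Lam n)) U p]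
      rw [show ((evalT t : Lam n →+* ℝ)).comp (algebraMap ℚ (Lam n)) = algebraMap ℚ ℝ from
        AlgHom.comp_algebraMap (evalT t)]
      rw [show (⇑((evalT t : Lam n →+* ℝ)) ∘ U)
          = (fun i => (t i : ℝ) - (((t i)⁻¹ : ℝˣ) : ℝ)) from funext fun i => evalT_U t i]
      rw [MvPolynomial.eval₂_eq_eval_map]
    rw [hcomp] at h0
    rw [show r = (fun i => (t i : ℝ) - (((t i)⁻¹ : ℝˣ) : ℝ)) from funext (fun i => (htEq i).symm)]
    exact h0
  have hmap : MvPolynomial.map (algebraMap ℚ ℝ) p = 0 :=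
    MvPolynomial.funext (fun x => by rw [key x]; simp)
  apply MvPolynomial.map_injective (algebraMap ℚ ℝ) ((algebraMap ℚ ℝ).injective)
  rw [hmap]
  simp


/- ### sign cancellation lemmas -/

lemma neg_one_zpow_neg' (a : ℤ) : (-1:ℚ)^(-a) = (-1:ℚ)^a := by
  apply neg_one_zpow_congr
  push_cast
  exact (by decide : ∀ x : ZMod 2, -x = x) _

lemma sign_cancel (E S : Finset (Fin n)) :
    (-1:ℚ)^((E ∩ S).card) * (-1:ℚ)^(T E (expS S)) = 1 := by
  have h1 : (-1:ℚ)^(T E (expS S)) = (-1:ℚ)^(((E ∩ S).card : ℤ)) := by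
    apply neg_one_zpow_congr
    rw [T_expS_zmod E S]
    push_cast
    rfl
  rw [h1, zpow_natCast, ← pow_add]
  exact Even.neg_one_pow ⟨(E ∩ S).card, rfl⟩

lemma sign_cancel_neg (E S : Finset (Fin n)) :
    (-1:ℚ)^((E ∩ S).card) * (-1:ℚ)^(T E (-(expS S))) = 1 := by
  rw [T_neg, neg_one_zpow_neg']
  exact sign_cancel E S

/- ### the key linear-independence lemma -/

lemma key (A : Finset (Fin n) → Lam n)
    (hA : ∀ (E : Finset (Fin n)) (S' : Finset (Fin n)), psi E E (A S') = A S')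
    (hrel : ∑ S' ∈ Finset.univ.filter (fun S' : Finset (Fin n) => Even S'.card),
        (AddMonoidAlgebra.single (expS S') 1 + AddMonoidAlgebra.single (-(expS S')) 1) * A S'
        = 0) :
    ∀ S ∈ Finset.univ.filter (fun S' : Finset (Fin n) => Even S'.card), A S = 0 := by
  classical
  set 𝒮 := Finset.univ.filter (fun S' : Finset (Fin n) => Even S'.card) with h𝒮
  set B : Finset (Fin n) → Lam n := fun S' =>
    AddMonoidAlgebra.single (expS S') 1 + AddMonoidAlgebra.single (-(expS S')) 1 with hB
  suffices H : ∀ (k : ℕ) (S : Finset (Fin n)), S ∈ 𝒮 → (Finset.univ \ S).card = k → A S = 0 by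
    intro S hS
    exact H _ S hS rfl
  intro k
  induction k using Nat.strong_induction_on with
  | _ k IH =>
  intro S hS hk
  -- the relation transformed by `psi E E`
  have hrelE : ∀ E : Finset (Fin n), ∑ S' ∈ 𝒮, psi E E (B S') * A S' = 0 := by
    intro E
    have h1 := congrArg (psi E E) hrel
    rw [map_sum, map_zero] at h1
    rw [← h1]
    apply Finset.sum_congr rfl
    intro S' _
    rw [map_mul, hA]
  -- combine with signs relative to S
  have h2 : ∑ S' ∈ 𝒮,
      (∑ E : Finset (Fin n), (-1:ℚ)^((E ∩ S).card) • psi E E (B S')) * A S' = 0 := by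
    calc ∑ S' ∈ 𝒮, (∑ E : Finset (Fin n), (-1:ℚ)^((E ∩ S).card) • psi E E (B S')) * A S'
        = ∑ S' ∈ 𝒮, ∑ E : Finset (Fin n),
            (-1:ℚ)^((E ∩ S).card) • (psi E E (B S') * A S') := by
          apply Finset.sum_congr rfl
          intro S' _
          rw [Finset.sum_mul]
          apply Finset.sum_congr rfl
          intro E _
          rw [smul_mul_assoc]
      _ = ∑ E : Finset (Fin n), (-1:ℚ)^((E ∩ S).card) • (∑ S' ∈ 𝒮, psi E E (B S') * A S') := by
          rw [Finset.sum_comm]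
          apply Finset.sum_congr rfl
          intro E _
          rw [Finset.smul_sum]
      _ = 0 := by
          apply Finset.sum_eq_zero
          intro E _
          rw [hrelE E, smul_zero]
  -- all other terms vanish
  have h3 : ∀ S' ∈ 𝒮, S' ≠ S →
      (∑ E : Finset (Fin n), (-1:ℚ)^((E ∩ S).card) • psi E E (B S')) * A S' = 0 := by
    intro S' hS' hne
    by_cases hsub : S ⊆ S'
    · -- strict superset : A S' = 0 by induction
      have hss : S ⊂ S' := HasSubset.Subset.ssubset_of_ne hsub (fun hh => hne hh.symm)
      have hcardlt : (Finset.univ \ S').card < k := by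
        rw [← hk]
        rw [Finset.card_sdiff_of_subset (Finset.subset_univ S), Finset.card_sdiff_of_subset (Finset.subset_univ S')]
        have hlt := Finset.card_lt_card hss
        have hle := Finset.card_le_univ S'
        have hcu : (Finset.univ : Finset (Fin n)).card = Fintype.card (Fin n) :=
          Finset.card_univ
        omega
      rw [IH _ hcardlt S' hS' rfl, mul_zero]
    · -- pairing involution kills the sum
      obtain ⟨i₀, hi₀S, hi₀S'⟩ := Finset.not_subset.mp hsub
      have hzero : ∑ E : Finset (Fin n), (-1:ℚ)^((E ∩ S).card) • psi E E (B S') = 0 := by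
        refine Finset.sum_involution (fun E _ => tog i₀ E) ?_
          (fun E _ _ => tog_ne i₀ E) (fun E _ => Finset.mem_univ _) (fun E _ => tog_tog i₀ E)
        intro E _
        have h0e : expS S' i₀ = 0 := expS_apply_of_not_mem hi₀S'
        have h0ne : (-(expS S')) i₀ = 0 := by
          rw [Finsupp.neg_apply, h0e, neg_zero]
        have hflip : psi (tog i₀ E) (tog i₀ E) (B S') = psi E E (B S') := by
          rw [hB]
          rw [map_add, map_add, psi_single, psi_single, psi_single, psi_single,
            flipF_tog h0e, flipF_tog h0ne, T_tog h0e, T_tog h0ne]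
        rw [hflip, card_tog_sign hi₀S E, neg_smul, add_neg_cancel]
      rw [hzero, zero_mul]
  have h4 := Finset.sum_eq_single_of_mem S hS h3
  rw [h4] at h2
  -- compute the coefficient `C`
  set C : Lam n := ∑ E : Finset (Fin n), (-1:ℚ)^((E ∩ S).card) • psi E E (B S) with hCdef
  have hC : C = ∑ E : Finset (Fin n),
      (AddMonoidAlgebra.single (flipF E (expS S)) (1:ℚ)
        + AddMonoidAlgebra.single (flipF E (-(expS S))) 1) := by
    rw [hCdef]
    apply Finset.sum_congr rfl
    intro E _
    rw [hB, map_add, psi_single, psi_single, smul_add, AddMonoidAlgebra.smul_single',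
      AddMonoidAlgebra.smul_single', one_mul, one_mul, sign_cancel, sign_cancel_neg]
  have hCne : C ≠ 0 := by
    intro h0
    rw [hC] at h0
    have happ := congrArg (fun f : Lam n => f.coeff (expS S)) h0
    simp only [AddMonoidAlgebra.coeff_zero, Finsupp.coe_zero, Pi.zero_apply] at happ
    have happ2 : ∑ E : Finset (Fin n),
        ((if flipF E (expS S) = expS S then (1:ℚ) else 0)
          + (if flipF E (-(expS S)) = expS S then (1:ℚ) else 0)) = 0 := by
      calc ∑ E : Finset (Fin n),
          ((if flipF E (expS S) = expS S then (1:ℚ) else 0)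
            + (if flipF E (-(expS S)) = expS S then (1:ℚ) else 0))
          = ((∑ E : Finset (Fin n),
              (AddMonoidAlgebra.single (flipF E (expS S)) (1:ℚ)
                + AddMonoidAlgebra.single (flipF E (-(expS S))) 1)) :
              Lam n).coeff (expS S) := by
            rw [AddMonoidAlgebra.coeff_sum, Finsupp.finset_sum_apply]
            apply Finset.sum_congr rfl
            intro E _
            rw [AddMonoidAlgebra.coeff_add, Finsupp.add_apply, AddMonoidAlgebra.coeff_single,
              AddMonoidAlgebra.coeff_single, Finsupp.single_apply, Finsupp.single_apply]
        _ = 0 := happ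
    have hpos : (0:ℚ) < ∑ E : Finset (Fin n),
        ((if flipF E (expS S) = expS S then (1:ℚ) else 0)
          + (if flipF E (-(expS S)) = expS S then (1:ℚ) else 0)) := by
      apply Finset.sum_pos'
      · intro E _
        apply add_nonneg <;> split <;> norm_num
      · refine ⟨∅, Finset.mem_univ _, ?_⟩
        rw [flipF_empty, if_pos rfl]
        have h5 : (0:ℚ) ≤ (if flipF ∅ (-(expS S)) = expS S then (1:ℚ) else 0) := by
          split <;> norm_num
        linarith
    linarith
  rcases mul_eq_zero.mp h2 with hC0 | hA0
  · exact absurd hC0 hCne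
  · exact hA0


lemma bracket_Xv {σ : Lam n →+* Lam n}
    (hσ : ∀ i : Fin n, σ (AddMonoidAlgebra.single ((Finsupp.single i 1 : Fin n →₀ ℤ)) (1:ℚ))
      * AddMonoidAlgebra.single ((Finsupp.single i 1 : Fin n →₀ ℤ)) (1:ℚ) = -1) (i : Fin n) :
    bracket (σ := σ) (Xv i) = U i := by
  rw [bracket, Xv]
  rw [show AddMonoidAlgebra.single ((Finsupp.single i 1 : Fin n →₀ ℤ)) (1:ℚ) = Xv i from rfl]
  rw [show σ (Xv i) = - AddMonoidAlgebra.single (-(Finsupp.single i 1 : Fin n →₀ ℤ)) 1 from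
    sigma_Xv hσ i]
  rw [U, show (Finsupp.single i (-1:ℤ)) = -(Finsupp.single i 1 : Fin n →₀ ℤ) from
    Finsupp.single_neg i (1:ℤ), Xv]
  ring

lemma bracket_MS {σ : Lam n →+* Lam n}
    (hσ : ∀ i : Fin n, σ (AddMonoidAlgebra.single ((Finsupp.single i 1 : Fin n →₀ ℤ)) (1:ℚ))
      * AddMonoidAlgebra.single ((Finsupp.single i 1 : Fin n →₀ ℤ)) (1:ℚ) = -1)
    {S : Finset (Fin n)} (hS : Even S.card) :
    bracket (σ := σ) (MS S)
      = AddMonoidAlgebra.single (expS S) 1 + AddMonoidAlgebra.single (-(expS S)) 1 := by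
  set L : List (Fin n →₀ ℤ) :=
    ((S.sort (· ≤ ·)).zipIdx).map (fun p => Finsupp.single p.1 ((-1 : ℤ) ^ p.2)) with hL
  have hexp : expS S = L.sum := by rw [expS]
  have hmem : ∀ a ∈ L, σ (AddMonoidAlgebra.single a 1) = - AddMonoidAlgebra.single (-a) 1 := by
    intro a ha
    obtain ⟨p, hp, rfl⟩ := List.mem_map.mp ha
    apply sigma_single_pm hσ
    rcases Nat.even_or_odd p.2 with he | ho
    · left; exact he.neg_one_pow
    · right; exact ho.neg_one_pow
  have hlen : L.length = S.card := by
    rw [hL, List.length_map, List.length_zipIdx, Finset.length_sort]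
  have hs := sigma_single_list_sum σ L hmem
  rw [bracket, MS, hexp, hs, hlen, hS.neg_one_pow, one_mul]

end L45

/-- Lemma 4.5(i), algebraic form: if every monomial of `Ω` has total degree `≡ m (mod 2)`,
then every monomial of each `P_S` (for `S` of even cardinality) has total degree `≡ m (mod 2)`. -/
theorem decomposition_totalDegree_parity (n : ℕ) (hn : 1 ≤ n)
    (σ : Lam n →+* Lam n) (hσ : IsSigma σ)
    (Ω : Lam n) (P : Finset (Fin n) → MvPolynomial (Fin n) ℚ)
    (hP : IsDecomposition σ Ω P) (m : ℤ)
    (hΩ : ∀ a : Fin n →₀ ℤ, (Ω.coeff : (Fin n →₀ ℤ) →₀ ℚ) a ≠ 0 →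
      (a.sum fun _ v => v) ≡ m [ZMOD 2]) :
    ∀ S : Finset (Fin n), Even S.card →
      ∀ d : Fin n →₀ ℕ, (P S).coeff d ≠ 0 →
        ((d.sum fun _ v => v : ℕ) : ℤ) ≡ m [ZMOD 2] := by
  classical
  intro S hS d hd
  have hσ' : ∀ i : Fin n,
      σ (AddMonoidAlgebra.single ((Finsupp.single i 1 : Fin n →₀ ℤ)) (1:ℚ))
        * AddMonoidAlgebra.single ((Finsupp.single i 1 : Fin n →₀ ℤ)) (1:ℚ) = -1 :=
    fun i => hσ i
  rw [IsDecomposition] at hP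
  have hev : ∀ p : MvPolynomial (Fin n) ℚ, evalBr σ p = MvPolynomial.aeval L45.U p := by
    intro p
    rw [evalBr, show (fun i => bracket σ (Xv i)) = L45.U from
      funext (fun i => L45.bracket_Xv hσ' i)]
  have hP' : Ω = ∑ S' ∈ Finset.univ.filter (fun S' : Finset (Fin n) => Even S'.card),
      (AddMonoidAlgebra.single (expS S') 1 + AddMonoidAlgebra.single (-(expS S')) 1)
        * MvPolynomial.aeval L45.U (P S') := by
    rw [hP]
    apply Finset.sum_congr rfl
    intro S' hS'
    rw [L45.bracket_MS hσ' (Finset.mem_filter.mp hS').2, hev]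
  -- the parity automorphism τ
  have hT_univ : ∀ a : Fin n →₀ ℤ, L45.T Finset.univ a = a.sum fun _ v => v := by
    intro a
    rw [L45.T, Finsupp.sum_fintype a _ (fun _ => rfl)]
  have htau : L45.psi Finset.univ ∅ Ω = ((-1:ℚ)^m) • Ω := by
    have hΩs : (∑ a ∈ Ω.coeff.support, AddMonoidAlgebra.single a (Ω.coeff a)) = Ω :=
      AddMonoidAlgebra.sum_coeff_single Ω
    conv_lhs => rw [← hΩs]
    conv_rhs => rw [← hΩs]
    rw [map_sum, Finset.smul_sum]
    apply Finset.sum_congr rfl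
    intro a ha
    rw [L45.psi_single, L45.flipF_empty, AddMonoidAlgebra.smul_single']
    congr 1
    rw [hT_univ a]
    have hmod : ((a.sum fun _ v => v : ℤ) : ZMod 2) = ((m : ℤ) : ZMod 2) :=
      (ZMod.intCast_eq_intCast_iff _ _ 2).mpr (hΩ a (Finsupp.mem_support_iff.mp ha))
    rw [L45.neg_one_zpow_congr hmod]
    ring
  -- sign of `expS` under τ is trivial for even `S`
  have hBtau : ∀ S' ∈ Finset.univ.filter (fun S' : Finset (Fin n) => Even S'.card),
      L45.psi Finset.univ ∅
        (AddMonoidAlgebra.single (expS S') (1:ℚ) + AddMonoidAlgebra.single (-(expS S')) 1)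
      = AddMonoidAlgebra.single (expS S') (1:ℚ) + AddMonoidAlgebra.single (-(expS S')) 1 := by
    intro S' hS'
    have hev' : Even S'.card := (Finset.mem_filter.mp hS').2
    have hsign : (-1:ℚ) ^ (L45.T Finset.univ (expS S')) = 1 := by
      have h1 : (-1:ℚ) ^ (L45.T Finset.univ (expS S'))
          = (-1:ℚ) ^ ((S'.card : ℤ)) := by
        apply L45.neg_one_zpow_congr
        rw [L45.T_expS_zmod Finset.univ S', Finset.univ_inter]
        push_cast
        rfl
      rw [h1, zpow_natCast, hev'.neg_one_pow]
    have hsign' : (-1:ℚ) ^ (L45.T Finset.univ (-(expS S'))) = 1 := by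
      rw [L45.T_neg, L45.neg_one_zpow_neg']
      exact hsign
    rw [map_add, L45.psi_single, L45.psi_single, L45.flipF_empty, L45.flipF_empty,
      hsign, hsign']
    norm_num
  -- apply τ to the decomposition
  have hRHS : L45.psi Finset.univ ∅ Ω
      = ∑ S' ∈ Finset.univ.filter (fun S' : Finset (Fin n) => Even S'.card),
        (AddMonoidAlgebra.single (expS S') 1 + AddMonoidAlgebra.single (-(expS S')) 1)
          * MvPolynomial.aeval L45.U (L45.negP (P S')) := by
    rw [hP', map_sum]
    apply Finset.sum_congr rfl
    intro S' hS'
    rw [map_mul, hBtau S' hS', L45.tau_aeval]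
  -- subtract and apply the key lemma
  set Q : Finset (Fin n) → MvPolynomial (Fin n) ℚ :=
    fun S' => ((-1:ℚ)^m) • P S' - L45.negP (P S') with hQdef
  have hzero : ∑ S' ∈ Finset.univ.filter (fun S' : Finset (Fin n) => Even S'.card),
      (AddMonoidAlgebra.single (expS S') 1 + AddMonoidAlgebra.single (-(expS S')) 1)
        * MvPolynomial.aeval L45.U (Q S') = 0 := by
    have e1 : ∀ S' ∈ Finset.univ.filter (fun S' : Finset (Fin n) => Even S'.card),
        (AddMonoidAlgebra.single (expS S') 1 + AddMonoidAlgebra.single (-(expS S')) 1)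
          * MvPolynomial.aeval L45.U (Q S')
        = ((-1:ℚ)^m) • ((AddMonoidAlgebra.single (expS S') 1
            + AddMonoidAlgebra.single (-(expS S')) 1) * MvPolynomial.aeval L45.U (P S'))
          - (AddMonoidAlgebra.single (expS S') 1 + AddMonoidAlgebra.single (-(expS S')) 1)
            * MvPolynomial.aeval L45.U (L45.negP (P S')) := by
      intro S' _
      rw [hQdef, map_sub, map_smul, mul_sub, mul_smul_comm]
    rw [Finset.sum_congr rfl e1, Finset.sum_sub_distrib, ← Finset.smul_sum, ← hP', ← hRHS,
      htau, sub_self]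
  have hkey := L45.key (fun S' => MvPolynomial.aeval L45.U (Q S'))
    (fun E S' => L45.psi_aeval E _) hzero S
    (Finset.mem_filter.mpr ⟨Finset.mem_univ S, hS⟩)
  have hQS : Q S = 0 := L45.aeval_U_eq_zero _ hkey
  have hco := congrArg (MvPolynomial.coeff d) hQS
  rw [hQdef] at hco
  simp only [MvPolynomial.coeff_sub, MvPolynomial.coeff_smul, L45.negP_coeff,
    MvPolynomial.coeff_zero] at hco
  have hfac : ((-1:ℚ)^m - (-1:ℚ)^((d.sum fun _ v => v : ℕ))) * (P S).coeff d = 0 := by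
    rw [smul_eq_mul] at hco
    linear_combination hco
  have heq : (-1:ℚ)^((d.sum fun _ v => v : ℕ) : ℤ) = (-1:ℚ)^m := by
    rw [zpow_natCast]
    have := sub_eq_zero.mp ((mul_eq_zero.mp hfac).resolve_right hd)
    exact this.symm
  exact (ZMod.intCast_eq_intCast_iff _ _ 2).mp (L45.neg_one_zpow_inj heq)

end
end

section
/- [Lemma 4.5(ii), algebraic form] Let (P_S) be a decomposition of Ω ∈ Λ and let ε ∈ {0,1}ⁿ be such that, for each i, every monomial occurring in Ω with nonzero coefficient has x_i-exponent ≡ ε_i (mod 2). Then for every even-cardinality subset S and each i ∈ {1,…,n}, every monomial occurring in P_S with nonzero coefficient has z_i-exponent ≡ ε_i (mod 2) if i ∉ S, and ≡ ε_i + 1 (mod 2) if i ∈ S. -/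
noncomputable section

open scoped Pointwise

variable {n : ℕ}

abbrev QP (n : ℕ) := MvPolynomial (Fin n) ℚ

/-- all monomials of `f` have exponent parity `γ`. -/
def PC (γ : Fin n → ZMod 2) (f : QP n) : Prop :=
  ∀ d ∈ f.support, ∀ j, ((d j : ℕ) : ZMod 2) = γ j

lemma pc_zero (γ : Fin n → ZMod 2) : PC γ (0 : QP n) := by
  intro d hd; simp at hd

lemma pc_congr {γ δ : Fin n → ZMod 2} {f : QP n} (h : PC γ f) (hγ : ∀ j, γ j = δ j) :
    PC δ f := fun d hd j => (h d hd j).trans (hγ j)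

lemma pc_add {γ : Fin n → ZMod 2} {f g : QP n} (hf : PC γ f) (hg : PC γ g) :
    PC γ (f + g) := by
  intro d hd j
  rcases Finset.mem_union.1 (MvPolynomial.support_add hd) with h | h
  · exact hf d h j
  · exact hg d h j

lemma pc_smul {γ : Fin n → ZMod 2} {f : QP n} (c : ℚ) (hf : PC γ f) : PC γ (c • f) := by
  intro d hd j
  apply hf d _ j
  have := MvPolynomial.support_smul (a := c) (f := f) hd
  exact this

lemma pc_neg {γ : Fin n → ZMod 2} {f : QP n} (hf : PC γ f) : PC γ (-f) := by
  have := pc_smul (-1 : ℚ) hf; simpa using this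

lemma pc_sub {γ : Fin n → ZMod 2} {f g : QP n} (hf : PC γ f) (hg : PC γ g) :
    PC γ (f - g) := by
  rw [sub_eq_add_neg]; exact pc_add hf (pc_neg hg)

lemma pc_mul {γ δ : Fin n → ZMod 2} {f g : QP n} (hf : PC γ f) (hg : PC δ g) :
    PC (γ + δ) (f * g) := by
  intro d hd j
  have := MvPolynomial.support_mul f g hd
  rcases Finset.mem_add.1 this with ⟨a, ha, b, hb, hab⟩
  have : d j = a j + b j := by rw [← hab]; simp
  rw [this]
  push_cast
  rw [hf a ha j, hg b hb j]
  rfl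

lemma pc_sum {γ : Fin n → ZMod 2} {ι : Type*} (s : Finset ι) (f : ι → QP n)
    (h : ∀ i ∈ s, PC γ (f i)) : PC γ (∑ i ∈ s, f i) := by
  classical
  induction s using Finset.cons_induction with
  | empty => simpa using pc_zero γ
  | cons a s ha ih =>
    rw [Finset.sum_cons]
    exact pc_add (h a (Finset.mem_cons_self a s)) (ih fun i hi => h i (Finset.mem_cons.2 (Or.inr hi)))

lemma pc_one : PC (fun _ => 0) (1 : QP n) := by
  intro d hd j
  have : d = 0 := by
    have h0 : (1 : QP n) = MvPolynomial.monomial 0 1 := by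
      simp [MvPolynomial.monomial_zero']
    rw [h0, MvPolynomial.support_monomial] at hd
    simpa using hd
  simp [this]

lemma pc_X (i : Fin n) : PC (fun j => if j = i then 1 else 0) (MvPolynomial.X i : QP n) := by
  intro d hd j
  rw [MvPolynomial.support_X, Finset.mem_singleton] at hd
  subst hd
  rw [Finsupp.single_apply]
  split <;> simp_all [eq_comm]


def bb : Bool → ZMod 2 := fun b => if b then 1 else 0

lemma bb_add_bb (w : Bool) : bb w + bb w = 0 := by cases w <;> decide

lemma zmod2_neg : ∀ x : ZMod 2, -x = x := by decide
lemma z2lem : ∀ a b c d : ZMod 2, a + b + c + (1 + c + d) = a + 1 + b + d := by decide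
lemma z2lem2 : ∀ a b c d : ZMod 2, -a + b + c + (1 + c + d) = -a - 1 + b + d := by decide
lemma z2lem3 : ∀ b : ZMod 2, (0:ZMod 2) = 0 + b + b := by decide

/-- the companion matrix `C_i = [[y_i,1],[1,0]]` (index `false` first). -/
def cm (i : Fin n) : Matrix Bool Bool (QP n) :=
  Matrix.of fun u v =>
    if u then (if v then 0 else 1) else (if v then 1 else MvPolynomial.X i)

/-- its inverse `[[0,1],[1,-y_i]]`. -/
def cmi (i : Fin n) : Matrix Bool Bool (QP n) :=
  Matrix.of fun u v =>
    if u then (if v then -MvPolynomial.X i else 1) else (if v then 1 else 0)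

lemma cm_mul_cmi (i : Fin n) : cm i * cmi i = 1 := by
  ext u v
  cases u <;> cases v <;>
    simp [Matrix.mul_apply, Fintype.sum_bool, cm, cmi, Matrix.one_apply] <;> ring

lemma cmi_mul_cm (i : Fin n) : cmi i * cm i = 1 := by
  ext u v
  cases u <;> cases v <;>
    simp [Matrix.mul_apply, Fintype.sum_bool, cm, cmi, Matrix.one_apply] <;> ring

def Cu (i : Fin n) : (Matrix Bool Bool (QP n))ˣ :=
  ⟨cm i, cmi i, cm_mul_cmi i, cmi_mul_cm i⟩

lemma pc_cm (i : Fin n) (w v : Bool) :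
    PC (fun j => if j = i then 1 + bb w + bb v else 0) (cm i w v) := by
  cases w <;> cases v <;> simp only [cm, Matrix.of_apply, if_true, if_false, Bool.false_eq_true]
  · exact pc_congr (pc_X i) (by intro j; split <;> simp [bb])
  · exact pc_congr pc_one (by intro j; split <;> simp [bb] <;> decide)
  · exact pc_congr pc_one (by intro j; split <;> simp [bb] <;> decide)
  · exact pc_zero _
lemma pc_cmi (i : Fin n) (w v : Bool) :
    PC (fun j => if j = i then 1 + bb w + bb v else 0) (cmi i w v) := by
  cases w <;> cases v <;> simp only [cmi, Matrix.of_apply, if_true, if_false, Bool.false_eq_true]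
  · exact pc_zero _
  · exact pc_congr pc_one (by intro j; split <;> simp [bb] <;> decide)
  · exact pc_congr pc_one (by intro j; split <;> simp [bb] <;> decide)
  · exact pc_congr (pc_neg (pc_X i)) (by intro j; split <;> simp [bb] <;> decide)

lemma pc_cu (i : Fin n) (k : ℤ) (u v : Bool) :
    PC (fun j => if j = i then ((k : ZMod 2) + bb u + bb v) else 0)
      (((Cu i ^ k : (Matrix Bool Bool (QP n))ˣ) : Matrix Bool Bool (QP n)) u v) := by
  induction k using Int.induction_on generalizing u v with
  | zero =>
    simp only [zpow_zero, Units.val_one, Matrix.one_apply]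
    by_cases h : u = v
    · subst h
      rw [if_pos rfl]
      refine pc_congr pc_one fun j => ?_
      split
      · push_cast; exact z2lem3 (bb u)
      · rfl
    · rw [if_neg h]; exact pc_zero _
  | succ k ih =>
    rw [zpow_add_one, Units.val_mul]
    simp only [Matrix.mul_apply, Fintype.sum_bool]
    apply pc_add
    · refine pc_congr (pc_mul (ih u true) (pc_cm i true v)) fun j => ?_
      simp only [Pi.add_apply]
      split
      · push_cast; exact z2lem _ _ _ _
      · exact add_zero 0
    · refine pc_congr (pc_mul (ih u false) (pc_cm i false v)) fun j => ?_
      simp only [Pi.add_apply]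
      split
      · push_cast; exact z2lem _ _ _ _
      · exact add_zero 0
  | pred k ih =>
    rw [zpow_sub_one, Units.val_mul]
    have hinv : ((Cu i)⁻¹ : (Matrix Bool Bool (QP n))ˣ).val = cmi i := rfl
    rw [hinv]
    simp only [Matrix.mul_apply, Fintype.sum_bool]
    apply pc_add
    · refine pc_congr (pc_mul (ih u true) (pc_cmi i true v)) fun j => ?_
      simp only [Pi.add_apply]
      split
      · push_cast; exact z2lem2 _ _ _ _
      · exact add_zero 0
    · refine pc_congr (pc_mul (ih u false) (pc_cmi i false v)) fun j => ?_
      simp only [Pi.add_apply]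
      split
      · push_cast; exact z2lem2 _ _ _ _
      · exact add_zero 0

lemma cm_entry (i : Fin n) (u v : Bool) : cm i u v =
    if u then (if v then 0 else 1) else (if v then 1 else MvPolynomial.X i) := rfl
lemma cmi_entry (i : Fin n) (u v : Bool) : cmi i u v =
    if u then (if v then -MvPolynomial.X i else 1) else (if v then 1 else 0) := rfl

abbrev BM (n : ℕ) := Matrix (Fin n → Bool) (Fin n → Bool) (QP n)

def Tm (m : Fin n → Matrix Bool Bool (QP n)) : BM n :=
  Matrix.of fun u v => ∏ i, m i (u i) (v i)

lemma Tm_mul (m m' : Fin n → Matrix Bool Bool (QP n)) :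
    Tm m * Tm m' = Tm (fun i => m i * m' i) := by
  refine Matrix.ext fun u v => ?_
  simp only [Tm, Matrix.mul_apply, Matrix.of_apply]
  conv_rhs => rw [Fintype.prod_sum (fun i (j : Bool) => m i (u i) j * m' i j (v i))]
  refine Finset.sum_congr rfl fun w _ => ?_
  rw [Finset.prod_mul_distrib]

lemma Tm_one : Tm (fun _ => (1 : Matrix Bool Bool (QP n))) = (1 : BM n) := by
  refine Matrix.ext fun u v => ?_
  simp only [Tm, Matrix.of_apply, Matrix.one_apply]
  by_cases h : u = v
  · subst h; simp
  · obtain ⟨i, hi⟩ := Function.ne_iff.1 h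
    rw [if_neg h]
    exact Finset.prod_eq_zero (Finset.mem_univ i) (Matrix.one_apply_ne hi)

def phi : Multiplicative (Fin n →₀ ℤ) →* BM n where
  toFun a := Tm fun i => ((Cu i ^ ((Multiplicative.toAdd a) i) : (Matrix Bool Bool (QP n))ˣ) :
    Matrix Bool Bool (QP n))
  map_one' := by
    have : ∀ i : Fin n, (Multiplicative.toAdd (1 : Multiplicative (Fin n →₀ ℤ))) i = 0 := by
      intro i; rfl
    simp only [this, zpow_zero, Units.val_one]
    exact Tm_one
  map_mul' a b := by
    have h : ∀ i : Fin n, (Multiplicative.toAdd (a * b)) i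
        = (Multiplicative.toAdd a) i + (Multiplicative.toAdd b) i := by
      intro i; rfl
    simp only [h, zpow_add, Units.val_mul]
    rw [← Tm_mul]

def Psi : AddMonoidAlgebra ℚ (Fin n →₀ ℤ) →ₐ[ℚ] BM n :=
  AddMonoidAlgebra.lift ℚ (BM n) (Fin n →₀ ℤ) phi

lemma Psi_single (a : Fin n →₀ ℤ) (c : ℚ) :
    Psi (AddMonoidAlgebra.single a c)
      = c • Tm fun i => ((Cu i ^ (a i) : (Matrix Bool Bool (QP n))ˣ) : Matrix Bool Bool (QP n)) := by
  have h : Psi (AddMonoidAlgebra.single a c) = c • phi (Multiplicative.ofAdd a) := by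
    simp [Psi, AddMonoidAlgebra.lift_single]
  rw [h]; rfl

lemma Psi_single_one (a : Fin n →₀ ℤ) :
    Psi (AddMonoidAlgebra.single a (1:ℚ))
      = Tm fun i => ((Cu i ^ (a i) : (Matrix Bool Bool (QP n))ˣ) : Matrix Bool Bool (QP n)) := by
  rw [Psi_single, one_smul]

-- the list of exponent Finsupps
def eL (S : Finset (Fin n)) : List (Fin n →₀ ℤ) :=
  ((S.sort (· ≤ ·)).zipIdx).map fun p => Finsupp.single p.1 ((-1 : ℤ) ^ p.2)

lemma expS_eq_sum (S : Finset (Fin n)) : expS S = (eL S).sum := rfl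

lemma eL_length (S : Finset (Fin n)) : (eL S).length = S.card := by
  simp [eL]

lemma eL_form {S : Finset (Fin n)} {x : Fin n →₀ ℤ} (hx : x ∈ eL S) :
    ∃ j : Fin n, ∃ e : ℤ, (e = 1 ∨ e = -1) ∧ x = Finsupp.single j e := by
  rw [eL, List.mem_map] at hx
  obtain ⟨p, _, rfl⟩ := hx
  refine ⟨p.1, (-1)^p.2, ?_, rfl⟩
  rcases Nat.even_or_odd p.2 with h | h
  · exact Or.inl h.neg_one_pow
  · exact Or.inr h.neg_one_pow

-- value of an enumFrom sum at a point
lemma enumFrom_sum_apply (l : List (Fin n)) (hl : l.Nodup) (k : ℕ) (i : Fin n) :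
    (i ∉ l → (((l.zipIdx k).map fun p => Finsupp.single p.1 ((-1 : ℤ) ^ p.2)).sum) i = 0)
    ∧ (i ∈ l → (((l.zipIdx k).map fun p => Finsupp.single p.1 ((-1 : ℤ) ^ p.2)).sum) i = 1
        ∨ (((l.zipIdx k).map fun p => Finsupp.single p.1 ((-1 : ℤ) ^ p.2)).sum) i = -1) := by
  induction l generalizing k with
  | nil => simp
  | cons a l ih =>
    have hnd := List.nodup_cons.1 hl
    constructor
    · intro hi
      simp only [List.zipIdx_cons, List.map_cons, List.sum_cons, Finsupp.add_apply]
      rw [Finsupp.single_apply, if_neg (by rintro rfl; exact hi List.mem_cons_self),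
        (ih hnd.2 (k+1)).1 (fun h => hi (List.mem_cons_of_mem a h))]
      simp
    · intro hi
      simp only [List.zipIdx_cons, List.map_cons, List.sum_cons, Finsupp.add_apply]
      rcases List.mem_cons.1 hi with rfl | hi'
      · rw [(ih hnd.2 (k+1)).1 hnd.1, Finsupp.single_apply, if_pos rfl, add_zero]
        rcases Nat.even_or_odd k with h | h
        · exact Or.inl (by rw [h.neg_one_pow])
        · exact Or.inr (by rw [h.neg_one_pow])
      · rw [Finsupp.single_apply, if_neg (by rintro rfl; exact hnd.1 hi'), zero_add]
        exact (ih hnd.2 (k+1)).2 hi'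
  

lemma expS_not_mem {S : Finset (Fin n)} {i : Fin n} (h : i ∉ S) : expS S i = 0 := by
  have := (enumFrom_sum_apply (S.sort (· ≤ ·)) (S.sort_nodup (· ≤ ·)) 0 i).1
  exact this (by rwa [Finset.mem_sort])

lemma expS_mem {S : Finset (Fin n)} {i : Fin n} (h : i ∈ S) :
    expS S i = 1 ∨ expS S i = -1 := by
  have := (enumFrom_sum_apply (S.sort (· ≤ ·)) (S.sort_nodup (· ≤ ·)) 0 i).2
  exact this (by rwa [Finset.mem_sort])

lemma expS_parity (S : Finset (Fin n)) (i : Fin n) :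
    ((expS S i : ℤ) : ZMod 2) = if i ∈ S then 1 else 0 := by
  by_cases h : i ∈ S
  · rcases expS_mem h with h1 | h1 <;> rw [h1, if_pos h] <;> decide
  · rw [expS_not_mem h, if_neg h]; rfl

lemma sms (a b : Fin n →₀ ℤ) :
    (AddMonoidAlgebra.single a (1:ℚ)) * AddMonoidAlgebra.single b 1
      = AddMonoidAlgebra.single (a+b) 1 := by
  rw [AddMonoidAlgebra.single_mul_single, one_mul]

lemma lam_one : (1 : Lam n) = AddMonoidAlgebra.single 0 1 := rfl

variable {σ : Lam n →+* Lam n}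

lemma sigma_single_pm (hσ : IsSigma σ) {i : Fin n} {e : ℤ} (he : e = 1 ∨ e = -1) :
    σ (AddMonoidAlgebra.single (Finsupp.single i e) 1)
      = - AddMonoidAlgebra.single (-(Finsupp.single i e)) 1 := by
  have hx : Xv i * AddMonoidAlgebra.single (-(Finsupp.single i (1:ℤ))) 1 = 1 := by
    rw [Xv, sms, add_neg_cancel, lam_one]
  have hx' : AddMonoidAlgebra.single (-(Finsupp.single i (1:ℤ))) 1 * Xv i = 1 := by
    rw [Xv, sms, neg_add_cancel, lam_one]
  have h1 : σ (Xv i) = - AddMonoidAlgebra.single (-(Finsupp.single i (1:ℤ))) 1 := by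
    calc σ (Xv i) = σ (Xv i) * (Xv i * AddMonoidAlgebra.single (-(Finsupp.single i (1:ℤ))) 1) := by
          rw [hx, mul_one]
      _ = (σ (Xv i) * Xv i) * AddMonoidAlgebra.single (-(Finsupp.single i (1:ℤ))) 1 := by
          rw [mul_assoc]
      _ = - AddMonoidAlgebra.single (-(Finsupp.single i (1:ℤ))) 1 := by rw [hσ i, neg_one_mul]
  rcases he with rfl | rfl
  · exact h1
  · -- e = -1 : note Finsupp.single i (-1) = -(Finsupp.single i 1)
    have hs : Finsupp.single i (-1:ℤ) = -(Finsupp.single i (1:ℤ)) := by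
      rw [Finsupp.single_neg]
    have h2 : σ (AddMonoidAlgebra.single (Finsupp.single i (-1:ℤ)) 1) * σ (Xv i) = 1 := by
      rw [← map_mul, hs, hx', map_one]
    rw [h1] at h2
    have h3 : σ (AddMonoidAlgebra.single (Finsupp.single i (-1:ℤ)) 1)
        * (AddMonoidAlgebra.single (-(Finsupp.single i (1:ℤ))) 1 * Xv i) = - Xv i := by
      rw [← mul_assoc]
      calc _ = (σ (AddMonoidAlgebra.single (Finsupp.single i (-1:ℤ)) 1)
          * AddMonoidAlgebra.single (-(Finsupp.single i (1:ℤ))) 1) * Xv i := rfl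
        _ = - Xv i := by
          have : σ (AddMonoidAlgebra.single (Finsupp.single i (-1:ℤ)) 1)
              * AddMonoidAlgebra.single (-(Finsupp.single i (1:ℤ))) 1 = -1 := by
            have := h2
            rw [mul_neg] at this
            linear_combination (norm := ring_nf) -this
          rw [this, neg_one_mul]
    rw [hx', mul_one] at h3
    rw [h3, hs, neg_neg, Xv]

lemma sigma_list (hσ : IsSigma σ) (L : List (Fin n →₀ ℤ))
    (hL : ∀ x ∈ L, ∃ j : Fin n, ∃ e : ℤ, (e = 1 ∨ e = -1) ∧ x = Finsupp.single j e) :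
    σ (AddMonoidAlgebra.single L.sum 1)
      = (-1 : Lam n) ^ L.length * AddMonoidAlgebra.single (-(L.sum)) 1 := by
  induction L with
  | nil =>
    simp only [List.sum_nil, List.length_nil, pow_zero, one_mul, neg_zero, ← lam_one, map_one]
  | cons x L ih =>
    have hx := hL x List.mem_cons_self
    obtain ⟨j, e, he, rfl⟩ := hx
    have hrest := ih fun y hy => hL y (List.mem_cons_of_mem _ hy)
    have : AddMonoidAlgebra.single ((Finsupp.single j e :: L).sum) (1:ℚ)
        = AddMonoidAlgebra.single (Finsupp.single j e) 1 * AddMonoidAlgebra.single L.sum 1 := by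
      rw [sms, List.sum_cons]
    rw [this, map_mul, sigma_single_pm hσ he, hrest]
    rw [List.length_cons, List.sum_cons, pow_succ]
    have hC : AddMonoidAlgebra.single (-(Finsupp.single j e)) (1:ℚ)
        * AddMonoidAlgebra.single (-(L.sum)) 1
        = AddMonoidAlgebra.single (-((Finsupp.single j e) + L.sum)) 1 := by
      rw [sms, neg_add]
    rw [← hC]
    ring
lemma sigma_MS (hσ : IsSigma σ) (S : Finset (Fin n)) (hS : Even S.card) :
    σ (MS S) = AddMonoidAlgebra.single (-(expS S)) (1:ℚ) := by
  rw [MS, expS_eq_sum, sigma_list hσ (eL S) (fun x hx => eL_form hx), eL_length,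
    hS.neg_one_pow, one_mul, ← expS_eq_sum]

-- Section 6
lemma Tm_x_diff (i : Fin n) :
    Tm (fun j => ((Cu j ^ ((Finsupp.single i (1:ℤ)) j) : (Matrix Bool Bool (QP n))ˣ) :
        Matrix Bool Bool (QP n)))
      - Tm (fun j => ((Cu j ^ ((-(Finsupp.single i (1:ℤ)) : Fin n →₀ ℤ) j) :
        (Matrix Bool Bool (QP n))ˣ) : Matrix Bool Bool (QP n)))
      = algebraMap (QP n) (BM n) (MvPolynomial.X i) := by
  refine Matrix.ext fun u v => ?_
  simp only [Matrix.sub_apply, Tm, Matrix.of_apply]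
  have p1 : (∏ j, ((Cu j ^ ((Finsupp.single i (1:ℤ)) j) : (Matrix Bool Bool (QP n))ˣ) :
      Matrix Bool Bool (QP n)) (u j) (v j))
      = cm i (u i) (v i) * ∏ j ∈ Finset.univ.erase i, (1 : Matrix Bool Bool (QP n)) (u j) (v j) := by
    rw [← Finset.mul_prod_erase Finset.univ _ (Finset.mem_univ i)]
    congr 1
    · rw [Finsupp.single_eq_same, zpow_one]; rfl
    · refine Finset.prod_congr rfl fun j hj => ?_
      rw [Finsupp.single_eq_of_ne' (Ne.symm (Finset.mem_erase.1 hj).1), zpow_zero, Units.val_one]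
  have p2 : (∏ j, ((Cu j ^ ((-(Finsupp.single i (1:ℤ)) : Fin n →₀ ℤ) j) :
      (Matrix Bool Bool (QP n))ˣ) : Matrix Bool Bool (QP n)) (u j) (v j))
      = cmi i (u i) (v i) * ∏ j ∈ Finset.univ.erase i, (1 : Matrix Bool Bool (QP n)) (u j) (v j) := by
    rw [← Finset.mul_prod_erase Finset.univ _ (Finset.mem_univ i)]
    congr 1
    · rw [Finsupp.neg_apply, Finsupp.single_eq_same]
      rw [show ((-1 : ℤ)) = -(1:ℤ) from rfl, zpow_neg, zpow_one]; rfl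
    · refine Finset.prod_congr rfl fun j hj => ?_
      rw [Finsupp.neg_apply, Finsupp.single_eq_of_ne' (Ne.symm (Finset.mem_erase.1 hj).1), neg_zero,
        zpow_zero, Units.val_one]
  rw [p1, p2, ← sub_mul]
  have hcc : cm i (u i) (v i) - cmi i (u i) (v i)
      = if u i = v i then MvPolynomial.X i else 0 := by
    rw [cm_entry, cmi_entry]
    cases u i <;> cases v i <;> simp
  have hRval : (∏ j ∈ Finset.univ.erase i, (1 : Matrix Bool Bool (QP n)) (u j) (v j))
      = if ∀ j ∈ Finset.univ.erase i, u j = v j then 1 else 0 := by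
    by_cases hall : ∀ j ∈ Finset.univ.erase i, u j = v j
    · rw [if_pos hall]
      exact Finset.prod_eq_one fun j hj => by rw [Matrix.one_apply, if_pos (hall j hj)]
    · rw [if_neg hall]
      push_neg at hall
      obtain ⟨j, hj, hne⟩ := hall
      exact Finset.prod_eq_zero hj (by rw [Matrix.one_apply, if_neg hne])
  rw [hcc, hRval, Algebra.algebraMap_eq_smul_one, Matrix.smul_apply, Matrix.one_apply,
    smul_eq_mul]
  by_cases h : u = v
  · subst h
    simp
  · rw [if_neg h, mul_zero]
    obtain ⟨jj, hjj⟩ := Function.ne_iff.1 h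
    by_cases hji : jj = i
    · subst hji
      rw [if_neg hjj, zero_mul]
    · rw [if_neg (show ¬ (∀ j ∈ Finset.univ.erase i, u j = v j) from
        fun hall => hjj (hall jj (Finset.mem_erase.2 ⟨hji, Finset.mem_univ jj⟩))), mul_zero]

lemma Psi_bracket_Xv {σ : Lam n →+* Lam n} (hσ : IsSigma σ) (i : Fin n) :
    Psi (bracket σ (Xv i)) = algebraMap (QP n) (BM n) (MvPolynomial.X i) := by
  rw [bracket, show σ (Xv i) = - AddMonoidAlgebra.single (-(Finsupp.single i (1:ℤ))) 1 from
    sigma_single_pm hσ (Or.inl rfl), map_add, map_neg, ← sub_eq_add_neg, Xv,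
    Psi_single_one, Psi_single_one]
  exact Tm_x_diff i

lemma Psi_evalBr {σ : Lam n →+* Lam n} (hσ : IsSigma σ) (Pp : QP n) :
    Psi (evalBr σ Pp) = algebraMap (QP n) (BM n) Pp := by
  rw [evalBr]
  induction Pp using MvPolynomial.induction_on with
  | C q => rw [MvPolynomial.aeval_C, AlgHom.commutes]; rfl
  | add p q hp hq => rw [map_add, map_add, hp, hq, map_add]
  | mul_X p i hp => rw [map_mul, map_mul, hp, MvPolynomial.aeval_X, Psi_bracket_Xv hσ, map_mul]

-- Section 7
lemma z2lem5 : ∀ a b c : ZMod 2, (b + c) + (a + b) = a + c := by decide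

def chiS (S : Finset (Fin n)) : Fin n → Bool := fun j => decide (j ∈ S)

lemma bb_chiS (S : Finset (Fin n)) (j : Fin n) : bb (chiS S j) = if j ∈ S then 1 else 0 := by
  by_cases h : j ∈ S <;> simp [bb, chiS, h]

def ES (S : Finset (Fin n)) (M : BM n) : QP n := M (fun _ => false) (chiS S)

lemma ES_add (S : Finset (Fin n)) (A B : BM n) : ES S (A + B) = ES S A + ES S B := rfl
lemma ES_smul (S : Finset (Fin n)) (c : ℚ) (A : BM n) : ES S (c • A) = c • ES S A := rfl
lemma ES_smul' (S : Finset (Fin n)) (p : QP n) (A : BM n) : ES S (p • A) = p • ES S A := rfl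
lemma ES_sum {ι : Type*} (S : Finset (Fin n)) (s : Finset ι) (f : ι → BM n) :
    ES S (∑ i ∈ s, f i) = ∑ i ∈ s, ES S (f i) := by
  unfold ES; rw [Matrix.sum_apply]

lemma pc_finprod {ι : Type*} (s : Finset ι) (γ : ι → Fin n → ZMod 2) (f : ι → QP n)
    (h : ∀ i ∈ s, PC (γ i) (f i)) :
    PC (fun j => ∑ i ∈ s, γ i j) (∏ i ∈ s, f i) := by
  classical
  induction s using Finset.cons_induction with
  | empty => exact pc_congr pc_one (by simp)
  | cons a s ha ih =>
    rw [Finset.prod_cons]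
    refine pc_congr (pc_mul (h a (Finset.mem_cons_self a s))
      (ih fun i hi => h i (Finset.mem_cons.2 (Or.inr hi)))) fun j => ?_
    rw [Pi.add_apply, Finset.sum_cons]

lemma pc_prod_entries (k : Fin n → ℤ) (u v : Fin n → Bool) :
    PC (fun j => (k j : ZMod 2) + bb (u j) + bb (v j))
      (∏ i, ((Cu i ^ k i : (Matrix Bool Bool (QP n))ˣ) : Matrix Bool Bool (QP n)) (u i) (v i)) := by
  refine pc_congr (pc_finprod Finset.univ
    (fun i => fun j => if j = i then ((k i : ZMod 2) + bb (u i) + bb (v i)) else 0) _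
    (fun i _ => pc_cu i (k i) (u i) (v i))) fun j => ?_
  rw [Finset.sum_ite_eq, if_pos (Finset.mem_univ j)]

lemma Psi_bracket_MS {σ : Lam n →+* Lam n} (hσ : IsSigma σ) (S' : Finset (Fin n))
    (hS' : Even S'.card) :
    Psi (bracket σ (MS S'))
      = Tm (fun i => ((Cu i ^ (expS S' i) : (Matrix Bool Bool (QP n))ˣ) : Matrix Bool Bool (QP n)))
        + Tm (fun i => ((Cu i ^ ((-(expS S') : Fin n →₀ ℤ) i) : (Matrix Bool Bool (QP n))ˣ) :
            Matrix Bool Bool (QP n))) := by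
  rw [bracket, map_add, sigma_MS hσ S' hS']
  rw [show (MS S' : Lam n) = AddMonoidAlgebra.single (expS S') 1 from rfl,
    Psi_single_one, Psi_single_one]

lemma ES_Tm (S : Finset (Fin n)) (m : Fin n → Matrix Bool Bool (QP n)) :
    ES S (Tm m) = ∏ i, m i false (chiS S i) := rfl

lemma ES_bracket_self {σ : Lam n →+* Lam n} (hσ : IsSigma σ) (S : Finset (Fin n))
    (hS : Even S.card) : ES S (Psi (bracket σ (MS S))) = 2 := by
  rw [Psi_bracket_MS hσ S hS]
  have h1 : ∀ (e : Fin n →₀ ℤ), (∀ i, i ∈ S → (e i = 1 ∨ e i = -1)) → (∀ i, i ∉ S → e i = 0) →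
      ES S (Tm (fun i => ((Cu i ^ (e i) : (Matrix Bool Bool (QP n))ˣ) :
        Matrix Bool Bool (QP n)))) = 1 := by
    intro e he1 he0
    rw [ES_Tm]
    refine Finset.prod_eq_one fun i _ => ?_
    by_cases hi : i ∈ S
    · have hc : chiS S i = true := by simp [chiS, hi]
      rw [hc]
      rcases he1 i hi with h | h
      · rw [h, zpow_one]
        show cm i false true = 1
        rw [cm_entry]; simp
      · rw [h, show ((-1:ℤ)) = -(1:ℤ) from rfl, zpow_neg, zpow_one]
        show cmi i false true = 1
        rw [cmi_entry]; simp
    · have hc : chiS S i = false := by simp [chiS, hi]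
      rw [hc, he0 i hi, zpow_zero, Units.val_one]
      exact Matrix.one_apply_eq false
  have e1 := h1 (expS S) (fun i hi => expS_mem hi) (fun i hi => expS_not_mem hi)
  have e2 := h1 (-(expS S)) (fun i hi => by
      rcases expS_mem hi with h | h
      · right; rw [Finsupp.neg_apply, h]
      · left; rw [Finsupp.neg_apply, h]; ring)
    (fun i hi => by rw [Finsupp.neg_apply, expS_not_mem hi, neg_zero])
  rw [ES_add, e1, e2]
  norm_num

lemma ES_bracket_zero {σ : Lam n →+* Lam n} (hσ : IsSigma σ) (S S' : Finset (Fin n))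
    (hS' : Even S'.card) (h : ¬ S ⊆ S') : ES S (Psi (bracket σ (MS S'))) = 0 := by
  obtain ⟨i, hiS, hiS'⟩ := Finset.not_subset.1 h
  rw [Psi_bracket_MS hσ S' hS']
  have hc : chiS S i = true := by simp [chiS, hiS]
  have h1 : ∀ (e : Fin n →₀ ℤ), e i = 0 →
      ES S (Tm (fun i => ((Cu i ^ (e i) : (Matrix Bool Bool (QP n))ˣ) :
        Matrix Bool Bool (QP n)))) = 0 := by
    intro e he
    rw [ES_Tm]
    refine Finset.prod_eq_zero (Finset.mem_univ i) ?_
    rw [hc, he, zpow_zero, Units.val_one]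
    exact Matrix.one_apply_ne (by simp)
  have e1 := h1 (expS S') (expS_not_mem hiS')
  have e2 := h1 (-(expS S')) (by rw [Finsupp.neg_apply, expS_not_mem hiS', neg_zero])
  rw [ES_add, e1, e2, add_zero]

lemma pc_ES_bracket {σ : Lam n →+* Lam n} (hσ : IsSigma σ) (S S' : Finset (Fin n))
    (hS' : Even S'.card) :
    PC (fun j => (if j ∈ S' then 1 else 0) + (if j ∈ S then 1 else 0))
      (ES S (Psi (bracket σ (MS S')))) := by
  rw [Psi_bracket_MS hσ S' hS']
  rw [ES_add, ES_Tm, ES_Tm]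
  apply pc_add
  · refine pc_congr (pc_prod_entries (fun i => expS S' i) (fun _ => false) (chiS S)) fun j => ?_
    rw [expS_parity, bb_chiS]
    show _ + bb false + _ = _
    rw [show bb false = 0 from rfl, add_zero]
  · refine pc_congr (pc_prod_entries (fun i => (-(expS S') : Fin n →₀ ℤ) i) (fun _ => false)
      (chiS S)) fun j => ?_
    rw [Finsupp.neg_apply, Int.cast_neg, zmod2_neg, expS_parity, bb_chiS]
    show _ + bb false + _ = _
    rw [show bb false = 0 from rfl, add_zero]

lemma ES_mul_algebraMap (S : Finset (Fin n)) (M : BM n) (p : QP n) :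
    ES S (M * algebraMap (QP n) (BM n) p) = ES S M * p := by
  rw [Algebra.algebraMap_eq_smul_one, mul_smul_comm, mul_one, ES_smul', smul_eq_mul, mul_comm]

lemma pc_ES_PsiOmega (Ω : Lam n) (ε : Fin n → ZMod 2)
    (hΩ : ∀ a : Fin n →₀ ℤ, (Ω.coeff : (Fin n →₀ ℤ) →₀ ℚ) a ≠ 0 →
      ∀ i : Fin n, ((a i : ℤ) : ZMod 2) = ε i)
    (S : Finset (Fin n)) :
    PC (fun j => ε j + (if j ∈ S then 1 else 0)) (ES S (Psi Ω)) := by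
  have hrep : Ω = Finsupp.sum Ω.coeff (fun a c => AddMonoidAlgebra.single a c) :=
    (AddMonoidAlgebra.sum_coeff_single Ω).symm
  rw [hrep, map_finsuppSum, Finsupp.sum, ES_sum]
  refine pc_sum Ω.coeff.support _ fun a ha => ?_
  rw [Psi_single, ES_smul, ES_Tm]
  refine pc_smul _ (pc_congr (pc_prod_entries (fun i => a i) (fun _ => false) (chiS S))
    fun j => ?_)
  rw [hΩ a (Finsupp.mem_support_iff.1 ha) j, bb_chiS]
  show _ + bb false + _ = _
  rw [show bb false = 0 from rfl, add_zero]


/-- Lemma 4.5(ii), algebraic form: if for each `i` every monomial of `Ω` has `x_i`-exponent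
`≡ ε_i (mod 2)`, then every monomial of each `P_S` (for `S` of even cardinality) has
`z_i`-exponent `≡ ε_i (mod 2)` for `i ∉ S` and `≡ ε_i + 1 (mod 2)` for `i ∈ S`. -/
theorem decomposition_exponent_parity (n : ℕ) (hn : 1 ≤ n)
    (σ : Lam n →+* Lam n) (hσ : IsSigma σ)
    (Ω : Lam n) (P : Finset (Fin n) → MvPolynomial (Fin n) ℚ)
    (hP : IsDecomposition σ Ω P) (ε : Fin n → ZMod 2)
    (hΩ : ∀ a : Fin n →₀ ℤ, (Ω.coeff : (Fin n →₀ ℤ) →₀ ℚ) a ≠ 0 →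
      ∀ i : Fin n, ((a i : ℤ) : ZMod 2) = ε i) :
    ∀ S : Finset (Fin n), Even S.card →
      ∀ d : Fin n →₀ ℕ, (P S).coeff d ≠ 0 →
        ∀ i : Fin n, ((d i : ℕ) : ZMod 2) = ε i + (if i ∈ S then 1 else 0) := by
  classical
  intro S hS d hd i
  set F := Finset.univ.filter (fun S : Finset (Fin n) => Even S.card) with hF
  have hmaster : ∀ T ∈ F, ES T (Psi Ω)
      = 2 * P T + ∑ S' ∈ F.filter (fun S' => T ⊂ S'), ES T (Psi (bracket σ (MS S'))) * P S' := by
    intro T hT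
    have hTEven : Even T.card := (Finset.mem_filter.1 hT).2
    have hP' : Ω = ∑ S' ∈ F, bracket σ (MS S') * evalBr σ (P S') := hP
    have h0 : Psi Ω = ∑ S' ∈ F, Psi (bracket σ (MS S')) * algebraMap (QP n) (BM n) (P S') := by
      rw [hP', map_sum]
      exact Finset.sum_congr rfl fun S' _ => by rw [map_mul, Psi_evalBr hσ]
    rw [h0, ES_sum, Finset.sum_congr rfl (fun S' (_ : S' ∈ F) => ES_mul_algebraMap T _ (P S')),
      ← Finset.add_sum_erase F _ hT, ES_bracket_self hσ T hTEven]
    congr 1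
    have hsplit : ∑ S' ∈ (F.erase T).filter (fun S' => T ⊂ S'),
        ES T (Psi (bracket σ (MS S'))) * P S'
        = ∑ S' ∈ F.erase T, ES T (Psi (bracket σ (MS S'))) * P S' := by
      refine Finset.sum_filter_of_ne fun S' hS' hne => ?_
      by_contra hnss
      have hS'F : S' ∈ F := Finset.mem_of_mem_erase hS'
      have hS'Even : Even S'.card := (Finset.mem_filter.1 hS'F).2
      by_cases hsub : T ⊆ S'
      · exact (Finset.mem_erase.1 hS').1
          (by rw [Finset.ssubset_iff_subset_ne] at hnss; push_neg at hnss
              exact (hnss hsub).symm)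
      · rw [ES_bracket_zero hσ T S' hS'Even hsub, zero_mul] at hne
        exact hne rfl
    have hnotmem : T ∉ Finset.filter (fun S' => T ⊂ S') F :=
      fun hmem => lt_irrefl T (Finset.mem_filter.1 hmem).2
    rw [← hsplit, Finset.filter_erase, Finset.erase_eq_of_notMem hnotmem]
  have step : ∀ T ∈ F, (∀ S' ∈ F, T ⊂ S' → PC (fun j => ε j + (if j ∈ S' then 1 else 0)) (P S'))
      → PC (fun j => ε j + (if j ∈ T then 1 else 0)) (P T) := by
    intro T hT hrec
    have hTEven : Even T.card := (Finset.mem_filter.1 hT).2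
    have h2 : (2 : QP n) * P T = ES T (Psi Ω)
        - ∑ S' ∈ F.filter (fun S' => T ⊂ S'), ES T (Psi (bracket σ (MS S'))) * P S' := by
      rw [hmaster T hT]; ring
    have hval : P T = (1/2 : ℚ) • ((2 : QP n) * P T) := by
      rw [two_mul, smul_add, ← add_smul]; norm_num
    rw [hval, h2]
    refine pc_smul _ (pc_sub (pc_ES_PsiOmega Ω ε hΩ T) (pc_sum _ _ fun S' hS' => ?_))
    have hS'F : S' ∈ F := (Finset.mem_filter.1 hS').1
    have hTS' : T ⊂ S' := (Finset.mem_filter.1 hS').2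
    have hS'Even : Even S'.card := (Finset.mem_filter.1 hS'F).2
    refine pc_congr (pc_mul (pc_ES_bracket hσ T S' hS'Even) (hrec S' hS'F hTS')) fun j => ?_
    rw [Pi.add_apply]
    exact z2lem5 (ε j) _ _
  have key : ∀ m : ℕ, ∀ T ∈ F, Tᶜ.card ≤ m →
      PC (fun j => ε j + (if j ∈ T then 1 else 0)) (P T) := by
    intro m
    induction m with
    | zero =>
      intro T hT hc
      refine step T hT fun S' hS' hss => ?_
      exfalso
      have h1 : S'ᶜ ⊂ Tᶜ := Finset.compl_ssubset_compl.2 hss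
      have := Finset.card_lt_card h1
      omega
    | succ m ih =>
      intro T hT hc
      refine step T hT fun S' hS' hss => ih S' hS' ?_
      have h1 : S'ᶜ ⊂ Tᶜ := Finset.compl_ssubset_compl.2 hss
      have := Finset.card_lt_card h1
      omega
  have hfin := key (Sᶜ.card) S (Finset.mem_filter.2 ⟨Finset.mem_univ S, hS⟩) le_rfl
  exact hfin d (MvPolynomial.mem_support_iff.2 hd) i

end
end
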